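/- arXiv:2407.02938 — 7 statements merged into one kernel-verified Lean document; each statement's English description precedes it below -/
import Mathlib

section
/- Let n = p_1 p_2 ⋯ p_k be a product of k distinct primes with 2 ≤ k ≤ 4. Then the metric dimension of the essential ideal graph E_{Z_n} of Z_n = Z/nZ equals k − 1. -/
/-- An ideal `I` of a commutative ring `R` is essential if it is nonzero and has
nonzero intersection with every nonzero ideal of `R`. -/
def IsEssentialIdeal {R : Type*} [CommRing R] (I : Ideal R) : Prop :=
  I ≠ ⊥ ∧ ∀ J : Ideal R, J ≠ ⊥ → I ⊓ J ≠ ⊥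

/-- The essential ideal graph of a commutative ring `R`: vertices are the nonzero
proper ideals of `R`, and distinct vertices `I`, `J` are adjacent iff `I + J` is
an essential ideal of `R`. -/
def essentialIdealGraph (R : Type*) [CommRing R] :
    SimpleGraph {I : Ideal R // I ≠ ⊥ ∧ I ≠ ⊤} where
  Adj I J := I ≠ J ∧ IsEssentialIdeal (I.1 ⊔ J.1)
  symm := by
    constructor
    rintro I J ⟨hne, h⟩
    exact ⟨hne.symm, by rwa [sup_comm]⟩
  loopless := ⟨fun I h => h.1 rfl⟩

/-- The annihilating ideal graph of a commutative ring `R`: vertices are the nonzero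
annihilating ideals of `R`, with distinct vertices `I`, `J` adjacent iff `I * J = 0`. -/
def annihilatingIdealGraph (R : Type*) [CommRing R] :
    SimpleGraph {I : Ideal R // I ≠ ⊥ ∧ ∃ J : Ideal R, J ≠ ⊥ ∧ I * J = ⊥} where
  Adj I J := I ≠ J ∧ I.1 * J.1 = ⊥
  symm := by
    constructor
    rintro I J ⟨hne, h⟩
    exact ⟨hne.symm, by rwa [mul_comm]⟩
  loopless := ⟨fun I h => h.1 rfl⟩

/-- A set `W` of vertices of a graph `G` is a resolving set if any two distinct
vertices are distinguished by their distance to some element of `W`. -/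
def IsResolvingSet {V : Type*} (G : SimpleGraph V) (W : Set V) : Prop :=
  ∀ u v : V, u ≠ v → ∃ w ∈ W, G.dist u w ≠ G.dist v w

/-- The metric dimension of a graph: the least cardinality of a (finite) resolving set. -/
noncomputable def metricDim {V : Type*} (G : SimpleGraph V) : ℕ :=
  sInf {k : ℕ | ∃ W : Set V, W.Finite ∧ IsResolvingSet G W ∧ W.ncard = k}

/-- The degree of a vertex: the number of vertices adjacent to it. -/
noncomputable def gdeg {V : Type*} (G : SimpleGraph V) (v : V) : ℕ :=
  Nat.card {u : V // G.Adj v u}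

/-- The first Zagreb index: the sum of the squares of the vertex degrees. -/
noncomputable def zagreb1 {V : Type*} (G : SimpleGraph V) : ℕ :=
  ∑ᶠ v : V, (gdeg G v) ^ 2

/-- The second Zagreb index: the sum over edges `{u,v}` of `deg u * deg v`. -/
noncomputable def zagreb2 {V : Type*} (G : SimpleGraph V) : ℕ :=
  ∑ᶠ e ∈ G.edgeSet, Sym2.lift ⟨fun u v => gdeg G u * gdeg G v, fun u v => mul_comm _ _⟩ e


/-! ### Auxiliary development -/

section Classification
open Finset
variable {k : ℕ} {K : Fin k → Type*} [∀ i, Field (K i)]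

/-- the ideal of functions supported on `S` -/
def idealOf (K : Fin k → Type*) [∀ i, Field (K i)] (S : Finset (Fin k)) : Ideal (Π i, K i) where
  carrier := {x | ∀ i ∉ S, x i = 0}
  add_mem' := fun {a b} ha hb i hi => by simp [ha i hi, hb i hi]
  zero_mem' := fun i _ => rfl
  smul_mem' := fun c x hx i hi => by simp [smul_eq_mul, hx i hi]

lemma mem_idealOf {S : Finset (Fin k)} {x : Π i, K i} :
    x ∈ idealOf K S ↔ ∀ i ∉ S, x i = 0 := Iff.rfl

open Classical in
/-- the support of an ideal -/
noncomputable def suppOf (I : Ideal (Π i, K i)) : Finset (Fin k) :=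
  Finset.univ.filter (fun i => Pi.single i 1 ∈ I)

lemma mem_suppOf {I : Ideal (Π i, K i)} {i : Fin k} :
    i ∈ suppOf I ↔ Pi.single i 1 ∈ I := by
  classical simp [suppOf]

lemma single_one_mem {I : Ideal (Π i, K i)} {x : Π i, K i} (hx : x ∈ I) {i : Fin k}
    (hxi : x i ≠ 0) : Pi.single i 1 ∈ I := by
  have : Pi.single i 1 = Pi.single i (x i)⁻¹ * x := by
    funext j
    by_cases h : j = i
    · subst h; simp [Pi.single_apply, inv_mul_cancel₀ hxi]
    · simp [Pi.single_apply, h]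
  rw [this]
  exact I.mul_mem_left _ hx

lemma idealOf_suppOf (I : Ideal (Π i, K i)) : idealOf K (suppOf I) = I := by
  ext x
  constructor
  · intro hx
    have : x = ∑ i, Pi.single i (x i) := (Finset.univ_sum_single x).symm
    rw [this]
    refine Ideal.sum_mem _ (fun i _ => ?_)
    by_cases h : x i = 0
    · simp [h]
    · have hi : Pi.single i 1 ∈ I := mem_suppOf.mp ?_
      · have : Pi.single i (x i) = Pi.single i (x i) * Pi.single i 1 := by
          funext j
          by_cases h : j = i
          · subst h; simp
          · simp [Pi.single_apply, h]
        rw [this]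
        exact I.mul_mem_left _ hi
      · by_contra hns
        exact h (hx i hns)
  · intro hx
    intro i hi
    by_contra h
    exact hi (mem_suppOf.mpr (single_one_mem hx h))

lemma suppOf_idealOf (S : Finset (Fin k)) : suppOf (idealOf K S) = S := by
  ext i
  rw [mem_suppOf, mem_idealOf]
  constructor
  · intro h
    by_contra hi
    have := h i hi
    simp at this
  · intro hi j hj
    have : j ≠ i := fun h => hj (h ▸ hi)
    simp [Pi.single_apply, this]

/-- classification of ideals in a finite product of fields -/
noncomputable def idealPiFieldOrderIso (k : ℕ) (K : Fin k → Type*) [∀ i, Field (K i)] :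
    Ideal (Π i, K i) ≃o Finset (Fin k) where
  toFun := suppOf
  invFun := idealOf K
  left_inv := idealOf_suppOf
  right_inv := suppOf_idealOf
  map_rel_iff' := by
    intro I J
    constructor
    · intro h
      rw [← idealOf_suppOf I, ← idealOf_suppOf J]
      exact fun x hx i hi => hx i (fun hS => hi (h hS))
    · intro h i hi
      exact mem_suppOf.mpr (h (mem_suppOf.mp hi))

end Classification

/-- order iso on ideals from a ring equiv -/
def idealOrderIsoOfRingEquiv {R S : Type*} [CommRing R] [CommRing S] (e : R ≃+* S) :
    Ideal R ≃o Ideal S where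
  toFun I := I.comap (e.symm : S →+* R)
  invFun J := J.comap (e : R →+* S)
  left_inv I := by ext x; rw [Ideal.mem_comap, Ideal.mem_comap]; simp
  right_inv J := by ext x; rw [Ideal.mem_comap, Ideal.mem_comap]; simp
  map_rel_iff' := by
    intro I J
    constructor
    · intro h x hx
      have : (e.symm (e x)) ∈ J := h (show e.symm (e x) ∈ I by simpa using hx)
      simpa using this
    · intro h x hx
      exact h hx

/-- the model graph: vertices are nonempty proper subsets of `Fin k`,
adjacent iff their union is everything -/
def modelGraph (k : ℕ) : SimpleGraph {S : Finset (Fin k) // S ≠ ∅ ∧ S ≠ Finset.univ} where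
  Adj S T := S ≠ T ∧ S.1 ∪ T.1 = Finset.univ
  symm := by constructor; rintro S T ⟨h1, h2⟩; exact ⟨h1.symm, by rwa [Finset.union_comm]⟩
  loopless := ⟨fun S h => h.1 rfl⟩

section Transfer
variable {R : Type*} [CommRing R] {k : ℕ}

lemma essential_iff_eq_univ (hk : 1 ≤ k) (F : Ideal R ≃o Finset (Fin k)) (I : Ideal R) :
    IsEssentialIdeal I ↔ F I = Finset.univ := by
  have hFbot : F ⊥ = ∅ := by
    rw [← Finset.bot_eq_empty]; exact OrderIso.map_bot F
  have hbot_iff : ∀ J : Ideal R, J = ⊥ ↔ F J = ∅ := by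
    intro J
    rw [← hFbot]
    exact ⟨fun h => h ▸ rfl, fun h => F.injective h⟩
  constructor
  · rintro ⟨h0, h⟩
    by_contra hne
    set J := F.symm (F I)ᶜ with hJ
    have hFJ : F J = (F I)ᶜ := F.apply_symm_apply _
    have hJbot : J ≠ ⊥ := by
      rw [Ne, hbot_iff, hFJ, Finset.compl_eq_empty_iff]
      exact hne
    refine h J hJbot ?_
    rw [hbot_iff, OrderIso.map_inf, hFJ]
    simp [Finset.inf_eq_inter]
  · intro huniv
    constructor
    · rw [Ne, hbot_iff, huniv]
      intro h
      have := Finset.mem_univ (⟨0, hk⟩ : Fin k)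
      rw [h] at this
      simp at this
    · intro J hJ hbot
      rw [hbot_iff, OrderIso.map_inf, huniv, Finset.inf_eq_inter, Finset.univ_inter] at hbot
      exact hJ ((hbot_iff J).mpr hbot)

/-- essential ideal graph is isomorphic to the model graph -/
noncomputable def modelIsoOfOrderIso (hk : 1 ≤ k) (F : Ideal R ≃o Finset (Fin k)) :
    essentialIdealGraph R ≃g modelGraph k where
  toEquiv := F.toEquiv.subtypeEquiv (fun I => by
    have hFbot : F ⊥ = ∅ := by rw [← Finset.bot_eq_empty]; exact OrderIso.map_bot F
    have hFtop : F ⊤ = Finset.univ := by rw [← Finset.top_eq_univ]; exact OrderIso.map_top F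
    constructor
    · rintro ⟨h1, h2⟩
      refine ⟨fun h => h1 ?_, fun h => h2 ?_⟩
      · exact F.injective (h.trans hFbot.symm)
      · exact F.injective (h.trans hFtop.symm)
    · rintro ⟨h1, h2⟩
      exact ⟨fun h => h1 (h ▸ hFbot), fun h => h2 (h ▸ hFtop)⟩)
  map_rel_iff' := by
    rintro ⟨I, hI⟩ ⟨J, hJ⟩
    show (_ ≠ _ ∧ _) ↔ (_ ≠ _ ∧ _)
    have h1 : F (I ⊔ J) = F I ∪ F J := by
      rw [← Finset.sup_eq_union]; exact OrderIso.map_sup F I J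
    rw [essential_iff_eq_univ hk F, h1]
    constructor
    · rintro ⟨hne, h⟩
      refine ⟨fun he => hne ?_, h⟩
      rw [he]
    · rintro ⟨hne, h⟩
      refine ⟨fun he => hne ?_, h⟩
      ext1
      exact F.injective (congrArg Subtype.val he)

end Transfer

section IsoInvariance
variable {V V' : Type*} {G : SimpleGraph V} {G' : SimpleGraph V'}

lemma iso_dist_le (e : G ≃g G') (u v : V) : G'.dist (e u) (e v) ≤ G.dist u v := by
  by_cases h : G.Reachable u v
  · obtain ⟨p, hp⟩ := h.exists_walk_length_eq_dist
    calc G'.dist (e u) (e v) ≤ (p.map e.toHom).length := SimpleGraph.dist_le _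
      _ = G.dist u v := by rw [SimpleGraph.Walk.length_map, hp]
  · rw [SimpleGraph.dist_eq_zero_of_not_reachable h]
    rw [SimpleGraph.dist_eq_zero_of_not_reachable]
    intro ⟨q⟩
    exact h ⟨(q.map e.symm.toHom).copy (by simp) (by simp)⟩

lemma iso_dist_eq (e : G ≃g G') (u v : V) : G'.dist (e u) (e v) = G.dist u v := by
  refine le_antisymm (iso_dist_le e u v) ?_
  have := iso_dist_le e.symm (e u) (e v)
  simpa using this

lemma metricDim_eq_of_iso (e : G ≃g G') : metricDim G = metricDim G' := by
  unfold metricDim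
  congr 1
  ext m
  constructor
  · rintro ⟨W, hfin, hres, hcard⟩
    refine ⟨e '' W, hfin.image _, ?_, ?_⟩
    · intro u' v' hne
      obtain ⟨w, hw, hd⟩ := hres (e.symm u') (e.symm v') (fun h => hne (by simpa using congrArg e h))
      refine ⟨e w, Set.mem_image_of_mem _ hw, ?_⟩
      rw [← e.apply_symm_apply u', ← e.apply_symm_apply v', iso_dist_eq e, iso_dist_eq e]
      exact hd
    · rw [Set.ncard_image_of_injective _ e.injective, hcard]
  · rintro ⟨W, hfin, hres, hcard⟩
    refine ⟨e.symm '' W, hfin.image _, ?_, ?_⟩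
    · intro u v hne
      obtain ⟨w, hw, hd⟩ := hres (e u) (e v) (fun h => hne (e.injective h))
      refine ⟨e.symm w, Set.mem_image_of_mem _ hw, ?_⟩
      intro h
      apply hd
      have h1 := iso_dist_eq e u (e.symm w)
      have h2 := iso_dist_eq e v (e.symm w)
      rw [e.apply_symm_apply] at h1 h2
      rw [h1, h2, h]
    · rw [Set.ncard_image_of_injective _ e.symm.injective, hcard]

end IsoInvariance

namespace Model
open Finset

variable {k : ℕ}

abbrev MV (k : ℕ) := {S : Finset (Fin k) // S ≠ ∅ ∧ S ≠ Finset.univ}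

def mdist (S T : MV k) : ℕ :=
  if S = T then 0 else if S.1 ∪ T.1 = Finset.univ then 1
  else if (S.1 ∩ T.1).Nonempty then 2 else 3

lemma vne (S : MV k) : S.1.Nonempty := Finset.nonempty_iff_ne_empty.mpr S.2.1

/-- complement vertex -/
def cvert (S : MV k) : MV k :=
  ⟨S.1ᶜ, by
    constructor
    · rw [Ne, Finset.compl_eq_empty_iff]; exact S.2.2
    · rw [Ne, Finset.compl_eq_univ_iff]; exact S.2.1⟩

lemma adj_cvert (S : MV k) : (modelGraph k).Adj S (cvert S) := by
  constructor
  · intro h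
    obtain ⟨x, hx⟩ := vne S
    have : x ∈ S.1ᶜ := by rw [← show (cvert S).1 = S.1ᶜ from rfl, ← congrArg Subtype.val h]; exact hx
    simp at this
    exact this hx
  · exact Finset.union_compl _

lemma dist_formula (S T : MV k) : (modelGraph k).dist S T = mdist S T := by
  unfold mdist
  by_cases h0 : S = T
  · subst h0; simp [SimpleGraph.dist_self]
  rw [if_neg h0]
  by_cases h1 : S.1 ∪ T.1 = Finset.univ
  · rw [if_pos h1, SimpleGraph.dist_eq_one_iff_adj]
    exact ⟨h0, h1⟩
  rw [if_neg h1]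
  have hnadj : ¬ (modelGraph k).Adj S T := fun h => h1 h.2
  by_cases h2 : (S.1 ∩ T.1).Nonempty
  · rw [if_pos h2]
    have hne_univ : S.1 ∩ T.1 ≠ Finset.univ := by
      intro h
      apply S.2.2
      apply Finset.univ_subset_iff.mp
      calc Finset.univ = S.1 ∩ T.1 := h.symm
        _ ⊆ S.1 := Finset.inter_subset_left
    set U : MV k := ⟨(S.1 ∩ T.1)ᶜ, by
      constructor
      · rw [Ne, Finset.compl_eq_empty_iff]; exact hne_univ
      · rw [Ne, Finset.compl_eq_univ_iff]
        exact Finset.nonempty_iff_ne_empty.mp h2⟩ with hU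
    obtain ⟨x, hx⟩ := h2
    have hadj1 : (modelGraph k).Adj S U := by
      constructor
      · intro h
        have hxS : x ∈ S.1 := (Finset.mem_inter.mp hx).1
        have : x ∈ U.1 := by rw [← congrArg Subtype.val h]; exact hxS
        rw [hU] at this
        simp only [Finset.mem_compl] at this
        exact this hx
      · rw [hU]
        apply Finset.eq_univ_of_forall
        intro y
        simp only [Finset.mem_union, Finset.mem_compl, Finset.mem_inter]
        by_cases hy : y ∈ S.1
        · exact Or.inl hy
        · exact Or.inr (fun ⟨h, _⟩ => hy h)
    have hadj2 : (modelGraph k).Adj U T := by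
      constructor
      · intro h
        have hxT : x ∈ T.1 := (Finset.mem_inter.mp hx).2
        have : x ∈ U.1 := by rw [congrArg Subtype.val h]; exact hxT
        rw [hU] at this
        simp only [Finset.mem_compl] at this
        exact this hx
      · rw [hU]
        apply Finset.eq_univ_of_forall
        intro y
        simp only [Finset.mem_union, Finset.mem_compl, Finset.mem_inter]
        by_cases hy : y ∈ T.1
        · exact Or.inr hy
        · exact Or.inl (fun ⟨_, h⟩ => hy h)
    have hw : (modelGraph k).dist S T ≤ 2 := by
      have := SimpleGraph.dist_le (SimpleGraph.Walk.cons hadj1 (SimpleGraph.Walk.cons hadj2 SimpleGraph.Walk.nil))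
      simpa using this
    have hr : (modelGraph k).Reachable S T :=
      ⟨SimpleGraph.Walk.cons hadj1 (SimpleGraph.Walk.cons hadj2 SimpleGraph.Walk.nil)⟩
    have hpos := hr.pos_dist_of_ne h0
    have hne1 : (modelGraph k).dist S T ≠ 1 := fun h =>
      hnadj (SimpleGraph.dist_eq_one_iff_adj.mp h)
    omega
  · rw [if_neg h2]
    have hST : S.1 ∩ T.1 = ∅ := Finset.not_nonempty_iff_eq_empty.mp h2
    have hadj1 := adj_cvert S
    have hadj3 := ((modelGraph k).adj_symm (adj_cvert T))
    have hadj2 : (modelGraph k).Adj (cvert S) (cvert T) := by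
      constructor
      · intro h
        apply h0
        have := congrArg Subtype.val h
        simp only [cvert] at this
        exact Subtype.ext (compl_injective this)
      · show S.1ᶜ ∪ T.1ᶜ = Finset.univ
        rw [← Finset.compl_inter, hST]
        simp
    have hw : (modelGraph k).dist S T ≤ 3 := by
      have := SimpleGraph.dist_le (SimpleGraph.Walk.cons hadj1 (SimpleGraph.Walk.cons hadj2
        (SimpleGraph.Walk.cons hadj3 SimpleGraph.Walk.nil)))
      simpa using this
    have hr : (modelGraph k).Reachable S T :=
      ⟨SimpleGraph.Walk.cons hadj1 (SimpleGraph.Walk.cons hadj2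
        (SimpleGraph.Walk.cons hadj3 SimpleGraph.Walk.nil))⟩
    have hpos := hr.pos_dist_of_ne h0
    have hne1 : (modelGraph k).dist S T ≠ 1 := fun h =>
      hnadj (SimpleGraph.dist_eq_one_iff_adj.mp h)
    have hne2 : (modelGraph k).dist S T ≠ 2 := by
      intro hdist
      obtain ⟨p, hp⟩ := hr.exists_walk_length_eq_dist
      rw [hdist] at hp
      cases p with
      | nil => simp at hp
      | cons h q =>
        cases q with
        | nil => simp at hp
        | cons h' q' =>
          cases q' with
          | nil =>
            rename_i U
            have hU : U.1 = Finset.univ := by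
              apply Finset.eq_univ_of_forall
              intro y
              by_contra hy
              have hyS : y ∈ S.1 ∪ U.1 := by rw [h.2]; exact Finset.mem_univ y
              have hyT : y ∈ U.1 ∪ T.1 := by rw [h'.2]; exact Finset.mem_univ y
              rw [Finset.mem_union] at hyS hyT
              have hyS' : y ∈ S.1 := hyS.resolve_right hy
              have hyT' : y ∈ T.1 := hyT.resolve_left hy
              have : y ∈ S.1 ∩ T.1 := Finset.mem_inter.mpr ⟨hyS', hyT'⟩
              rw [hST] at this
              simp at this
            exact U.2.2 hU
          | cons h'' q'' => simp at hp
    omega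

lemma mdist_le (S T : MV k) : mdist S T ≤ 3 := by
  unfold mdist; split_ifs <;> omega

lemma mdist_pos {S T : MV k} (h : S ≠ T) : 1 ≤ mdist S T := by
  unfold mdist; split_ifs with h1 <;> first | exact absurd h1 h | omega

lemma counting (W : Set (MV k)) (hfin : W.Finite)
    (hres : ∀ u v : MV k, u ≠ v → ∃ w ∈ W, (modelGraph k).dist u w ≠ (modelGraph k).dist v w) :
    Fintype.card (MV k) ≤ 3 ^ W.ncard + W.ncard := by
  classical
  haveI : Fintype W := hfin.fintype
  have hcardW : W.ncard = Fintype.card W := by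
    rw [← Nat.card_coe_set_eq, Nat.card_eq_fintype_card]
  set f : {v : MV k // v ∉ W} → (W → Fin 3) := fun v w =>
    ⟨mdist v.1 w.1 - 1, by have := mdist_le v.1 w.1; omega⟩ with hf
  have hinj : Function.Injective f := by
    intro u v huv
    by_contra hne
    have hne' : u.1 ≠ v.1 := fun h => hne (Subtype.ext h)
    obtain ⟨w, hw, hd⟩ := hres u.1 v.1 hne'
    rw [dist_formula, dist_formula] at hd
    have h1 : 1 ≤ mdist u.1 w := mdist_pos (fun h => u.2 (h ▸ hw))
    have h2 : 1 ≤ mdist v.1 w := mdist_pos (fun h => v.2 (h ▸ hw))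
    have : f u ⟨w, hw⟩ = f v ⟨w, hw⟩ := congrFun huv _
    rw [hf] at this
    simp only [Fin.mk.injEq] at this
    omega
  have hle := Fintype.card_le_of_injective f hinj
  rw [Fintype.card_fun, Fintype.card_fin] at hle
  have hcompl : Fintype.card {v : MV k // v ∉ W} = Fintype.card (MV k) - Fintype.card W :=
    Fintype.card_subtype_compl _
  have hWle : Fintype.card W ≤ Fintype.card (MV k) := by
    exact Fintype.card_le_of_injective Subtype.val Subtype.val_injective
  rw [hcardW]
  omega

def W4 : Finset (MV 4) := {⟨{0}, by decide⟩, ⟨{1}, by decide⟩, ⟨{2}, by decide⟩}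
def W3 : Finset (MV 3) := {⟨{0}, by decide⟩, ⟨{1}, by decide⟩}
def W2 : Finset (MV 2) := {⟨{0}, by decide⟩}

set_option maxRecDepth 10000 in
lemma res4 : ∀ u v : MV 4, u ≠ v → ∃ w ∈ W4, mdist u w ≠ mdist v w := by decide
lemma res3 : ∀ u v : MV 3, u ≠ v → ∃ w ∈ W3, mdist u w ≠ mdist v w := by decide
lemma res2 : ∀ u v : MV 2, u ≠ v → ∃ w ∈ W2, mdist u w ≠ mdist v w := by decide

lemma dim_eq {k : ℕ} (Wf : Finset (MV k)) (m : ℕ) (hcard : Wf.card = m)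
    (hres : ∀ u v : MV k, u ≠ v → ∃ w ∈ Wf, mdist u w ≠ mdist v w)
    (hcount : Fintype.card (MV k) = 2 ^ k - 2)
    (hlb : ∀ m' : ℕ, 2 ^ k - 2 ≤ 3 ^ m' + m' → m ≤ m') :
    metricDim (modelGraph k) = m := by
  have hmem : m ∈ {j : ℕ | ∃ W : Set (MV k), W.Finite ∧
      IsResolvingSet (modelGraph k) W ∧ W.ncard = j} := by
    refine ⟨↑Wf, Wf.finite_toSet, ?_, by rw [Set.ncard_coe_finset, hcard]⟩
    intro u v huv
    obtain ⟨w, hw, hd⟩ := hres u v huv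
    exact ⟨w, Finset.mem_coe.mpr hw, by rw [dist_formula, dist_formula]; exact hd⟩
  refine le_antisymm (Nat.sInf_le hmem) (le_csInf ⟨m, hmem⟩ ?_)
  rintro j ⟨W, hfin, hresW, hcardW⟩
  have := counting W hfin hresW
  rw [hcount, hcardW] at this
  exact hlb j this

lemma model_dim2 : metricDim (modelGraph 2) = 1 := by
  refine dim_eq W2 1 (by decide) res2 (by decide) ?_
  intro m h
  by_contra hc
  push_neg at hc
  interval_cases m
  simp at h

lemma model_dim3 : metricDim (modelGraph 3) = 2 := by
  refine dim_eq W3 2 (by decide) res3 (by decide) ?_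
  intro m h
  by_contra hc
  push_neg at hc
  interval_cases m <;> simp_all

lemma model_dim4 : metricDim (modelGraph 4) = 3 := by
  refine dim_eq W4 3 (by decide) res4 (by decide) ?_
  intro m h
  by_contra hc
  push_neg at hc
  interval_cases m <;> simp_all

end Model

/-- For `n` a product of `k` distinct primes with `2 ≤ k ≤ 4`, the metric
dimension of the essential ideal graph of `ℤ/nℤ` is `k - 1`. -/
theorem stmt_4 (k : ℕ) (hk2 : 2 ≤ k) (hk4 : k ≤ 4) (p : Fin k → ℕ)
    (hp : ∀ i, (p i).Prime) (hinj : Function.Injective p)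
    (n : ℕ) (hn : n = ∏ i, p i) :
    metricDim (essentialIdealGraph (ZMod n)) = k - 1 := by
  subst hn
  haveI : ∀ i, Fact (p i).Prime := fun i => ⟨hp i⟩
  have e : ZMod (∏ i, p i) ≃+* Π i, ZMod (p i) :=
    ZMod.prodEquivPi p (fun i j hij =>
      (Nat.coprime_primes (hp i) (hp j)).mpr (fun h => hij (hinj h)))
  have F : Ideal (ZMod (∏ i, p i)) ≃o Finset (Fin k) :=
    (idealOrderIsoOfRingEquiv e).trans (idealPiFieldOrderIso k _)
  have iso := modelIsoOfOrderIso (le_trans one_le_two hk2) F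
  rw [metricDim_eq_of_iso iso]
  interval_cases k
  · exact Model.model_dim2
  · exact Model.model_dim3
  · exact Model.model_dim4
end

section
/- Let n = p_1 p_2 ⋯ p_k be a product of k ≥ 2 distinct primes and let I and J be two distinct nonzero proper ideals of Z_n = Z/nZ. Then the graph distance between I and J in the essential ideal graph E_{Z_n} equals 2 if and only if I + J ≠ Z_n and I ∩ J ≠ 0. -/
lemma isEssentialIdeal_iff_top {R : Type*} [CommRing R] [Nontrivial R]
    [ComplementedLattice (Ideal R)] (A : Ideal R) : IsEssentialIdeal A ↔ A = ⊤ := by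
  constructor
  · rintro ⟨hA, h⟩
    by_contra hAt
    obtain ⟨c, hc⟩ := exists_isCompl A
    have hc0 : c ≠ ⊥ := by
      rintro rfl
      exact hAt (by simpa using codisjoint_iff.mp hc.codisjoint)
    exact h c hc0 (disjoint_iff.mp hc.disjoint)
  · rintro rfl
    exact ⟨top_ne_bot, fun J hJ => by simpa⟩

lemma exists_mid_of_walk_length_two {V : Type*} {G : SimpleGraph V} {u v : V}
    (w : G.Walk u v) (h : w.length = 2) : ∃ x, G.Adj u x ∧ G.Adj x v := by
  cases w with
  | nil => simp at h
  | cons h1 w1 =>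
    cases w1 with
    | nil => simp at h
    | cons h2 w2 =>
      cases w2 with
      | nil => exact ⟨_, h1, h2⟩
      | cons h3 w3 =>
        exfalso
        rw [SimpleGraph.Walk.length_cons, SimpleGraph.Walk.length_cons,
          SimpleGraph.Walk.length_cons] at h
        omega

/-- For `n` a product of `k ≥ 2` distinct primes and distinct nonzero proper
ideals `I`, `J` of `ℤ/nℤ`, the distance between `I` and `J` in the essential ideal graph
is `2` iff `I + J ≠ ℤ/nℤ` and `I ∩ J ≠ 0`. -/
theorem stmt_7 (k : ℕ) (hk : 2 ≤ k) (p : Fin k → ℕ)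
    (hp : ∀ i, (p i).Prime) (hinj : Function.Injective p)
    (n : ℕ) (hn : n = ∏ i, p i)
    (I J : {I : Ideal (ZMod n) // I ≠ ⊥ ∧ I ≠ ⊤}) (hIJ : I ≠ J) :
    (essentialIdealGraph (ZMod n)).dist I J = 2 ↔
      (I.1 ⊔ J.1 ≠ ⊤ ∧ I.1 ⊓ J.1 ≠ ⊥) := by
  subst hn
  haveI : ∀ i, Fact (p i).Prime := fun i => ⟨hp i⟩
  have h2le : ∀ i, 2 ≤ p i := fun i => (hp i).two_le
  have hk0 : 0 < k := by omega
  have hn1 : 1 < ∏ i, p i := by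
    have h1 : p ⟨0, hk0⟩ ≤ ∏ i, p i :=
      Finset.single_le_prod' (fun i _ => Nat.one_le_of_lt (h2le i)) (Finset.mem_univ (⟨0, hk0⟩ : Fin k))
    have h2 := h2le ⟨0, hk0⟩
    omega
  haveI : Fact (1 < ∏ i, p i) := ⟨hn1⟩
  have hcop : Pairwise (Function.onFun Nat.Coprime p) := fun i j hij =>
    (Nat.coprime_primes (hp i) (hp j)).mpr fun h => hij (hinj h)
  haveI : IsSemisimpleRing (ZMod (∏ i, p i)) :=
    (ZMod.prodEquivPi p hcop).symm.isSemisimpleRing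
  haveI : ComplementedLattice (Ideal (ZMod (∏ i, p i))) :=
    (inferInstance : IsSemisimpleModule (ZMod (∏ i, p i)) (ZMod (∏ i, p i))).toComplementedLattice
  set G := essentialIdealGraph (ZMod (∏ i, p i)) with hG
  have hadj : ∀ A B : {I : Ideal (ZMod (∏ i, p i)) // I ≠ ⊥ ∧ I ≠ ⊤},
      G.Adj A B ↔ (A ≠ B ∧ A.1 ⊔ B.1 = ⊤) := by
    intro A B
    simp only [hG, essentialIdealGraph, isEssentialIdeal_iff_top]
  constructor
  · intro h2
    have hr : G.Reachable I J := SimpleGraph.Reachable.of_dist_ne_zero (by omega)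
    obtain ⟨w, hw⟩ := hr.exists_walk_length_eq_dist
    rw [h2] at hw
    obtain ⟨K, hIK, hKJ⟩ := exists_mid_of_walk_length_two w hw
    have hIK' := (hadj _ _).mp hIK
    have hKJ' := (hadj _ _).mp hKJ
    constructor
    · intro htop
      have hadjIJ : G.Adj I J := (hadj I J).mpr ⟨hIJ, htop⟩
      have := (SimpleGraph.dist_eq_one_iff_adj).mpr hadjIJ
      omega
    · intro hbot
      have hmul : I.1 * J.1 = ⊥ := le_bot_iff.mp (le_trans Ideal.mul_le_inf hbot.le)
      have h1 : K.1 ⊔ I.1 = ⊤ := by rw [sup_comm]; exact hIK'.2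
      have h2' : K.1 ⊔ J.1 = ⊤ := hKJ'.2
      have htop : K.1 ⊔ I.1 * J.1 = ⊤ := by
        rw [Ideal.sup_mul_eq_of_coprime_left h1]; exact h2'
      rw [hmul, sup_bot_eq] at htop
      exact K.2.2 htop
  · rintro ⟨hsup, hinf⟩
    obtain ⟨c, hc⟩ := exists_isCompl (I.1 ⊓ J.1)
    have hctop : c ⊔ (I.1 ⊓ J.1) = ⊤ := by
      rw [sup_comm]; exact codisjoint_iff.mp hc.codisjoint
    have hcI : c ⊔ I.1 = ⊤ :=
      eq_top_iff.mpr (le_trans hctop.ge (sup_le_sup_left inf_le_left c))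
    have hcJ : c ⊔ J.1 = ⊤ :=
      eq_top_iff.mpr (le_trans hctop.ge (sup_le_sup_left inf_le_right c))
    have hdisj : (I.1 ⊓ J.1) ⊓ c = ⊥ := disjoint_iff.mp hc.disjoint
    have hcnt : c ≠ ⊤ := by
      rintro rfl
      rw [inf_top_eq] at hdisj
      exact hinf hdisj
    have hcnb : c ≠ ⊥ := by
      rintro rfl
      rw [bot_sup_eq] at hcI
      exact I.2.2 hcI
    set K : {I : Ideal (ZMod (∏ i, p i)) // I ≠ ⊥ ∧ I ≠ ⊤} := ⟨c, hcnb, hcnt⟩ with hK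
    have hKI : K ≠ I := by
      intro h
      apply hinf
      have hceq : c = I.1 := congrArg Subtype.val h
      have hle : I.1 ⊓ J.1 ≤ c := le_of_le_of_eq inf_le_left hceq.symm
      exact le_bot_iff.mp (le_trans (le_inf le_rfl hle) hdisj.le)
    have hKJ : K ≠ J := by
      intro h
      apply hinf
      have hceq : c = J.1 := congrArg Subtype.val h
      have hle : I.1 ⊓ J.1 ≤ c := le_of_le_of_eq inf_le_right hceq.symm
      exact le_bot_iff.mp (le_trans (le_inf le_rfl hle) hdisj.le)
    have hIK : G.Adj I K := (hadj I K).mpr ⟨hKI.symm, by rw [sup_comm]; exact hcI⟩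
    have hKJadj : G.Adj K J := (hadj K J).mpr ⟨hKJ, hcJ⟩
    have hle2 : G.dist I J ≤ 2 :=
      SimpleGraph.dist_le (SimpleGraph.Walk.cons hIK
        (SimpleGraph.Walk.cons hKJadj SimpleGraph.Walk.nil))
    have hne1 : G.dist I J ≠ 1 := by
      intro h1
      exact hsup ((hadj I J).mp ((SimpleGraph.dist_eq_one_iff_adj).mp h1)).2
    have hpos : 0 < G.dist I J :=
      SimpleGraph.Reachable.pos_dist_of_ne
        (SimpleGraph.Walk.cons hIK
          (SimpleGraph.Walk.cons hKJadj SimpleGraph.Walk.nil)).reachable hIJ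
    omega
end

section
/- Let n = p_1 p_2 ⋯ p_k be a product of k ≥ 2 distinct primes and let I and J be two distinct nonzero proper ideals of Z_n = Z/nZ. Then the graph distance between I and J in the essential ideal graph E_{Z_n} equals 3 if and only if I + J ≠ Z_n and I ∩ J = 0. -/
lemma sqf_prod {ι : Type*} (pr : ι → ℕ) (hp : ∀ i, (pr i).Prime)
    (s : Finset ι) (hinj : Set.InjOn pr s) : Squarefree (∏ i ∈ s, pr i) := by
  classical
  induction s using Finset.induction_on with
  | empty => simp [squarefree_one]
  | @insert a s ha ih =>
    rw [Finset.prod_insert ha]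
    refine Nat.squarefree_mul_iff.2 ⟨?_, (hp a).squarefree,
      ih (hinj.mono (by simp [Finset.subset_insert]))⟩
    refine Nat.Coprime.prod_right fun i hi => (Nat.coprime_primes (hp a) (hp i)).2 ?_
    intro h
    exact ha (hinj (by simp) (by simp [hi]) h ▸ hi)

lemma span_inf_le {R : Type*} [CommRing R] {e f : R} (he : e * e = e) :
    Ideal.span {e} ⊓ Ideal.span {f} ≤ Ideal.span {e * f} := by
  rintro x ⟨hx1, hx2⟩
  rw [SetLike.mem_coe, Ideal.mem_span_singleton] at hx1 hx2
  obtain ⟨c, hc⟩ := hx1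
  obtain ⟨c', hc'⟩ := hx2
  rw [Ideal.mem_span_singleton]
  exact ⟨c', by linear_combination (1 - e) * hc + (-c) * he + e * hc'⟩
lemma exists_idem_gen {n : ℕ} (hsq : Squarefree n) (I : Ideal (ZMod n)) :
    ∃ e : ZMod n, e * e = e ∧ I = Ideal.span {e} := by
  haveI : NeZero n := ⟨hsq.ne_zero⟩
  haveI : IsPrincipalIdealRing (ZMod n) :=
    IsPrincipalIdealRing.of_surjective (Int.castRingHom (ZMod n)) ZMod.intCast_surjective
  obtain ⟨g, hg⟩ : ∃ g : ZMod n, I = Ideal.span {g} :=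
    ⟨Submodule.IsPrincipal.generator I, (Submodule.IsPrincipal.span_singleton_generator I).symm⟩
  set v : ℕ := g.val with hvdef
  have hv : ((v : ℕ) : ZMod n) = g := ZMod.natCast_rightInverse g
  set d : ℕ := Nat.gcd v n with hddef
  have hd : d ∣ n := Nat.gcd_dvd_right v n
  -- span {d} = span {g}
  have hspan : Ideal.span {((d : ℕ) : ZMod n)} = Ideal.span {g} := by
    apply le_antisymm
    · rw [Ideal.span_singleton_le_iff_mem, Ideal.mem_span_singleton]
      have hb := congrArg (fun z : ℤ => (z : ZMod n)) (Nat.gcd_eq_gcd_ab v n)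
      push_cast at hb
      rw [ZMod.natCast_self, hv] at hb
      exact ⟨(Nat.gcdA v n : ZMod n), by rw [hb]; ring⟩
    · rw [Ideal.span_singleton_le_iff_mem, Ideal.mem_span_singleton]
      obtain ⟨c, hc⟩ := Nat.gcd_dvd_left v n
      exact ⟨(c : ZMod n), by rw [← hv, hc]; push_cast; ring⟩
  obtain ⟨m, hm⟩ := hd
  have hco : Nat.Coprime d m := Nat.coprime_of_squarefree_mul (by rwa [← hm])
  have hbez := Nat.gcd_eq_gcd_ab d m
  rw [Nat.Coprime.gcd_eq_one hco] at hbez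
  set A : ℤ := Nat.gcdA d m
  set B : ℤ := Nat.gcdB d m
  set dz : ZMod n := ((d : ℕ) : ZMod n)
  set mz : ZMod n := ((m : ℕ) : ZMod n)
  set Az : ZMod n := ((A : ℤ) : ZMod n)
  set Bz : ZMod n := ((B : ℤ) : ZMod n)
  have key : (1 : ZMod n) = dz * Az + mz * Bz := by
    have := congrArg (fun z : ℤ => (z : ZMod n)) hbez
    push_cast at this
    exact this
  have hmul0 : dz * mz = 0 := by
    show ((d : ℕ) : ZMod n) * ((m : ℕ) : ZMod n) = 0
    rw [← Nat.cast_mul, ← hm, ZMod.natCast_self]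
  refine ⟨dz * Az, ?_, ?_⟩
  · linear_combination (-(dz * Az)) * key - (Az * Bz) * hmul0
  · rw [hg, ← hspan]
    apply le_antisymm
    · rw [Ideal.span_singleton_le_iff_mem, Ideal.mem_span_singleton]
      exact ⟨dz, by linear_combination dz * key + Bz * hmul0⟩
    · rw [Ideal.span_singleton_le_iff_mem, Ideal.mem_span_singleton]
      exact ⟨Az, rfl⟩

/-- For `n` a product of `k ≥ 2` distinct primes and distinct nonzero proper
ideals `I`, `J` of `ℤ/nℤ`, the distance between `I` and `J` in the essential ideal graph
is `3` iff `I + J ≠ ℤ/nℤ` and `I ∩ J = 0`. -/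
theorem stmt_8 (k : ℕ) (hk : 2 ≤ k) (p : Fin k → ℕ)
    (hp : ∀ i, (p i).Prime) (hinj : Function.Injective p)
    (n : ℕ) (hn : n = ∏ i, p i)
    (I J : {I : Ideal (ZMod n) // I ≠ ⊥ ∧ I ≠ ⊤}) (hIJ : I ≠ J) :
    (essentialIdealGraph (ZMod n)).dist I J = 3 ↔
      (I.1 ⊔ J.1 ≠ ⊤ ∧ I.1 ⊓ J.1 = ⊥) := by
  classical
  have hsq : Squarefree n := by
    rw [hn]; exact sqf_prod p hp Finset.univ hinj.injOn
  have hn0 : n ≠ 0 := hsq.ne_zero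
  have hn1 : 1 < n := by
    have i0 : Fin k := ⟨0, by omega⟩
    have hdvd : p i0 ∣ n := hn ▸ Finset.dvd_prod_of_mem p (Finset.mem_univ i0)
    have h1 := Nat.le_of_dvd (Nat.pos_of_ne_zero hn0) hdvd
    have h2 := (hp i0).two_le
    omega
  haveI : Fact (1 < n) := ⟨hn1⟩
  haveI : NeZero n := ⟨hn0⟩
  set G := essentialIdealGraph (ZMod n) with hG
  have htopbot : (⊤ : Ideal (ZMod n)) ≠ ⊥ := by
    intro h
    have h1 : (1 : ZMod n) ∈ (⊥ : Ideal (ZMod n)) := h ▸ Submodule.mem_top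
    exact one_ne_zero (Ideal.mem_bot.mp h1)
  have hess : ∀ K : Ideal (ZMod n), IsEssentialIdeal K ↔ K = ⊤ := by
    intro K
    constructor
    · intro hK
      by_contra hKt
      obtain ⟨e, he, hgen⟩ := exists_idem_gen hsq K
      have h1e : (1 : ZMod n) - e ≠ 0 := by
        intro h
        have he1 : e = 1 := by linear_combination -h
        rw [he1, Ideal.span_singleton_one] at hgen
        exact hKt hgen
      refine hK.2 (Ideal.span {1 - e}) (by rwa [Ne, Ideal.span_singleton_eq_bot]) ?_
      have hle : K ⊓ Ideal.span {1 - e} ≤ Ideal.span {e * (1 - e)} := hgen ▸ span_inf_le he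
      have hz : e * (1 - e) = 0 := by linear_combination -he
      rw [hz, Ideal.span_singleton_eq_bot.mpr rfl] at hle
      exact le_bot_iff.mp hle
    · rintro rfl
      exact ⟨htopbot, fun J hJ => by rwa [top_inf_eq]⟩
  have adj_iff : ∀ X Y : {I : Ideal (ZMod n) // I ≠ ⊥ ∧ I ≠ ⊤},
      G.Adj X Y ↔ X ≠ Y ∧ X.1 ⊔ Y.1 = ⊤ := by
    intro X Y
    show (X ≠ Y ∧ IsEssentialIdeal (X.1 ⊔ Y.1)) ↔ _
    rw [hess]
  obtain ⟨e, he, hgenI⟩ := exists_idem_gen hsq I.1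
  obtain ⟨f, hf, hgenJ⟩ := exists_idem_gen hsq J.1
  by_cases hsup : I.1 ⊔ J.1 = ⊤
  · have h1 : G.dist I J = 1 := SimpleGraph.dist_eq_one_iff_adj.mpr ((adj_iff I J).2 ⟨hIJ, hsup⟩)
    rw [h1]
    simp [hsup]
  · by_cases hinf : I.1 ⊓ J.1 = ⊥
    · -- distance 3
      have hef : e * f = 0 := by
        have h1 : e * f ∈ I.1 ⊓ J.1 := by
          rw [Submodule.mem_inf]
          exact ⟨by rw [hgenI, Ideal.mem_span_singleton]; exact dvd_mul_right e f,
            by rw [hgenJ, Ideal.mem_span_singleton]; exact dvd_mul_left f e⟩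
        rw [hinf] at h1
        exact Ideal.mem_bot.mp h1
      -- the two middle vertices
      have hW1bot : (1 : ZMod n) - e ≠ 0 := by
        intro h
        have he1 : e = 1 := by linear_combination -h
        exact I.2.2 (by rw [hgenI, he1, Ideal.span_singleton_one])
      have hW1top : Ideal.span {(1 : ZMod n) - e} ≠ ⊤ := by
        intro h
        rw [Ideal.span_singleton_eq_top] at h
        obtain ⟨c, hc⟩ := isUnit_iff_exists_inv.mp h
        have he0 : e = 0 := by linear_combination (-e) * hc + (-c) * he
        exact I.2.1 (by rw [hgenI, he0]; exact Ideal.span_singleton_eq_bot.mpr rfl)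
      have hW2bot : (1 : ZMod n) - f ≠ 0 := by
        intro h
        have hf1 : f = 1 := by linear_combination -h
        exact J.2.2 (by rw [hgenJ, hf1, Ideal.span_singleton_one])
      have hW2top : Ideal.span {(1 : ZMod n) - f} ≠ ⊤ := by
        intro h
        rw [Ideal.span_singleton_eq_top] at h
        obtain ⟨c, hc⟩ := isUnit_iff_exists_inv.mp h
        have hf0 : f = 0 := by linear_combination (-f) * hc + (-c) * hf
        exact J.2.1 (by rw [hgenJ, hf0]; exact Ideal.span_singleton_eq_bot.mpr rfl)
      set W1 : {I : Ideal (ZMod n) // I ≠ ⊥ ∧ I ≠ ⊤} :=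
        ⟨Ideal.span {(1 : ZMod n) - e}, by rwa [Ne, Ideal.span_singleton_eq_bot], hW1top⟩
      set W2 : {I : Ideal (ZMod n) // I ≠ ⊥ ∧ I ≠ ⊤} :=
        ⟨Ideal.span {(1 : ZMod n) - f}, by rwa [Ne, Ideal.span_singleton_eq_bot], hW2top⟩
      have hsupIW1 : I.1 ⊔ W1.1 = ⊤ := by
        rw [Ideal.eq_top_iff_one]
        have hone : (1 : ZMod n) = e + (1 - e) := by ring
        rw [hone]
        exact Submodule.add_mem_sup (hgenI ▸ Ideal.mem_span_singleton_self e)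
          (Ideal.mem_span_singleton_self _)
      have hsupW1W2 : W1.1 ⊔ W2.1 = ⊤ := by
        rw [Ideal.eq_top_iff_one]
        have hone : (1 : ZMod n) = (1 - e) + e * (1 - f) := by linear_combination hef
        rw [hone]
        exact Submodule.add_mem_sup (Ideal.mem_span_singleton_self _)
          (Ideal.mem_span_singleton.mpr (dvd_mul_left _ _))
      have hsupW2J : W2.1 ⊔ J.1 = ⊤ := by
        rw [Ideal.eq_top_iff_one]
        have hone : (1 : ZMod n) = (1 - f) + f := by ring
        rw [hone]
        exact Submodule.add_mem_sup (Ideal.mem_span_singleton_self _)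
          (hgenJ ▸ Ideal.mem_span_singleton_self f)
      have hadj1 : G.Adj I W1 := (adj_iff I W1).2
        ⟨fun h => W1.2.2 (by rw [h, sup_idem] at hsupIW1; exact hsupIW1), hsupIW1⟩
      have hadj2 : G.Adj W1 W2 := (adj_iff W1 W2).2
        ⟨fun h => W2.2.2 (by rw [h, sup_idem] at hsupW1W2; exact hsupW1W2), hsupW1W2⟩
      have hadj3 : G.Adj W2 J := (adj_iff W2 J).2
        ⟨fun h => J.2.2 (by rw [h, sup_idem] at hsupW2J; exact hsupW2J), hsupW2J⟩
      let w : G.Walk I J :=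
        SimpleGraph.Walk.cons hadj1 (SimpleGraph.Walk.cons hadj2 (SimpleGraph.Walk.cons hadj3 SimpleGraph.Walk.nil))
      have hwlen : w.length = 3 := by simp [w]
      have hle3 : G.dist I J ≤ 3 := hwlen ▸ SimpleGraph.dist_le w
      have hreach : G.Reachable I J := ⟨w⟩
      have hne0 : G.dist I J ≠ 0 := fun h => hIJ (hreach.dist_eq_zero_iff.mp h)
      have hne1 : G.dist I J ≠ 1 := fun h =>
        hsup ((adj_iff I J).1 (SimpleGraph.dist_eq_one_iff_adj.mp h)).2
      have hne2 : G.dist I J ≠ 2 := by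
        intro h
        obtain ⟨w2, hw2⟩ := hreach.exists_walk_length_eq_dist
        rw [h] at hw2
        cases w2 with
        | nil => simp at hw2
        | cons hadjIb w' =>
          rename_i b
          cases w' with
          | nil => simp at hw2
          | cons hadjbc w'' =>
            rename_i c
            have hlen : w''.length = 0 := by
              simp only [SimpleGraph.Walk.length_cons] at hw2; omega
            have hcJ := SimpleGraph.Walk.eq_of_length_eq_zero hlen
            rw [hcJ] at hadjbc
            obtain ⟨-, hs1⟩ := (adj_iff I b).1 hadjIb
            obtain ⟨-, hs2⟩ := (adj_iff b J).1 hadjbc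
            have h1mem : (1 : ZMod n) ∈ I.1 ⊔ b.1 := by rw [hs1]; exact Submodule.mem_top
            obtain ⟨x, hx, y, hy, hxy⟩ := Submodule.mem_sup.1 h1mem
            rw [hgenI, Ideal.mem_span_singleton] at hx
            obtain ⟨c, hc⟩ := hx
            have hb1 : (1 : ZMod n) - e ∈ b.1 := by
              have hid : (1 : ZMod n) - e = (1 - e) * y := by
                linear_combination (-(1 - e)) * hxy + (1 - e) * hc + (-c) * he
              rw [hid]
              exact Ideal.mul_mem_left _ _ hy
            have h2mem : (1 : ZMod n) ∈ b.1 ⊔ J.1 := by rw [hs2]; exact Submodule.mem_top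
            obtain ⟨y', hy', x', hx', hxy'⟩ := Submodule.mem_sup.1 h2mem
            rw [hgenJ, Ideal.mem_span_singleton] at hx'
            obtain ⟨c', hc'⟩ := hx'
            have hb2 : (1 : ZMod n) - f ∈ b.1 := by
              have hid : (1 : ZMod n) - f = (1 - f) * y' := by
                linear_combination (-(1 - f)) * hxy' + (1 - f) * hc' + (-c') * hf
              rw [hid]
              exact Ideal.mul_mem_left _ _ hy'
            have hone : (1 : ZMod n) = (1 - e) + ((1 - f) - (1 - e) * (1 - f)) := by
              linear_combination hef
            have h1b : (1 : ZMod n) ∈ b.1 := by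
              rw [hone]
              exact add_mem hb1 (sub_mem hb2 (Ideal.mul_mem_left _ _ hb2))
            exact b.2.2 ((Ideal.eq_top_iff_one _).2 h1b)
      have h3 : G.dist I J = 3 := by omega
      rw [h3]
      simp [hsup, hinf]
    · -- distance 2
      have hef0 : e * f ≠ 0 := by
        intro h
        apply hinf
        have hle : I.1 ⊓ J.1 ≤ Ideal.span {e * f} := by
          rw [hgenI, hgenJ]; exact span_inf_le he
        rw [h, Ideal.span_singleton_eq_bot.mpr rfl] at hle
        exact le_bot_iff.mp hle
      have hWbot : (1 : ZMod n) - e * f ≠ 0 := by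
        intro h
        have hef1 : e * f = 1 := by linear_combination -h
        apply I.2.2
        rw [Ideal.eq_top_iff_one, hgenI, Ideal.mem_span_singleton]
        exact ⟨f, hef1.symm⟩
      have hWtop : Ideal.span {(1 : ZMod n) - e * f} ≠ ⊤ := by
        intro h
        rw [Ideal.span_singleton_eq_top] at h
        obtain ⟨c, hc⟩ := isUnit_iff_exists_inv.mp h
        exact hef0 (by linear_combination (-(e * f)) * hc + (-(c * f * f)) * he + (-(c * e)) * hf)
      set W : {I : Ideal (ZMod n) // I ≠ ⊥ ∧ I ≠ ⊤} :=
        ⟨Ideal.span {(1 : ZMod n) - e * f}, by rwa [Ne, Ideal.span_singleton_eq_bot], hWtop⟩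
      have hsupIW : I.1 ⊔ W.1 = ⊤ := by
        rw [Ideal.eq_top_iff_one]
        have hone : (1 : ZMod n) = e * f + (1 - e * f) := by ring
        rw [hone]
        exact Submodule.add_mem_sup
          (by rw [hgenI, Ideal.mem_span_singleton]; exact dvd_mul_right e f)
          (Ideal.mem_span_singleton_self _)
      have hsupWJ : W.1 ⊔ J.1 = ⊤ := by
        rw [Ideal.eq_top_iff_one]
        have hone : (1 : ZMod n) = (1 - e * f) + e * f := by ring
        rw [hone]
        exact Submodule.add_mem_sup (Ideal.mem_span_singleton_self _)
          (by rw [hgenJ, Ideal.mem_span_singleton]; exact dvd_mul_left f e)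
      have hadj1 : G.Adj I W := (adj_iff I W).2
        ⟨fun h => W.2.2 (by rw [h, sup_idem] at hsupIW; exact hsupIW), hsupIW⟩
      have hadj2 : G.Adj W J := (adj_iff W J).2
        ⟨fun h => J.2.2 (by rw [h, sup_idem] at hsupWJ; exact hsupWJ), hsupWJ⟩
      let w : G.Walk I J := SimpleGraph.Walk.cons hadj1 (SimpleGraph.Walk.cons hadj2 SimpleGraph.Walk.nil)
      have hwlen : w.length = 2 := by simp [w]
      have hle2 : G.dist I J ≤ 2 := hwlen ▸ SimpleGraph.dist_le w
      have hreach : G.Reachable I J := ⟨w⟩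
      have hne0 : G.dist I J ≠ 0 := fun h => hIJ (hreach.dist_eq_zero_iff.mp h)
      have hne1 : G.dist I J ≠ 1 := fun h =>
        hsup ((adj_iff I J).1 (SimpleGraph.dist_eq_one_iff_adj.mp h)).2
      have h2 : G.dist I J = 2 := by omega
      rw [h2]
      simp [hinf]
end

section
/- Let n ≥ 4 be a composite integer and let T denote the number of nonzero proper ideals of Z_n = Z/nZ. Then the metric dimension of the essential ideal graph E_{Z_n} equals T − 1 if and only if either n = p^m for a prime p and m > 1, or n = p_1 p_2 for two distinct primes p_1 and p_2. -/
section GraphLemmas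

lemma metricDim_eq_card_sub_one_of_complete {V : Type*} [Finite V] [Nonempty V]
    (G : SimpleGraph V) (h : ∀ u v : V, u ≠ v → G.Adj u v) :
    metricDim G = Nat.card V - 1 := by
  have hdist : ∀ u v : V, u ≠ v → G.dist u v = 1 := fun u v huv =>
    SimpleGraph.dist_eq_one_iff_adj.2 (h u v huv)
  obtain ⟨v0⟩ := ‹Nonempty V›
  have hmem : (Nat.card V - 1) ∈
      {k : ℕ | ∃ W : Set V, W.Finite ∧ IsResolvingSet G W ∧ W.ncard = k} := by
    refine ⟨({v0} : Set V)ᶜ, Set.toFinite _, ?_, ?_⟩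
    · intro u v huv
      by_cases hu : u = v0
      · subst hu
        refine ⟨v, by simpa using (Ne.symm huv), ?_⟩
        rw [hdist u v huv, SimpleGraph.dist_self]
        omega
      · refine ⟨u, by simpa using hu, ?_⟩
        rw [SimpleGraph.dist_self, hdist v u (Ne.symm huv)]
        omega
    · have h1 := Set.ncard_add_ncard_compl ({v0} : Set V)
      have h2 : ({v0} : Set V).ncard = 1 := Set.ncard_singleton v0
      omega
  refine le_antisymm (Nat.sInf_le hmem) (le_csInf ⟨_, hmem⟩ ?_)
  rintro k ⟨W, hWfin, hWres, rfl⟩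
  by_contra hlt
  push_neg at hlt
  have hsum := Set.ncard_add_ncard_compl W
  have hcompl : 1 < Wᶜ.ncard := by omega
  obtain ⟨u, v, hu, hv, huv⟩ := (Set.one_lt_ncard_iff (Set.toFinite _)).1 hcompl
  obtain ⟨w, hw, hne⟩ := hWres u v huv
  have huw : u ≠ w := fun e => hu (e ▸ hw)
  have hvw : v ≠ w := fun e => hv (e ▸ hw)
  exact hne ((hdist u w huw).trans (hdist v w hvw).symm)

lemma metricDim_le_card_sub_two {V : Type*} [Finite V]
    (G : SimpleGraph V) (hconn : ∀ x y : V, G.Reachable x y)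
    {u v w : V} (huv : u ≠ v) (hwu : w ≠ u) (hwv : w ≠ v)
    (hadj : G.Adj w u) (hnadj : ¬ G.Adj w v) :
    metricDim G ≤ Nat.card V - 2 := by
  have hdist0 : ∀ x y : V, x ≠ y → G.dist x y ≠ 0 := by
    intro x y hxy h0
    rcases SimpleGraph.dist_eq_zero_iff_eq_or_not_reachable.1 h0 with h | h
    · exact hxy h
    · exact h (hconn x y)
  apply Nat.sInf_le
  refine ⟨({u, v} : Set V)ᶜ, Set.toFinite _, ?_, ?_⟩
  · intro x y hxy
    by_cases hx : x ∈ ({u, v} : Set V)ᶜ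
    · refine ⟨x, hx, ?_⟩
      rw [SimpleGraph.dist_self]
      exact fun h => hdist0 y x (Ne.symm hxy) h.symm
    · by_cases hy : y ∈ ({u, v} : Set V)ᶜ
      · refine ⟨y, hy, ?_⟩
        rw [SimpleGraph.dist_self]
        exact hdist0 x y hxy
      · have hw' : w ∈ ({u, v} : Set V)ᶜ := by
          simp [hwu, hwv]
        have h1 : G.dist u w = 1 := SimpleGraph.dist_eq_one_iff_adj.2 hadj.symm
        have h2 : G.dist v w ≠ 1 := fun h => hnadj (SimpleGraph.dist_eq_one_iff_adj.1 h).symm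
        have hx' : x = u ∨ x = v := by
          have h : x ∈ ({u, v} : Set V) := not_not.1 hx
          simpa using h
        have hy' : y = u ∨ y = v := by
          have h : y ∈ ({u, v} : Set V) := not_not.1 hy
          simpa using h
        rcases hx' with rfl | rfl <;> rcases hy' with rfl | rfl
        · exact absurd rfl hxy
        · exact ⟨w, hw', by rw [h1]; exact fun h => h2 h.symm⟩
        · exact ⟨w, hw', by rw [h1]; exact h2⟩
        · exact absurd rfl hxy
  · have h1 := Set.ncard_add_ncard_compl ({u, v} : Set V)
    have h2 : ({u, v} : Set V).ncard = 2 := Set.ncard_pair huv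
    omega

end GraphLemmas

section ZModLemmas

open Ideal

variable {n : ℕ}

lemma exists_divisor_span (n : ℕ) (I : Ideal (ZMod n)) :
    ∃ d : ℕ, d ∣ n ∧ I = Ideal.span {(d : ZMod n)} := by
  have hf : Function.Surjective (Int.castRingHom (ZMod n)) := ZMod.intCast_surjective
  obtain ⟨g, hg⟩ := Submodule.IsPrincipal.principal (Ideal.comap (Int.castRingHom (ZMod n)) I)
  rw [Ideal.submodule_span_eq] at hg
  refine ⟨g.natAbs, ?_, ?_⟩
  · have hn : (n : ℤ) ∈ Ideal.comap (Int.castRingHom (ZMod n)) I := by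
      rw [Ideal.mem_comap]
      have h0 : (Int.castRingHom (ZMod n)) (n : ℤ) = 0 := by simp
      rw [h0]
      exact I.zero_mem
    rw [hg, Ideal.mem_span_singleton] at hn
    have := Int.natAbs_dvd_natAbs.2 hn
    simpa using this
  · have hmap := Ideal.map_comap_of_surjective _ hf I
    rw [hg, Ideal.map_span, Set.image_singleton] at hmap
    refine hmap.symm.trans ?_
    have h1 : (Int.castRingHom (ZMod n)) g = ((g : ℤ) : ZMod n) := rfl
    rw [h1]
    have h2 : ((g.natAbs : ℕ) : ZMod n) = ((g.natAbs : ℤ) : ZMod n) :=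
      (Int.cast_natCast _).symm
    rw [h2]
    rcases Int.natAbs_eq g with h | h
    · rw [← h]
    · have h4 : ((g : ℤ) : ZMod n) = ((-(g.natAbs : ℤ) : ℤ) : ZMod n) := congrArg _ h
      rw [Int.cast_neg] at h4
      rw [h4, Ideal.span_singleton_neg]

lemma mem_span_divisor [NeZero n] {a : ℕ} (ha : a ∣ n) (x : ZMod n) :
    x ∈ Ideal.span {(a : ZMod n)} ↔ a ∣ x.val := by
  constructor
  · intro hx
    obtain ⟨c, hc⟩ := Ideal.mem_span_singleton'.1 hx
    have hv : x.val = (c.val * ((a : ZMod n)).val) % n := by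
      rw [← ZMod.val_mul, hc]
    rw [hv, ZMod.val_natCast]
    exact (Nat.dvd_mod_iff ha).2 (Dvd.dvd.mul_left ((Nat.dvd_mod_iff ha).2 dvd_rfl) _)
  · rintro ⟨m, hm⟩
    have hx : x = ((a * m : ℕ) : ZMod n) := by
      rw [← hm]
      exact (ZMod.natCast_rightInverse x).symm
    rw [hx]
    exact Ideal.mem_span_singleton.2 ⟨(m : ZMod n), by push_cast; ring⟩

lemma span_divisor_inj [NeZero n] {d e : ℕ} (hd : d ∣ n) (he : e ∣ n)
    (h : Ideal.span {(d : ZMod n)} = Ideal.span {(e : ZMod n)}) : d = e := by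
  have h1 : e ∣ d := by
    have hm := (mem_span_divisor he (d : ZMod n)).1 (h ▸ Ideal.subset_span rfl)
    rwa [ZMod.val_natCast, Nat.dvd_mod_iff he] at hm
  have h2 : d ∣ e := by
    have hm := (mem_span_divisor hd (e : ZMod n)).1 (h.symm ▸ Ideal.subset_span rfl)
    rwa [ZMod.val_natCast, Nat.dvd_mod_iff hd] at hm
  exact Nat.dvd_antisymm h2 h1

lemma span_divisor_ne_bot [NeZero n] {d : ℕ} (hd : d ∣ n) (hdn : d ≠ n) :
    Ideal.span {(d : ZMod n)} ≠ ⊥ := by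
  rw [Ne, Ideal.span_singleton_eq_bot, ZMod.natCast_eq_zero_iff]
  exact fun h => hdn (Nat.dvd_antisymm hd h)

lemma span_divisor_ne_top {d : ℕ} (hd : d ∣ n) (hd1 : d ≠ 1) :
    Ideal.span {(d : ZMod n)} ≠ ⊤ := by
  rw [Ne, Ideal.span_singleton_eq_top, ZMod.isUnit_iff_coprime]
  intro h
  have : d ∣ Nat.gcd d n := Nat.dvd_gcd dvd_rfl hd
  rw [h] at this
  exact hd1 (Nat.dvd_one.1 this)

lemma sup_span_eq_top {a b : ℕ} (hab : Nat.Coprime a b) :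
    Ideal.span {(a : ZMod n)} ⊔ Ideal.span {(b : ZMod n)} = ⊤ := by
  rw [Ideal.eq_top_iff_one]
  have h := Nat.gcd_eq_gcd_ab a b
  have h2 : (1 : ZMod n) = (a : ZMod n) * ((Nat.gcdA a b : ℤ) : ZMod n)
      + (b : ZMod n) * ((Nat.gcdB a b : ℤ) : ZMod n) := by
    have h3 := congrArg (fun z : ℤ => (z : ZMod n)) h
    rw [hab] at h3
    push_cast at h3
    push_cast
    linear_combination h3
  rw [h2]
  exact Submodule.add_mem _
    (Ideal.mem_sup_left (Ideal.mul_mem_right _ _ (Ideal.subset_span rfl)))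
    (Ideal.mem_sup_right (Ideal.mul_mem_right _ _ (Ideal.subset_span rfl)))

lemma essential_top {R : Type*} [CommRing R] [Nontrivial R] :
    IsEssentialIdeal (⊤ : Ideal R) := by
  constructor
  · intro h
    have : (1 : R) ∈ (⊥ : Ideal R) := h ▸ Submodule.mem_top
    exact one_ne_zero ((Submodule.mem_bot _).1 this)
  · intro J hJ
    rwa [top_inf_eq]

lemma IsEssentialIdeal.mono {R : Type*} [CommRing R] {I K : Ideal R} (h : I ≤ K)
    (hI : IsEssentialIdeal I) : IsEssentialIdeal K :=
  ⟨fun hK => hI.1 (le_bot_iff.1 (hK ▸ h)),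
   fun J hJ hb => hI.2 J hJ (le_bot_iff.1 (hb ▸ inf_le_inf_right J h))⟩

lemma essential_span_of_factorization_lt [NeZero n] (hn1 : n ≠ 1) {g : ℕ} (hg : g ∣ n)
    (h : ∀ p ∈ n.primeFactors, g.factorization p < n.factorization p) :
    IsEssentialIdeal (Ideal.span {(g : ZMod n)}) := by
  have hn0 : n ≠ 0 := NeZero.ne n
  have hg0 : g ≠ 0 := by
    rintro rfl
    exact hn0 (zero_dvd_iff.1 hg)
  have hgn : g ≠ n := by
    rintro rfl
    obtain ⟨p, hp, hpd⟩ := Nat.exists_prime_and_dvd hn1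
    exact lt_irrefl _ (h p (Nat.mem_primeFactors.2 ⟨hp, hpd, hn0⟩))
  refine ⟨span_divisor_ne_bot hg hgn, ?_⟩
  intro J hJ hbot
  obtain ⟨x, hxJ, hx0⟩ := (Submodule.ne_bot_iff J).1 hJ
  obtain ⟨k, hk⟩ : ∃ k, Nat.gcd x.val n = k := ⟨_, rfl⟩
  have hkn : k ∣ n := hk ▸ Nat.gcd_dvd_right _ _
  have hkx : k ∣ x.val := hk ▸ Nat.gcd_dvd_left _ _
  have hk0 : k ≠ 0 := fun h0 => hn0 (Nat.eq_zero_of_gcd_eq_zero_right (hk.trans h0))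
  have hkne : k ≠ n := by
    intro hkn'
    have hd : n ∣ x.val := hkn' ▸ hkx
    have hv : x.val = 0 := Nat.eq_zero_of_dvd_of_lt hd (ZMod.val_lt x)
    exact hx0 ((ZMod.val_eq_zero x).1 hv)
  have hkJ : ((k : ℕ) : ZMod n) ∈ J := by
    have hb := Nat.gcd_eq_gcd_ab x.val n
    have heq : ((k : ℕ) : ZMod n) = x * ((Nat.gcdA x.val n : ℤ) : ZMod n) := by
      have h3 := congrArg (fun z : ℤ => (z : ZMod n)) hb
      push_cast at h3
      rw [ZMod.natCast_self] at h3
      rw [ZMod.natCast_val, ZMod.cast_id] at h3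
      rw [hk] at h3
      simpa using h3
    rw [heq]
    exact J.mul_mem_right _ hxJ
  have hnk : ¬ n ∣ k := fun hd => hkne (Nat.dvd_antisymm hkn hd)
  have hnle : ¬ n.factorization ≤ k.factorization :=
    fun hle => hnk ((Nat.factorization_le_iff_dvd hn0 hk0).1 hle)
  obtain ⟨p, hp⟩ : ∃ p, k.factorization p < n.factorization p := by
    by_contra hc
    push_neg at hc
    exact hnle (Finsupp.le_def.2 fun p => hc p)
  have hpP : p ∈ n.primeFactors := by
    rw [← Nat.support_factorization, Finsupp.mem_support_iff]
    omega
  obtain ⟨l, hl⟩ : ∃ l, Nat.lcm g k = l := ⟨_, rfl⟩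
  have hln : l ∣ n := hl ▸ Nat.lcm_dvd hg hkn
  have hlne : l ≠ n := by
    intro he
    have hfl := Nat.factorization_lcm hg0 hk0
    have heq : n.factorization p = g.factorization p ⊔ k.factorization p := by
      rw [← he, ← hl, hfl, Finsupp.sup_apply]
    have hgp := h p hpP
    rw [show ∀ a b : ℕ, a ⊔ b = max a b from fun _ _ => rfl] at heq
    omega
  have hl0 : ((l : ℕ) : ZMod n) ≠ 0 := by
    rw [Ne, ZMod.natCast_eq_zero_iff]
    exact fun hd => hlne (Nat.dvd_antisymm hln hd)
  apply hl0
  have hmem : ((l : ℕ) : ZMod n) ∈ Ideal.span {(g : ZMod n)} ⊓ J := by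
    refine Submodule.mem_inf.2 ⟨?_, ?_⟩
    · exact Ideal.mem_span_singleton.2 (Nat.cast_dvd_cast (hl ▸ Nat.dvd_lcm_left g k))
    · obtain ⟨c, hc⟩ := hl ▸ Nat.dvd_lcm_right g k
      rw [hc]
      push_cast
      exact J.mul_mem_right _ hkJ
  rw [hbot] at hmem
  exact (Submodule.mem_bot _).1 hmem

lemma span_inf_span_eq_bot [NeZero n] {a b : ℕ} (ha : a ∣ n) (hb : b ∣ n)
    (hl : Nat.lcm a b = n) :
    Ideal.span {(a : ZMod n)} ⊓ Ideal.span {(b : ZMod n)} = ⊥ := by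
  rw [eq_bot_iff]
  intro x hx
  rw [Submodule.mem_inf] at hx
  have h1 := (mem_span_divisor ha x).1 hx.1
  have h2 := (mem_span_divisor hb x).1 hx.2
  have hd : n ∣ x.val := by
    have hx' : Nat.lcm a b ∣ x.val := Nat.lcm_dvd h1 h2
    rwa [hl] at hx'
  have hv : x.val = 0 := Nat.eq_zero_of_dvd_of_lt hd (ZMod.val_lt x)
  exact (Submodule.mem_bot _).2 ((ZMod.val_eq_zero x).1 hv)

end ZModLemmas

section MainAux

open Ideal

lemma essential_conn (n : ℕ) (h4 : 4 ≤ n) (hcomp : ¬ n.Prime) :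
    ∀ x y : {I : Ideal (ZMod n) // I ≠ ⊥ ∧ I ≠ ⊤},
      (essentialIdealGraph (ZMod n)).Reachable x y := by
  haveI : NeZero n := ⟨by omega⟩
  haveI : Fact (1 < n) := ⟨by omega⟩
  have hn0 : n ≠ 0 := by omega
  have hn1 : n ≠ 1 := by omega
  have hdec : ∀ x : {I : Ideal (ZMod n) // I ≠ ⊥ ∧ I ≠ ⊤},
      ∃ d : ℕ, d ∣ n ∧ d ≠ 1 ∧ d ≠ n ∧ x.1 = Ideal.span {(d : ZMod n)} := by
    intro x
    obtain ⟨d, hd, hspan⟩ := exists_divisor_span n x.1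
    refine ⟨d, hd, ?_, ?_, hspan⟩
    · rintro rfl
      exact x.2.2 (by rw [hspan]; simp [Ideal.span_singleton_eq_top])
    · rintro rfl
      exact x.2.1 (by rw [hspan]; simp [Ideal.span_singleton_eq_bot, ZMod.natCast_self])
  by_cases hsf : Squarefree n
  · -- squarefree case: go through prime vertices
    have hprimevert : ∀ π : ℕ, π.Prime → π ∣ n →
        ((Ideal.span {(π : ZMod n)} : Ideal (ZMod n)) ≠ ⊥ ∧
          (Ideal.span {(π : ZMod n)} : Ideal (ZMod n)) ≠ ⊤) := fun π hπ hπn =>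
      ⟨span_divisor_ne_bot hπn (fun he => hcomp (he ▸ hπ)), span_divisor_ne_top hπn hπ.ne_one⟩
    have step : ∀ x : {I : Ideal (ZMod n) // I ≠ ⊥ ∧ I ≠ ⊤},
        ∃ (π : ℕ) (hπ : π.Prime) (hd : π ∣ n),
        (essentialIdealGraph (ZMod n)).Adj x ⟨_, hprimevert π hπ hd⟩ := by
      intro x
      obtain ⟨d, hdn, hd1, hdN, hspan⟩ := hdec x
      have hq : n / d ≠ 1 := by
        intro h1
        apply hdN
        have := Nat.div_mul_cancel hdn
        rw [h1, one_mul] at this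
        exact this
      obtain ⟨π, hπ, hπd⟩ := Nat.exists_prime_and_dvd hq
      have hπn : π ∣ n := hπd.trans (Nat.div_dvd_of_dvd hdn)
      have hnd : ¬ π ∣ d := by
        intro hc
        have hsq : π * π ∣ (n / d) * d := mul_dvd_mul hπd hc
        rw [Nat.div_mul_cancel hdn] at hsq
        exact hπ.not_isUnit (hsf π hsq)
      refine ⟨π, hπ, hπn, show _ ∧ _ from ⟨?_, ?_⟩⟩
      · intro he
        have he' : x.1 = Ideal.span {(π : ZMod n)} := congrArg Subtype.val he
        rw [hspan] at he'
        exact hnd ((span_divisor_inj hdn hπn he') ▸ dvd_rfl)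
      · have hcop : Nat.Coprime d π := (hπ.coprime_iff_not_dvd.2 hnd).symm
        rw [hspan]
        show IsEssentialIdeal (Ideal.span {(d : ZMod n)} ⊔ Ideal.span {(π : ZMod n)})
        rw [sup_span_eq_top hcop]
        exact essential_top
    intro x y
    obtain ⟨π, hπ, hπn, hadjx⟩ := step x
    obtain ⟨ρ, hρ, hρn, hadjy⟩ := step y
    have hmid : (essentialIdealGraph (ZMod n)).Reachable
        ⟨_, hprimevert π hπ hπn⟩ ⟨_, hprimevert ρ hρ hρn⟩ := by
      by_cases hpr : π = ρ
      · subst hpr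
        exact SimpleGraph.Reachable.refl _
      · refine SimpleGraph.Adj.reachable (show _ ∧ _ from ⟨?_, ?_⟩)
        · intro he
          have he' : Ideal.span {(π : ZMod n)} = Ideal.span {(ρ : ZMod n)} :=
            congrArg Subtype.val he
          exact hpr (span_divisor_inj hπn hρn he')
        · show IsEssentialIdeal (Ideal.span {(π : ZMod n)} ⊔ Ideal.span {(ρ : ZMod n)})
          rw [sup_span_eq_top ((Nat.coprime_primes hπ hρ).2 hpr)]
          exact essential_top
    exact (hadjx.reachable.trans hmid).trans hadjy.reachable.symm
  · -- not squarefree: universal vertex n / rad n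
    obtain ⟨R, hR⟩ : ∃ R, ∏ p ∈ n.primeFactors, p = R := ⟨_, rfl⟩
    have hRdvd : R ∣ n := hR ▸ Nat.prod_primeFactors_dvd n
    have hfactR : ∀ q, R.factorization q = if q ∈ n.primeFactors then 1 else 0 := by
      intro q
      rw [← hR, Nat.factorization_prod (fun p hp => (Nat.prime_of_mem_primeFactors hp).pos.ne')]
      rw [Finset.sum_apply']
      have hterm : ∀ p ∈ n.primeFactors, (Nat.factorization p) q = if p = q then 1 else 0 := by
        intro p hp
        rw [Nat.Prime.factorization (Nat.prime_of_mem_primeFactors hp)]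
        exact Finsupp.single_apply
      rw [Finset.sum_congr rfl hterm]
      simp [Finset.sum_ite_eq]
    have hR0 : R ≠ 0 := fun h0 => hn0 (zero_dvd_iff.1 (h0 ▸ hRdvd))
    have hR1 : 1 < R := by
      obtain ⟨p, hp, hpd⟩ := Nat.exists_prime_and_dvd hn1
      have hmem : p ∈ n.primeFactors := Nat.mem_primeFactors.2 ⟨hp, hpd, hn0⟩
      have : p ∣ R := hR ▸ Finset.dvd_prod_of_mem _ hmem
      have := Nat.le_of_dvd (Nat.pos_of_ne_zero hR0) this
      have := hp.two_le
      omega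
    have hnR : n ≠ R := by
      intro he
      apply hsf
      rw [Nat.squarefree_iff_factorization_le_one hn0]
      intro q
      rw [he, hfactR q]
      split <;> omega
    obtain ⟨g, hgdef⟩ : ∃ g, n / R = g := ⟨_, rfl⟩
    have hgR : g * R = n := by rw [← hgdef]; exact Nat.div_mul_cancel hRdvd
    have hgdvd : g ∣ n := ⟨R, hgR.symm⟩
    have hg1 : g ≠ 1 := by
      intro h1
      rw [h1, one_mul] at hgR
      exact hnR hgR.symm
    have hgn : g ≠ n := by
      intro he
      rw [he] at hgR
      have : R = 1 := by
        have h2 : n * R = n * 1 := by omega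
        exact Nat.eq_of_mul_eq_mul_left (by omega) h2
      omega
    have hess : IsEssentialIdeal (Ideal.span {(g : ZMod n)}) := by
      apply essential_span_of_factorization_lt hn1 hgdvd
      intro q hq
      have hq1 : 1 ≤ n.factorization q := by
        rw [← Nat.support_factorization, Finsupp.mem_support_iff] at hq
        omega
      rw [← hgdef, Nat.factorization_div hRdvd, Finsupp.tsub_apply, hfactR q, if_pos hq]
      omega
    have hz0 : (Ideal.span {(g : ZMod n)} : Ideal (ZMod n)) ≠ ⊥ ∧
        (Ideal.span {(g : ZMod n)} : Ideal (ZMod n)) ≠ ⊤ :=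
      ⟨span_divisor_ne_bot hgdvd hgn, span_divisor_ne_top hgdvd hg1⟩
    have hreach : ∀ x : {I : Ideal (ZMod n) // I ≠ ⊥ ∧ I ≠ ⊤},
        (essentialIdealGraph (ZMod n)).Reachable x ⟨_, hz0⟩ := by
      intro x
      by_cases hx : x = ⟨_, hz0⟩
      · exact hx ▸ SimpleGraph.Reachable.refl _
      · refine SimpleGraph.Adj.reachable (show _ ∧ _ from ⟨hx, ?_⟩)
        exact IsEssentialIdeal.mono le_sup_right hess
    intro x y
    exact (hreach x).trans (hreach y).symm

lemma exists_uvw (n : ℕ) (h4 : 4 ≤ n) {A B c ρ : ℕ} (hAB : A * B = n)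
    (hcop : Nat.Coprime A B) (hA : 1 < A) (hcB : c ∣ B) (hc1 : 1 < c) (hcltB : c < B)
    (hρ : ρ.Prime) (hρc : ρ ∣ c) :
    ∃ u v w : {I : Ideal (ZMod n) // I ≠ ⊥ ∧ I ≠ ⊤}, u ≠ v ∧ w ≠ u ∧ w ≠ v ∧
      (essentialIdealGraph (ZMod n)).Adj w u ∧
      ¬ (essentialIdealGraph (ZMod n)).Adj w v := by
  haveI : NeZero n := ⟨by omega⟩
  haveI : Fact (1 < n) := ⟨by omega⟩
  have hn0 : n ≠ 0 := by omega
  have hB1 : 1 < B := lt_trans hc1 hcltB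
  have hAd : A ∣ n := ⟨B, hAB.symm⟩
  have hBd : B ∣ n := ⟨A, by rw [← hAB]; ring⟩
  have hρB : ρ ∣ B := hρc.trans hcB
  have hρn : ρ ∣ n := hρB.trans hBd
  have hAcd : A * c ∣ n := by
    rw [← hAB]
    exact mul_dvd_mul_left A hcB
  have hAltn : A < n := by nlinarith
  have hBltn : B < n := by nlinarith
  have hAcltn : A * c < n := by nlinarith
  have hρltn : ρ < n := lt_of_le_of_lt (Nat.le_of_dvd (by omega) hρB) hBltn
  -- the three vertices
  have hu : (Ideal.span {(ρ : ZMod n)} : Ideal (ZMod n)) ≠ ⊥ ∧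
      (Ideal.span {(ρ : ZMod n)} : Ideal (ZMod n)) ≠ ⊤ :=
    ⟨span_divisor_ne_bot hρn (by omega), span_divisor_ne_top hρn hρ.ne_one⟩
  have hw : (Ideal.span {(A : ZMod n)} : Ideal (ZMod n)) ≠ ⊥ ∧
      (Ideal.span {(A : ZMod n)} : Ideal (ZMod n)) ≠ ⊤ :=
    ⟨span_divisor_ne_bot hAd (by omega), span_divisor_ne_top hAd (by omega)⟩
  have hv : (Ideal.span {((A * c : ℕ) : ZMod n)} : Ideal (ZMod n)) ≠ ⊥ ∧
      (Ideal.span {((A * c : ℕ) : ZMod n)} : Ideal (ZMod n)) ≠ ⊤ :=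
    ⟨span_divisor_ne_bot hAcd (by omega), span_divisor_ne_top hAcd (by
      intro h1
      have := Nat.eq_one_of_mul_eq_one_left h1
      omega)⟩
  have hcopAc : Nat.Coprime A c := Nat.Coprime.coprime_dvd_right hcB hcop
  have hcopAρ : Nat.Coprime A ρ := Nat.Coprime.coprime_dvd_right hρB hcop
  -- numeric distinctness
  have hρA : ρ ≠ A := by
    intro he
    have hd : A ∣ 1 := by
      have := Nat.dvd_gcd (dvd_refl A) (he ▸ hρB)
      rwa [Nat.Coprime.gcd_eq_one hcop] at this
    have := Nat.le_of_dvd one_pos hd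
    omega
  have hρAc : ρ ≠ A * c := by
    intro he
    have hdA : A ∣ ρ := ⟨c, he⟩
    rcases (Nat.Prime.eq_one_or_self_of_dvd hρ A hdA) with h1 | h1
    · omega
    · rw [← h1] at he
      have h2 : A * 2 ≤ A * c := Nat.mul_le_mul_left A hc1
      omega
  have hAAc : A ≠ A * c := by
    intro he
    have h2 : A * 2 ≤ A * c := Nat.mul_le_mul_left A hc1
    omega
  refine ⟨⟨_, hu⟩, ⟨_, hv⟩, ⟨_, hw⟩, ?_, ?_, ?_, ?_, ?_⟩
  · intro he
    exact hρAc (span_divisor_inj hρn hAcd (congrArg Subtype.val he))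
  · intro he
    exact hρA.symm (span_divisor_inj hAd hρn (congrArg Subtype.val he))
  · intro he
    exact hAAc (span_divisor_inj hAd hAcd (congrArg Subtype.val he))
  · refine show _ ∧ _ from ⟨?_, ?_⟩
    · intro he
      exact hρA.symm (span_divisor_inj hAd hρn (congrArg Subtype.val he))
    · show IsEssentialIdeal (Ideal.span {(A : ZMod n)} ⊔ Ideal.span {(ρ : ZMod n)})
      rw [sup_span_eq_top hcopAρ]
      exact essential_top
  · rintro (⟨hne, hess⟩ : _ ∧ _)
    have hle : Ideal.span {(A : ZMod n)} ⊔ Ideal.span {((A * c : ℕ) : ZMod n)} ≤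
        Ideal.span {(A : ZMod n)} := by
      apply sup_le le_rfl
      rw [Ideal.span_singleton_le_iff_mem]
      exact Ideal.mem_span_singleton.2 (Nat.cast_dvd_cast (dvd_mul_right A c))
    have hessA : IsEssentialIdeal (Ideal.span {(A : ZMod n)}) :=
      IsEssentialIdeal.mono hle hess
    have hBbot : (Ideal.span {(B : ZMod n)} : Ideal (ZMod n)) ≠ ⊥ :=
      span_divisor_ne_bot hBd (by omega)
    have hinf : Ideal.span {(A : ZMod n)} ⊓ Ideal.span {(B : ZMod n)} = ⊥ :=
      span_inf_span_eq_bot hAd hBd (by rw [Nat.Coprime.lcm_eq_mul hcop]; exact hAB)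
    exact hessA.2 _ hBbot hinf

end MainAux


/-- For composite `n ≥ 4` and `T` the number of nonzero proper ideals of
`ℤ/nℤ`, the metric dimension of the essential ideal graph equals `T - 1` iff `n` is a
prime power `p^m` with `m > 1` or a product of two distinct primes. -/
theorem stmt_9 (n : ℕ) (h4 : 4 ≤ n) (hcomp : ¬ n.Prime)
    (T : ℕ) (hT : T = Nat.card {I : Ideal (ZMod n) // I ≠ ⊥ ∧ I ≠ ⊤}) :
    metricDim (essentialIdealGraph (ZMod n)) = T - 1 ↔
      ((∃ p m : ℕ, p.Prime ∧ 1 < m ∧ n = p ^ m) ∨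
        (∃ p₁ p₂ : ℕ, p₁.Prime ∧ p₂.Prime ∧ p₁ ≠ p₂ ∧ n = p₁ * p₂)) := by
  haveI : NeZero n := ⟨by omega⟩
  haveI : Fact (1 < n) := ⟨by omega⟩
  haveI hfin : Finite (Ideal (ZMod n)) :=
    Finite.of_injective (fun I : Ideal (ZMod n) => (I : Set (ZMod n))) SetLike.coe_injective
  have hn0 : n ≠ 0 := by omega
  have hn1 : n ≠ 1 := by omega
  constructor
  · -- forward direction, by contradiction
    intro hdim
    by_contra hrhs
    rw [not_or] at hrhs
    obtain ⟨hP, hQ⟩ := hrhs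
    obtain ⟨p, hp, hpd⟩ := Nat.exists_prime_and_dvd hn1
    obtain ⟨a, ha⟩ : ∃ a, n.factorization p = a := ⟨_, rfl⟩
    obtain ⟨M, hM⟩ : ∃ M, ordCompl[p] n = M := ⟨_, rfl⟩
    have hpa : p ^ a * M = n := by
      rw [← ha, ← hM]
      exact Nat.ordProj_mul_ordCompl_eq_self n p
    have hcop : Nat.Coprime (p ^ a) M := by
      rw [← hM]
      exact Nat.Coprime.pow_left a (Nat.coprime_ordCompl hp hn0)
    have ha1 : 1 ≤ a := by
      rw [← ha]
      exact Nat.Prime.factorization_pos_of_dvd hp hn0 hpd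
    have hM0 : M ≠ 0 := by
      rintro rfl
      rw [mul_zero] at hpa
      omega
    have hM1 : M ≠ 1 := by
      rintro rfl
      rw [mul_one] at hpa
      have ha2 : 1 < a := by
        rcases Nat.lt_or_ge a 2 with h | h
        · have haa : a = 1 := by omega
          rw [haa, pow_one] at hpa
          exact absurd (hpa ▸ hp) hcomp
        · omega
      exact hP ⟨p, a, hp, ha2, hpa.symm⟩
    have htriple : ∃ u v w : {I : Ideal (ZMod n) // I ≠ ⊥ ∧ I ≠ ⊤}, u ≠ v ∧ w ≠ u ∧ w ≠ v ∧
        (essentialIdealGraph (ZMod n)).Adj w u ∧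
        ¬ (essentialIdealGraph (ZMod n)).Adj w v := by
      by_cases hMp : M.Prime
      · have hpM : p ≠ M := by
          intro he
          have hc : Nat.Coprime p M := Nat.Coprime.coprime_dvd_left (dvd_pow_self p (by omega)) hcop
          exact hp.ne_one (Nat.Coprime.eq_one_of_dvd hc (he ▸ dvd_rfl))
        have ha2 : 2 ≤ a := by
          by_contra hle
          push_neg at hle
          have haa : a = 1 := by omega
          refine hQ ⟨p, M, hp, hMp, hpM, ?_⟩
          rw [← hpa, haa, pow_one]
        refine exists_uvw n h4 (A := M) (B := p ^ a) (c := p) (ρ := p)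
          (by rw [mul_comm]; exact hpa) hcop.symm hMp.one_lt
          (dvd_pow_self p (by omega)) hp.one_lt ?_ hp (dvd_refl p)
        calc p = p ^ 1 := (pow_one p).symm
        _ < p ^ a := Nat.pow_lt_pow_right hp.one_lt (by omega)
      · obtain ⟨c, hcd, hc2, hclt⟩ := Nat.exists_dvd_of_not_prime2 (by omega) hMp
        obtain ⟨ρ, hρ, hρc⟩ := Nat.exists_prime_and_dvd (by omega : c ≠ 1)
        exact exists_uvw n h4 hpa hcop (Nat.one_lt_pow (by omega) hp.one_lt)
          hcd (by omega) hclt hρ hρc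
    obtain ⟨u, v, w, huv, hwu, hwv, hadj, hnadj⟩ := htriple
    have hle := metricDim_le_card_sub_two (essentialIdealGraph (ZMod n))
      (essential_conn n h4 hcomp) huv hwu hwv hadj hnadj
    have hcard : 1 < Nat.card {I : Ideal (ZMod n) // I ≠ ⊥ ∧ I ≠ ⊤} :=
      Finite.one_lt_card_iff_nontrivial.2 ⟨⟨u, v, huv⟩⟩
    rw [hT] at hdim
    omega
  · rintro (⟨p, m, hp, hm, hn⟩ | ⟨p₁, p₂, hp1, hp2, hnep, hn⟩)
    · -- prime power case
      subst hn
      have hm0 : m ≠ 0 := by omega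
      have hz : ((p ^ (m - 1) : ℕ) : ZMod (p ^ m)) ≠ 0 := by
        rw [Ne, ZMod.natCast_eq_zero_iff]
        intro hdvd
        have h1 := Nat.le_of_dvd (Nat.pow_pos hp.pos) hdvd
        have h2 : p ^ (m - 1) < p ^ m := Nat.pow_lt_pow_right hp.one_lt (by omega)
        omega
      have hallcontain : ∀ K : Ideal (ZMod (p ^ m)), K ≠ ⊥ →
          ((p ^ (m - 1) : ℕ) : ZMod (p ^ m)) ∈ K := by
        intro K hK
        obtain ⟨d, hd, rfl⟩ := exists_divisor_span _ K
        obtain ⟨j, hj, rfl⟩ := (Nat.dvd_prime_pow hp).1 hd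
        have hjm : j ≠ m := by
          rintro rfl
          exact hK (Ideal.span_singleton_eq_bot.2 (ZMod.natCast_self _))
        exact Ideal.mem_span_singleton.2 (Nat.cast_dvd_cast (pow_dvd_pow p (by omega)))
      have hcomplete : ∀ u v : {I : Ideal (ZMod (p ^ m)) // I ≠ ⊥ ∧ I ≠ ⊤}, u ≠ v →
          (essentialIdealGraph (ZMod (p ^ m))).Adj u v := by
        intro u v huv
        refine (show u ≠ v ∧ IsEssentialIdeal (u.1 ⊔ v.1) from ⟨huv, ?_, ?_⟩)
        · intro hb
          exact u.2.1 (le_bot_iff.1 (le_trans le_sup_left hb.le))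
        · intro J hJ hb
          apply hz
          have hmem : ((p ^ (m - 1) : ℕ) : ZMod (p ^ m)) ∈ (u.1 ⊔ v.1) ⊓ J :=
            Submodule.mem_inf.2
              ⟨(le_sup_left : u.1 ≤ u.1 ⊔ v.1) (hallcontain u.1 u.2.1), hallcontain J hJ⟩
          rw [hb] at hmem
          exact (Submodule.mem_bot _).1 hmem
      haveI : Nonempty {I : Ideal (ZMod (p ^ m)) // I ≠ ⊥ ∧ I ≠ ⊤} := by
        refine ⟨⟨Ideal.span {(p : ZMod (p ^ m))}, ?_, ?_⟩⟩
        · apply span_divisor_ne_bot (dvd_pow_self p hm0)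
          have : p ^ 1 < p ^ m := Nat.pow_lt_pow_right hp.one_lt (by omega)
          rw [pow_one] at this
          omega
        · exact span_divisor_ne_top (dvd_pow_self p hm0) hp.ne_one
      rw [hT]
      exact metricDim_eq_card_sub_one_of_complete _ hcomplete
    · -- product of two distinct primes
      subst hn
      have hcop : Nat.Coprime p₁ p₂ := (Nat.coprime_primes hp1 hp2).2 hnep
      have hp1d : p₁ ∣ p₁ * p₂ := dvd_mul_right _ _
      have hp2d : p₂ ∣ p₁ * p₂ := dvd_mul_left _ _
      have hp1lt : p₁ < p₁ * p₂ := by nlinarith [hp1.two_le, hp2.two_le]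
      have hp2lt : p₂ < p₁ * p₂ := by nlinarith [hp1.two_le, hp2.two_le]
      have hvert : ∀ u : {I : Ideal (ZMod (p₁ * p₂)) // I ≠ ⊥ ∧ I ≠ ⊤},
          u.1 = Ideal.span {(p₁ : ZMod (p₁ * p₂))} ∨
          u.1 = Ideal.span {(p₂ : ZMod (p₁ * p₂))} := by
        intro u
        obtain ⟨d, hd, hspan⟩ := exists_divisor_span _ u.1
        by_cases h1 : p₁ ∣ d <;> by_cases h2 : p₂ ∣ d
        · exfalso
          have hnd : p₁ * p₂ ∣ d := Nat.Coprime.mul_dvd_of_dvd_of_dvd hcop h1 h2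
          apply u.2.1
          rw [hspan]
          rw [Ideal.span_singleton_eq_bot, ZMod.natCast_eq_zero_iff]
          exact hnd
        · left
          obtain ⟨e, rfl⟩ := h1
          have he2 : e ∣ p₂ := (mul_dvd_mul_iff_left (Nat.pos_of_ne_zero hp1.pos.ne' : (0:ℕ) < p₁).ne').1 hd
          rcases Nat.Prime.eq_one_or_self_of_dvd hp2 e he2 with rfl | rfl
          · rw [mul_one] at hspan
            exact hspan
          · exact absurd (dvd_mul_left _ _) h2
        · right
          obtain ⟨e, rfl⟩ := h2
          have he1 : e ∣ p₁ := by
            have hd' : p₂ * e ∣ p₂ * p₁ := by rwa [mul_comm p₁ p₂] at hd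
            exact (mul_dvd_mul_iff_left (Nat.pos_of_ne_zero hp2.pos.ne' : (0:ℕ) < p₂).ne').1 hd'
          rcases Nat.Prime.eq_one_or_self_of_dvd hp1 e he1 with rfl | rfl
          · rw [mul_one] at hspan
            exact hspan
          · exact absurd (dvd_mul_left _ _) h1
        · exfalso
          apply u.2.2
          rw [hspan, Ideal.span_singleton_eq_top, ZMod.isUnit_iff_coprime]
          exact Nat.Coprime.mul_right ((hp1.coprime_iff_not_dvd.2 h1).symm)
            ((hp2.coprime_iff_not_dvd.2 h2).symm)
      have hcomplete : ∀ u v : {I : Ideal (ZMod (p₁ * p₂)) // I ≠ ⊥ ∧ I ≠ ⊤}, u ≠ v →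
          (essentialIdealGraph (ZMod (p₁ * p₂))).Adj u v := by
        intro u v huv
        have hne' : u.1 ≠ v.1 := fun h => huv (Subtype.ext h)
        refine show _ ∧ _ from ⟨huv, ?_⟩
        rcases hvert u with h1 | h1 <;> rcases hvert v with h2 | h2
        · exact absurd (h1.trans h2.symm) hne'
        · rw [h1, h2, sup_span_eq_top hcop]
          exact essential_top
        · rw [h1, h2, sup_span_eq_top hcop.symm]
          exact essential_top
        · exact absurd (h1.trans h2.symm) hne'
      haveI : Nonempty {I : Ideal (ZMod (p₁ * p₂)) // I ≠ ⊥ ∧ I ≠ ⊤} :=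
        ⟨⟨Ideal.span {(p₁ : ZMod (p₁ * p₂))},
          span_divisor_ne_bot hp1d (by omega),
          span_divisor_ne_top hp1d hp1.ne_one⟩⟩
      rw [hT]
      exact metricDim_eq_card_sub_one_of_complete _ hcomplete
end

section
/- Let n = p_1^{m_1} p_2^{m_2} ⋯ p_k^{m_k} with p_1 < p_2 < ⋯ < p_k primes, k ≥ 2, and m_i > 1 for at least one i, and let T = ∏_{i=1}^{k}(m_i + 1) − 2 be the number of nonzero proper ideals of Z_n = Z/nZ. Then every resolving set of the essential ideal graph E_{Z_n} has cardinality at least T − (2^k − 1). -/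
set_option linter.unusedSectionVars false

section Arith
variable {k : ℕ} {p m : Fin k → ℕ} {n : ℕ}
  (hp : ∀ i, (p i).Prime) (hinj : Function.Injective p)
  (hm : ∀ i, 1 ≤ m i) (hn : n = ∏ i, p i ^ m i)

include hp hinj hm hn

lemma coprime_aux (i : Fin k) :
    Nat.Coprime (p i) (∏ j ∈ Finset.univ.erase i, p j ^ m j) := by
  apply Nat.Coprime.prod_right
  intro j hj
  have hij : p i ≠ p j := fun h => (Finset.mem_erase.mp hj).1 (hinj h).symm
  exact Nat.Coprime.pow_right _ (((Nat.coprime_primes (hp i) (hp j)).mpr hij))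

lemma n_eq (i : Fin k) :
    n = p i ^ m i * ∏ j ∈ Finset.univ.erase i, p j ^ m j := by
  rw [hn, ← Finset.mul_prod_erase _ _ (Finset.mem_univ i)]

lemma n_div_p (i : Fin k) :
    n / p i = p i ^ (m i - 1) * ∏ j ∈ Finset.univ.erase i, p j ^ m j := by
  have h := n_eq hp hinj hm hn i
  have hmi := hm i
  have : n = p i * (p i ^ (m i - 1) * ∏ j ∈ Finset.univ.erase i, p j ^ m j) := by
    rw [h, ← mul_assoc, ← pow_succ']
    congr 2
    omega
  rw [this, Nat.mul_div_cancel_left _ (hp i).pos]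

lemma npos : 0 < n := by
  rw [hn]
  exact Finset.prod_pos fun i _ => pow_pos (hp i).pos _

lemma p_dvd_n (i : Fin k) : p i ^ m i ∣ n := by
  rw [hn]; exact Finset.dvd_prod_of_mem _ (Finset.mem_univ i)

lemma ndivp_dvd_n (i : Fin k) : n / p i ∣ n :=
  Nat.div_dvd_of_dvd ((dvd_pow_self (p i) (Nat.one_le_iff_ne_zero.mp (hm i))).trans (p_dvd_n hp hinj hm hn i))

lemma ndivp_pos (i : Fin k) : 0 < n / p i :=
  Nat.div_pos (Nat.le_of_dvd (npos hp hinj hm hn)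
    ((dvd_pow_self (p i) (Nat.one_le_iff_ne_zero.mp (hm i))).trans (p_dvd_n hp hinj hm hn i))) (hp i).pos

lemma ndivp_lt_n (i : Fin k) : n / p i < n :=
  Nat.div_lt_self (npos hp hinj hm hn) (hp i).one_lt

-- L2a
lemma dvd_ndivp {g : ℕ} (i : Fin k) (hg : g ∣ n) (hnd : ¬ p i ^ m i ∣ g) :
    g ∣ n / p i := by
  rw [n_eq hp hinj hm hn i] at hg
  obtain ⟨d1, d2, hd1, hd2, rfl⟩ := Nat.dvd_mul.mp hg
  obtain ⟨a, ha, rfl⟩ := (Nat.dvd_prime_pow (hp i)).mp hd1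
  have ha' : a ≤ m i - 1 := by
    rcases Nat.lt_or_ge a (m i) with h | h
    · omega
    · exact absurd (dvd_mul_of_dvd_left (pow_dvd_pow _ (by omega : m i ≤ a)) d2) hnd
  rw [n_div_p hp hinj hm hn i]
  exact Nat.mul_dvd_mul (pow_dvd_pow _ ha') hd2

lemma not_pm_dvd_ndivp (i : Fin k) : ¬ p i ^ m i ∣ n / p i := by
  rw [n_div_p hp hinj hm hn i]
  intro h
  have hm1 := hm i
  have h' : p i ^ (m i - 1) * p i ∣ p i ^ (m i - 1) * ∏ j ∈ Finset.univ.erase i, p j ^ m j := by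
    have : p i ^ (m i - 1) * p i = p i ^ m i := by
      rw [← pow_succ]; congr 1; omega
    rwa [this]
  have hpd : p i ∣ ∏ j ∈ Finset.univ.erase i, p j ^ m j :=
    (mul_dvd_mul_iff_left (pow_ne_zero _ (hp i).pos.ne')).mp h'
  exact (hp i).ne_one ((coprime_aux hp hinj hm hn i).eq_one_of_dvd hpd)

omit hm hn in
lemma prod_dvd_aux {v : ℕ} (s : Finset (Fin k)) (h : ∀ i, p i ^ m i ∣ v) :
    (∏ i ∈ s, p i ^ m i) ∣ v := by
  classical
  induction s using Finset.induction with
  | empty => simp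
  | @insert a s' hx ih =>
    rw [Finset.prod_insert hx]
    have hcop : Nat.Coprime (p a ^ m a) (∏ i ∈ s', p i ^ m i) := by
      apply Nat.Coprime.prod_right
      intro j hj
      have : p a ≠ p j := fun hh => hx ((hinj hh) ▸ hj)
      exact Nat.Coprime.pow _ _ ((Nat.coprime_primes (hp a) (hp j)).mpr this)
    exact hcop.mul_dvd_of_dvd_of_dvd (h a) ih

lemma n_dvd_of_forall {v : ℕ} (h : ∀ i, p i ^ m i ∣ v) : n ∣ v := by
  rw [hn]
  exact prod_dvd_aux hp hinj Finset.univ h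
end Arith

lemma zmod_dvd_iff {n : ℕ} [NeZero n] (x y : ZMod n) :
    x ∣ y ↔ Nat.gcd x.val n ∣ y.val := by
  constructor
  · rintro ⟨c, rfl⟩
    rw [ZMod.val_mul]
    exact (Nat.dvd_mod_iff (Nat.gcd_dvd_right _ _)).mpr
      (Dvd.dvd.mul_right (Nat.gcd_dvd_left _ _) _)
  · rintro ⟨t, ht⟩
    have bez : (Nat.gcd x.val n : ℤ) = x.val * Nat.gcdA x.val n + n * Nat.gcdB x.val n :=
      Nat.gcd_eq_gcd_ab x.val n
    have h1 : ((Nat.gcd x.val n : ℕ) : ZMod n) = x * ((Nat.gcdA x.val n : ℤ) : ZMod n) := by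
      have h := congrArg (fun z : ℤ => (z : ZMod n)) bez
      push_cast at h
      rw [ZMod.natCast_self, ZMod.natCast_val, ZMod.cast_id] at h
      simpa using h
    refine ⟨((Nat.gcdA x.val n : ℤ) : ZMod n) * (t : ℕ), ?_⟩
    have h2 : (y.val : ZMod n) = y := by rw [ZMod.natCast_val, ZMod.cast_id]
    rw [← h2, ht]
    push_cast
    rw [h1]
    ring

lemma mem_of_dvd' {n : ℕ} {I : Ideal (ZMod n)} {x y : ZMod n} (hx : x ∈ I) (h : x ∣ y) :
    y ∈ I := by
  obtain ⟨c, rfl⟩ := h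
  exact I.mul_mem_right c hx

section ZM
variable {k : ℕ} {p m : Fin k → ℕ} {n : ℕ} [NeZero n]
  (hp : ∀ i, (p i).Prime) (hinj : Function.Injective p)
  (hm : ∀ i, 1 ≤ m i) (hn : n = ∏ i, p i ^ m i)

include hp hinj hm hn

lemma e_val (i : Fin k) : (((n / p i : ℕ) : ZMod n)).val = n / p i := by
  rw [ZMod.val_natCast, Nat.mod_eq_of_lt (ndivp_lt_n hp hinj hm hn i)]

lemma e_ne_zero (i : Fin k) : ((n / p i : ℕ) : ZMod n) ≠ 0 := by
  intro h
  have := e_val hp hinj hm hn i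
  rw [h, ZMod.val_zero] at this
  exact (ndivp_pos hp hinj hm hn i).ne this

-- L2 (contrapositive form)
lemma mem_e_of_exists {I : Ideal (ZMod n)} (i : Fin k)
    (h : ∃ x ∈ I, ¬ p i ^ m i ∣ x.val) : ((n / p i : ℕ) : ZMod n) ∈ I := by
  obtain ⟨x, hxI, hxd⟩ := h
  have hg1 : ¬ p i ^ m i ∣ Nat.gcd x.val n := fun hd => hxd (hd.trans (Nat.gcd_dvd_left _ _))
  have hg2 : Nat.gcd x.val n ∣ n / p i := dvd_ndivp hp hinj hm hn i (Nat.gcd_dvd_right _ _) hg1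
  have : x ∣ ((n / p i : ℕ) : ZMod n) := by
    rw [zmod_dvd_iff, e_val hp hinj hm hn i]
    exact hg2
  exact mem_of_dvd' hxI this

lemma pm_dvd_of_not_mem {I : Ideal (ZMod n)} (i : Fin k)
    (h : ((n / p i : ℕ) : ZMod n) ∉ I) : ∀ x ∈ I, p i ^ m i ∣ x.val := by
  intro x hx
  by_contra hc
  exact h (mem_e_of_exists hp hinj hm hn i ⟨x, hx, hc⟩)

-- L3
lemma essential_iff {K : Ideal (ZMod n)} (hk : 1 ≤ k) :
    IsEssentialIdeal K ↔ ∀ i, ((n / p i : ℕ) : ZMod n) ∈ K := by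
  constructor
  · rintro ⟨hKb, hK⟩ i
    set e : ZMod n := ((n / p i : ℕ) : ZMod n) with he
    have hJ : Ideal.span {e} ≠ ⊥ := by
      simp only [ne_eq, Ideal.span_singleton_eq_bot]
      exact e_ne_zero hp hinj hm hn i
    have := hK _ hJ
    rw [Submodule.ne_bot_iff] at this
    obtain ⟨x, hx, hx0⟩ := this
    obtain ⟨hxK, hxJ⟩ := Submodule.mem_inf.mp hx
    -- x ∈ span {e} : e ∣ x
    have hex : e ∣ x := Ideal.mem_span_singleton.mp hxJ
    have hnp : n / p i ∣ x.val := by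
      have := (zmod_dvd_iff e x).mp hex
      rwa [e_val hp hinj hm hn i, Nat.gcd_eq_left (ndivp_dvd_n hp hinj hm hn i)] at this
    -- show gcd(x.val, n) divides n / p i
    have hgnd : ¬ p i ^ m i ∣ Nat.gcd x.val n := by
      intro hd
      have h1 : p i ^ m i ∣ x.val := hd.trans (Nat.gcd_dvd_left _ _)
      have h2 : (∏ j ∈ Finset.univ.erase i, p j ^ m j) ∣ x.val := by
        refine dvd_trans ?_ hnp
        rw [n_div_p hp hinj hm hn i]
        exact Dvd.intro_left _ rfl
      have hcop : Nat.Coprime (p i ^ m i) (∏ j ∈ Finset.univ.erase i, p j ^ m j) :=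
        Nat.Coprime.pow_left _ (coprime_aux hp hinj hm hn i)
      have : n ∣ x.val := by
        have h3 := hcop.mul_dvd_of_dvd_of_dvd h1 h2
        rwa [← n_eq hp hinj hm hn i] at h3
      have : x.val = 0 := Nat.eq_zero_of_dvd_of_lt this x.val_lt
      exact hx0 ((ZMod.val_eq_zero x).mp this)
    have hgd : Nat.gcd x.val n ∣ n / p i :=
      dvd_ndivp hp hinj hm hn i (Nat.gcd_dvd_right _ _) hgnd
    have : x ∣ e := by
      rw [zmod_dvd_iff, e_val hp hinj hm hn i]; exact hgd
    exact mem_of_dvd' hxK this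
  · intro hA
    constructor
    · intro hb
      exact e_ne_zero hp hinj hm hn ⟨0, hk⟩ (by simpa [hb] using hA ⟨0, hk⟩)
    · intro J hJ
      rw [Submodule.ne_bot_iff] at hJ
      obtain ⟨x, hxJ, hx0⟩ := hJ
      have hval : x.val ≠ 0 := fun h => hx0 ((ZMod.val_eq_zero x).mp h)
      have hglt : Nat.gcd x.val n < n :=
        lt_of_le_of_lt (Nat.le_of_dvd (Nat.pos_of_ne_zero hval) (Nat.gcd_dvd_left _ _)) x.val_lt
      have : ∃ i, ¬ p i ^ m i ∣ Nat.gcd x.val n := by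
        by_contra hc
        push_neg at hc
        have hdvd := n_dvd_of_forall hp hinj hm hn hc
        have hgpos : 0 < Nat.gcd x.val n := Nat.gcd_pos_of_pos_right _ (npos hp hinj hm hn)
        exact absurd (Nat.le_of_dvd hgpos hdvd) (not_le.mpr hglt)
      obtain ⟨i, hi⟩ := this
      have hgd : Nat.gcd x.val n ∣ n / p i :=
        dvd_ndivp hp hinj hm hn i (Nat.gcd_dvd_right _ _) hi
      have hxe : x ∣ ((n / p i : ℕ) : ZMod n) := by
        rw [zmod_dvd_iff, e_val hp hinj hm hn i]; exact hgd
      intro hb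
      have : ((n / p i : ℕ) : ZMod n) ∈ K ⊓ J :=
        Submodule.mem_inf.mpr ⟨hA i, mem_of_dvd' hxJ hxe⟩
      rw [hb] at this
      exact e_ne_zero hp hinj hm hn i (by simpa using this)

-- L4
lemma mem_sup_iff {I J : Ideal (ZMod n)} (i : Fin k) :
    ((n / p i : ℕ) : ZMod n) ∈ I ⊔ J ↔
      ((n / p i : ℕ) : ZMod n) ∈ I ∨ ((n / p i : ℕ) : ZMod n) ∈ J := by
  constructor
  · intro h
    by_contra hc
    push_neg at hc
    obtain ⟨h1, h2⟩ := hc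
    obtain ⟨a, ha, b, hb, hab⟩ := Submodule.mem_sup.mp h
    have d1 := pm_dvd_of_not_mem hp hinj hm hn i h1 a ha
    have d2 := pm_dvd_of_not_mem hp hinj hm hn i h2 b hb
    have : p i ^ m i ∣ (a + b).val := by
      rw [ZMod.val_add]
      exact (Nat.dvd_mod_iff ((p_dvd_n hp hinj hm hn i))).mpr (Nat.dvd_add d1 d2)
    rw [hab, e_val hp hinj hm hn i] at this
    exact not_pm_dvd_ndivp hp hinj hm hn i this
  · rintro (h | h)
    · exact Submodule.mem_sup_left h
    · exact Submodule.mem_sup_right h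

end ZM

lemma iso_dist_le_s10 {V : Type*} {G : SimpleGraph V} (f : G ≃g G) (a b : V) :
    G.dist (f a) (f b) ≤ G.dist a b := by
  by_cases h : G.Reachable a b
  · obtain ⟨w, hw⟩ := h.exists_walk_length_eq_dist
    calc G.dist (f a) (f b) ≤ (w.map f.toHom).length := SimpleGraph.dist_le _
      _ = w.length := SimpleGraph.Walk.length_map _ _
      _ = _ := hw
  · have h2 : ¬ G.Reachable (f a) (f b) := by
      intro hr
      exact h (by simpa using hr.map f.symm.toHom)
    rw [SimpleGraph.dist_eq_zero_of_not_reachable h,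
      SimpleGraph.dist_eq_zero_of_not_reachable h2]

lemma iso_dist_eq_s10 {V : Type*} {G : SimpleGraph V} (f : G ≃g G) (a b : V) :
    G.dist (f a) (f b) = G.dist a b := by
  refine le_antisymm (iso_dist_le_s10 f a b) ?_
  have := iso_dist_le_s10 f.symm (f a) (f b)
  simpa using this

-- counting divisors
lemma card_divisors_eq {k : ℕ} {p m : Fin k → ℕ}
    (hp : ∀ i, (p i).Prime) (hinj : Function.Injective p) :
    (∏ i, p i ^ m i).divisors.card = ∏ i, (m i + 1) := by
  classical
  have : ∀ s : Finset (Fin k), (∏ i ∈ s, p i ^ m i).divisors.card = ∏ i ∈ s, (m i + 1) := by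
    intro s
    induction s using Finset.induction with
    | empty => simp
    | @insert a s' hx ih =>
      rw [Finset.prod_insert hx, Finset.prod_insert hx]
      have hcop : Nat.Coprime (p a ^ m a) (∏ i ∈ s', p i ^ m i) := by
        apply Nat.Coprime.prod_right
        intro j hj
        have hne : p a ≠ p j := fun hh => hx ((hinj hh) ▸ hj)
        exact Nat.Coprime.pow _ _ ((Nat.coprime_primes (hp a) (hp j)).mpr hne)
      rw [hcop.card_divisors_mul, ih]
      congr 1
      rw [Nat.divisors_prime_pow (hp a), Finset.card_map, Finset.card_range]
  exact this Finset.univ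

section Count
variable {k : ℕ} {p m : Fin k → ℕ} {n : ℕ} [NeZero n]
  (hp : ∀ i, (p i).Prime) (hinj : Function.Injective p)
  (hm : ∀ i, 1 ≤ m i) (hn : n = ∏ i, p i ^ m i)

include hp hinj hm hn

lemma card_V (hk : 1 ≤ k) :
    Nat.card {I : Ideal (ZMod n) // I ≠ ⊥ ∧ I ≠ ⊤} = (∏ i, (m i + 1)) - 2 := by
  classical
  have hn0 : 0 < n := npos hp hinj hm hn
  have hn1 : 1 < n :=
    lt_of_le_of_lt (ndivp_pos hp hinj hm hn ⟨0, hk⟩) (ndivp_lt_n hp hinj hm hn ⟨0, hk⟩)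
  haveI : IsPrincipalIdealRing (ZMod n) :=
    IsPrincipalIdealRing.of_surjective (Int.castRingHom (ZMod n)) ZMod.intCast_surjective
  set D : Finset ℕ := n.divisors \ {1, n} with hD
  have hmemD : ∀ d ∈ D, d ∣ n ∧ d ≠ 1 ∧ d ≠ n := by
    intro d hd
    rw [hD, Finset.mem_sdiff, Nat.mem_divisors] at hd
    simp only [Finset.mem_insert, Finset.mem_singleton] at hd
    exact ⟨hd.1.1, fun h => hd.2 (Or.inl h), fun h => hd.2 (Or.inr h)⟩
  have hlt : ∀ d ∈ D, d < n := fun d hd =>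
    lt_of_le_of_ne (Nat.le_of_dvd hn0 (hmemD d hd).1) (hmemD d hd).2.2
  have hvald : ∀ d ∈ D, ((d : ℕ) : ZMod n).val = d := fun d hd => by
    rw [ZMod.val_natCast, Nat.mod_eq_of_lt (hlt d hd)]
  have hval1 : (1 : ZMod n).val = 1 := ZMod.val_one'' (by omega)
  have hF : ∀ d : {d // d ∈ D},
      Ideal.span {((d.1 : ℕ) : ZMod n)} ≠ ⊥ ∧ Ideal.span {((d.1 : ℕ) : ZMod n)} ≠ ⊤ := by
    rintro ⟨d, hd⟩
    obtain ⟨hdvd, hne1, hnen⟩ := hmemD d hd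
    constructor
    · rw [ne_eq, Ideal.span_singleton_eq_bot, ZMod.natCast_eq_zero_iff]
      intro hnd
      have hdpos : 0 < d := by
        rcases Nat.eq_zero_or_pos d with rfl | h
        · rw [zero_dvd_iff] at hdvd; omega
        · exact h
      exact absurd (Nat.le_of_dvd hdpos hnd) (not_le.mpr (hlt d hd))
    · intro htop
      have h1 : (1 : ZMod n) ∈ Ideal.span {((d : ℕ) : ZMod n)} := htop ▸ Submodule.mem_top
      have hdd : ((d : ℕ) : ZMod n) ∣ 1 := Ideal.mem_span_singleton.mp h1
      have := (zmod_dvd_iff _ _).mp hdd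
      rw [hvald d hd, hval1, Nat.gcd_eq_left hdvd] at this
      exact hne1 (Nat.eq_one_of_dvd_one this)
  set F : {d // d ∈ D} → {I : Ideal (ZMod n) // I ≠ ⊥ ∧ I ≠ ⊤} :=
    fun d => ⟨Ideal.span {((d.1 : ℕ) : ZMod n)}, hF d⟩ with hFdef
  have hFinj : Function.Injective F := by
    rintro ⟨d, hd⟩ ⟨e, he⟩ h
    have hsp : Ideal.span {((d : ℕ) : ZMod n)} = Ideal.span {((e : ℕ) : ZMod n)} :=
      congrArg Subtype.val h
    have h1 : ((e : ℕ) : ZMod n) ∣ ((d : ℕ) : ZMod n) :=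
      Ideal.span_singleton_le_span_singleton.mp hsp.le
    have h2 : ((d : ℕ) : ZMod n) ∣ ((e : ℕ) : ZMod n) :=
      Ideal.span_singleton_le_span_singleton.mp hsp.ge
    have h1' := (zmod_dvd_iff _ _).mp h1
    have h2' := (zmod_dvd_iff _ _).mp h2
    rw [hvald e he, hvald d hd, Nat.gcd_eq_left (hmemD e he).1] at h1'
    rw [hvald d hd, hvald e he, Nat.gcd_eq_left (hmemD d hd).1] at h2'
    exact Subtype.ext (Nat.dvd_antisymm h2' h1')
  have hFsurj : Function.Surjective F := by
    rintro ⟨I, hIb, hIt⟩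
    obtain ⟨x, hx⟩ := (IsPrincipalIdealRing.principal I).principal
    set g := Nat.gcd x.val n with hg
    have hgdvd : g ∣ n := Nat.gcd_dvd_right _ _
    have hgn : g ≠ n := by
      intro h
      have : n ∣ x.val := dvd_trans (dvd_of_eq h.symm) (Nat.gcd_dvd_left x.val n)
      have hx0 : x.val = 0 := Nat.eq_zero_of_dvd_of_lt this x.val_lt
      have hx0' : x = 0 := (ZMod.val_eq_zero x).mp hx0
      apply hIb
      rw [hx, hx0']
      simp
    have hglt : g < n := lt_of_le_of_ne (Nat.le_of_dvd hn0 hgdvd) hgn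
    have hgval : ((g : ℕ) : ZMod n).val = g := by
      rw [ZMod.val_natCast, Nat.mod_eq_of_lt hglt]
    have hspan : I = Ideal.span {((g : ℕ) : ZMod n)} := by
      have hle1 : I ≤ Ideal.span {((g : ℕ) : ZMod n)} := by
        rw [hx, Ideal.submodule_span_eq, Ideal.span_singleton_le_span_singleton]
        rw [zmod_dvd_iff, hgval, Nat.gcd_eq_left hgdvd]
        exact Nat.gcd_dvd_left _ _
      have hle2 : Ideal.span {((g : ℕ) : ZMod n)} ≤ I := by
        rw [hx, Ideal.submodule_span_eq, Ideal.span_singleton_le_span_singleton]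
        rw [zmod_dvd_iff, hgval]
      exact le_antisymm hle1 hle2
    have hg1 : g ≠ 1 := by
      intro h
      apply hIt
      rw [hspan, h, Nat.cast_one, Ideal.span_singleton_eq_top]
      exact isUnit_one
    have hgD : g ∈ D := by
      rw [hD, Finset.mem_sdiff, Nat.mem_divisors]
      simp only [Finset.mem_insert, Finset.mem_singleton]
      exact ⟨⟨hgdvd, hn0.ne'⟩, by tauto⟩
    exact ⟨⟨g, hgD⟩, Subtype.ext hspan.symm⟩
  have hcardeq : Nat.card {I : Ideal (ZMod n) // I ≠ ⊥ ∧ I ≠ ⊤} = D.card := by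
    rw [Nat.card_congr (Equiv.ofBijective F ⟨hFinj, hFsurj⟩).symm]
    exact Nat.card_eq_finsetCard D
  rw [hcardeq, hD, Finset.card_sdiff_of_subset (by
      intro x hx
      simp only [Finset.mem_insert, Finset.mem_singleton] at hx
      rcases hx with rfl | rfl
      · exact Nat.one_mem_divisors.mpr hn0.ne'
      · exact Nat.mem_divisors_self _ hn0.ne')]
  rw [Finset.card_insert_of_notMem (by simp; omega), Finset.card_singleton]
  rw [hn, card_divisors_eq hp hinj]

end Count

/-- For `n = p₁^{m₁} ⋯ p_k^{m_k}` with `k ≥ 2` distinct primes and some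
`mᵢ > 1`, every resolving set of the essential ideal graph of `ℤ/nℤ` has cardinality at
least `T - (2^k - 1)`, where `T = ∏ (mᵢ + 1) - 2`. -/
theorem stmt_10 (k : ℕ) (hk : 2 ≤ k) (p : Fin k → ℕ) (m : Fin k → ℕ)
    (hp : ∀ i, (p i).Prime) (hmono : StrictMono p)
    (hm : ∀ i, 1 ≤ m i) (hsome : ∃ i, 1 < m i)
    (n : ℕ) (hn : n = ∏ i, p i ^ m i)
    (T : ℕ) (hT : T = (∏ i, (m i + 1)) - 2)
    (W : Set {I : Ideal (ZMod n) // I ≠ ⊥ ∧ I ≠ ⊤})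
    (hW : IsResolvingSet (essentialIdealGraph (ZMod n)) W) :
    T - (2 ^ k - 1) ≤ W.ncard := by
  classical
  have hinj : Function.Injective p := hmono.injective
  have hn0 : 0 < n := hn ▸ Finset.prod_pos fun i _ => pow_pos (hp i).pos _
  haveI : NeZero n := ⟨hn0.ne'⟩
  haveI : Finite (Ideal (ZMod n)) :=
    Finite.of_injective (fun I : Ideal (ZMod n) => (I : Set (ZMod n))) SetLike.coe_injective
  have hk1 : 1 ≤ k := by omega
  set G := essentialIdealGraph (ZMod n) with hG
  set e : Fin k → ZMod n := fun i => ((n / p i : ℕ) : ZMod n) with he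
  have key : ∀ a b : {I : Ideal (ZMod n) // I ≠ ⊥ ∧ I ≠ ⊤}, G.Adj a b ↔
      (a ≠ b ∧ ∀ i, e i ∈ a.1 ∨ e i ∈ b.1) := by
    intro a b
    have h0 : G.Adj a b ↔ (a ≠ b ∧ IsEssentialIdeal (a.1 ⊔ b.1)) := Iff.rfl
    rw [h0, essential_iff hp hinj hm hn hk1]
    exact and_congr_right fun _ => forall_congr' fun i => mem_sup_iff hp hinj hm hn i
  have twin : ∀ u v : {I : Ideal (ZMod n) // I ≠ ⊥ ∧ I ≠ ⊤}, u ≠ v →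
      (∀ i, (e i ∈ u.1 ↔ e i ∈ v.1)) → u ∈ W ∨ v ∈ W := by
    intro u v huv hsame
    set σ := Equiv.swap u v with hσ
    have hfix : ∀ x i, (e i ∈ (σ x).1 ↔ e i ∈ x.1) := by
      intro x i
      rcases eq_or_ne x u with rfl | hxu
      · rw [hσ, Equiv.swap_apply_left]; exact (hsame i).symm
      rcases eq_or_ne x v with rfl | hxv
      · rw [hσ, Equiv.swap_apply_right]; exact hsame i
      · rw [hσ, Equiv.swap_apply_of_ne_of_ne hxu hxv]
    have hmap : ∀ a b, G.Adj (σ a) (σ b) ↔ G.Adj a b := by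
      intro a b
      rw [key, key]
      exact and_congr (σ.injective.ne_iff)
        (forall_congr' fun i => or_congr (hfix a i) (hfix b i))
    obtain ⟨w, hwW, hwd⟩ := hW u v huv
    rcases eq_or_ne w u with rfl | hwu
    · exact Or.inl hwW
    rcases eq_or_ne w v with rfl | hwv
    · exact Or.inr hwW
    · exfalso
      apply hwd
      have h1 : G.dist (σ u) (σ w) = G.dist u w :=
        iso_dist_eq_s10 (⟨σ, fun {a b} => hmap a b⟩ : G ≃g G) u w
      rw [Equiv.swap_apply_left, Equiv.swap_apply_of_ne_of_ne hwu hwv] at h1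
      exact h1.symm
  have hne_tau : ∀ x : {I : Ideal (ZMod n) // I ≠ ⊥ ∧ I ≠ ⊤}, ∃ i, e i ∈ x.1 := by
    intro x
    by_contra hc
    push_neg at hc
    obtain ⟨y, hy, hy0⟩ := (Submodule.ne_bot_iff _).mp x.2.1
    have hdvd : ∀ i, p i ^ m i ∣ y.val := fun i =>
      pm_dvd_of_not_mem hp hinj hm hn i (hc i) y hy
    have hnd := n_dvd_of_forall hp hinj hm hn hdvd
    have : y.val = 0 := Nat.eq_zero_of_dvd_of_lt hnd y.val_lt
    exact hy0 ((ZMod.val_eq_zero y).mp this)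
  set τ : {I : Ideal (ZMod n) // I ≠ ⊥ ∧ I ≠ ⊤} → Finset (Fin k) :=
    fun x => Finset.univ.filter (fun i => e i ∈ x.1) with hτ
  have hinjW : Set.InjOn τ Wᶜ := by
    intro u hu v hv huvτ
    by_contra hne
    have hiff : ∀ i, (e i ∈ u.1 ↔ e i ∈ v.1) := by
      intro i
      have := Finset.ext_iff.mp huvτ i
      simpa [hτ] using this
    rcases twin u v hne hiff with h | h
    · exact hu h
    · exact hv h
  have himg : τ '' Wᶜ ⊆ {s : Finset (Fin k) | s.Nonempty} := by
    rintro s ⟨x, _, rfl⟩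
    obtain ⟨i, hi⟩ := hne_tau x
    exact ⟨i, by simp [hτ, hi]⟩
  have hcount : (Wᶜ : Set _).ncard ≤ 2 ^ k - 1 := by
    have h1 : (Wᶜ : Set _).ncard = (τ '' Wᶜ).ncard := (Set.ncard_image_of_injOn hinjW).symm
    have h2 : (τ '' Wᶜ).ncard ≤ ({s : Finset (Fin k) | s.Nonempty} : Set _).ncard :=
      Set.ncard_le_ncard himg (Set.toFinite _)
    have h3 : ({s : Finset (Fin k) | s.Nonempty} : Set _).ncard = 2 ^ k - 1 := by
      have huniv : ({s : Finset (Fin k) | s.Nonempty} : Set _) = Set.univ \ {∅} := by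
        ext s; simp [Finset.nonempty_iff_ne_empty]
      rw [huniv, Set.ncard_diff (Set.subset_univ _), Set.ncard_univ, Set.ncard_singleton,
        Nat.card_eq_fintype_card, Fintype.card_finset, Fintype.card_fin]
    omega
  have htot := Set.ncard_add_ncard_compl W
  have hcV : Nat.card {I : Ideal (ZMod n) // I ≠ ⊥ ∧ I ≠ ⊤} = (∏ i, (m i + 1)) - 2 :=
    card_V hp hinj hm hn hk1
  rw [hcV] at htot
  subst hT
  have hpow : 1 ≤ 2 ^ k := Nat.one_le_two_pow
  omega
end

section
/- Let n = p_1^{m_1} p_2^{m_2} ⋯ p_k^{m_k} with p_1 < p_2 < ⋯ < p_k primes, k ≥ 2, and m_i > 1 for exactly one index i, and let T = ∏_{i=1}^{k}(m_i + 1) − 2 be the number of nonzero proper ideals of Z_n = Z/nZ. Then the metric dimension of the essential ideal graph E_{Z_n} equals T − (2^k − 2). -/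
namespace Stmt12aux

section
variable {n : ℕ} [NeZero n]

lemma mem_span_iff {d : ℕ} (hd : d ∣ n) (x : ZMod n) :
    x ∈ Ideal.span {(d : ZMod n)} ↔ d ∣ x.val := by
  rw [Ideal.mem_span_singleton]
  constructor
  · rintro ⟨c, rfl⟩
    rw [ZMod.val_mul, ZMod.val_natCast]
    exact (Nat.dvd_mod_iff hd).mpr (Dvd.dvd.mul_right ((Nat.dvd_mod_iff hd).mpr dvd_rfl) _)
  · rintro ⟨c, hc⟩
    refine ⟨(c : ZMod n), ?_⟩
    have h2 := ZMod.natCast_rightInverse (n := n) x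
    rw [← h2, hc]
    push_cast; ring

lemma span_le_iff {d e : ℕ} (hd : d ∣ n) (he : e ∣ n) :
    Ideal.span {(e : ZMod n)} ≤ Ideal.span {(d : ZMod n)} ↔ d ∣ e := by
  constructor
  · intro h
    have := h (Ideal.subset_span rfl)
    rw [mem_span_iff hd, ZMod.val_natCast] at this
    exact (Nat.dvd_mod_iff hd).mp this
  · intro h
    rw [Ideal.span_singleton_le_span_singleton]
    exact_mod_cast Nat.cast_dvd_cast h

lemma span_inj {d e : ℕ} (hd : d ∣ n) (he : e ∣ n)
    (h : Ideal.span {(d : ZMod n)} = Ideal.span {(e : ZMod n)}) : d = e :=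
  Nat.dvd_antisymm ((span_le_iff hd he).mp h.ge) ((span_le_iff he hd).mp h.le)

lemma span_eq_bot_iff {d : ℕ} (hd : d ∣ n) :
    Ideal.span {(d : ZMod n)} = ⊥ ↔ d = n := by
  rw [Ideal.span_singleton_eq_bot, ZMod.natCast_eq_zero_iff]
  exact ⟨fun h => Nat.dvd_antisymm hd h, fun h => h ▸ dvd_rfl⟩

lemma span_eq_top_iff (hn : 1 < n) {d : ℕ} (hd : d ∣ n) :
    Ideal.span {(d : ZMod n)} = ⊤ ↔ d = 1 := by
  constructor
  · intro h
    have h1 : (1 : ZMod n) ∈ Ideal.span {(d : ZMod n)} := h ▸ Submodule.mem_top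
    rw [mem_span_iff hd, ZMod.val_one_eq_one_mod, Nat.mod_eq_of_lt hn] at h1
    exact Nat.dvd_one.mp h1
  · rintro rfl
    simp [Ideal.span_singleton_eq_top]

lemma span_sup_span {d e : ℕ} (hd : d ∣ n) (he : e ∣ n) :
    Ideal.span {(d : ZMod n)} ⊔ Ideal.span {(e : ZMod n)} =
      Ideal.span {((Nat.gcd d e : ℕ) : ZMod n)} := by
  apply le_antisymm
  · refine sup_le ?_ ?_
    · exact (span_le_iff (Nat.dvd_trans (Nat.gcd_dvd_left d e) hd) hd).mpr (Nat.gcd_dvd_left d e)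
    · exact (span_le_iff (Nat.dvd_trans (Nat.gcd_dvd_left d e) hd) he).mpr (Nat.gcd_dvd_right d e)
  · rw [Ideal.span_le, Set.singleton_subset_iff]
    have hb := Nat.gcd_eq_gcd_ab d e
    have : ((Nat.gcd d e : ℕ) : ZMod n) = (d : ZMod n) * ((Nat.gcdA d e : ℤ) : ZMod n)
        + (e : ZMod n) * ((Nat.gcdB d e : ℤ) : ZMod n) := by
      have h3 := congrArg (fun z : ℤ => ((z : ℤ) : ZMod n)) hb
      push_cast at h3 ⊢
      linear_combination h3
    rw [SetLike.mem_coe, this]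
    exact Submodule.add_mem_sup
      (Ideal.mem_span_singleton.mpr (Dvd.intro _ rfl))
      (Ideal.mem_span_singleton.mpr (Dvd.intro _ rfl))

instance : IsPrincipalIdealRing (ZMod n) :=
  IsPrincipalIdealRing.of_surjective (Int.castRingHom (ZMod n)) ZMod.intCast_surjective

lemma ideal_eq_span (I : Ideal (ZMod n)) : ∃ d : ℕ, d ∣ n ∧ I = Ideal.span {(d : ZMod n)} := by
  obtain ⟨g, hg⟩ := (IsPrincipalIdealRing.principal I)
  refine ⟨Nat.gcd g.val n, Nat.gcd_dvd_right _ _, ?_⟩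
  rw [hg]
  apply le_antisymm
  · rw [Ideal.submodule_span_eq, Ideal.span_le, Set.singleton_subset_iff, SetLike.mem_coe,
      mem_span_iff (Nat.gcd_dvd_right g.val n)]
    exact Nat.gcd_dvd_left _ _
  · rw [Ideal.span_le, Set.singleton_subset_iff, SetLike.mem_coe]
    have hb := Nat.gcd_eq_gcd_ab g.val n
    have : ((Nat.gcd g.val n : ℕ) : ZMod n) = g * ((Nat.gcdA g.val n : ℤ) : ZMod n) := by
      have h2 := congrArg (fun z : ℤ => ((z : ℤ) : ZMod n)) hb
      push_cast at h2 ⊢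
      rw [ZMod.natCast_rightInverse g] at h2
      simpa using h2
    rw [Ideal.submodule_span_eq, this]
    exact Ideal.mem_span_singleton.mpr (Dvd.intro _ rfl)
end


section
variable {k : ℕ} {p : Fin k → ℕ} (hp : ∀ i, (p i).Prime) (hpinj : Function.Injective p)

/-- Product of prime powers. -/
def D (p : Fin k → ℕ) (a : Fin k → ℕ) : ℕ := ∏ i, p i ^ a i

include hp in
lemma D_ne_zero (a : Fin k → ℕ) : D p a ≠ 0 :=
  (Finset.prod_pos fun i _ => pow_pos (hp i).pos _).ne'

include hp hpinj

lemma fact_D (a : Fin k → ℕ) (j : Fin k) : (D p a).factorization (p j) = a j := by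
  unfold D
  rw [Nat.factorization_prod (fun i _ => (pow_pos (hp i).pos _).ne')]
  rw [Finset.sum_apply']
  rw [Finset.sum_eq_single j]
  · rw [(hp j).factorization_pow, Finsupp.single_eq_same]
  · intro i _ hij
    rw [(hp i).factorization_pow, Finsupp.single_eq_of_ne' (fun h => hij (hpinj h))]
  · simp

lemma pow_dvd_D_iff (a : Fin k → ℕ) (j : Fin k) (c : ℕ) :
    p j ^ c ∣ D p a ↔ c ≤ a j := by
  rw [Nat.Prime.pow_dvd_iff_le_factorization (hp j) (D_ne_zero hp a), fact_D hp hpinj]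

lemma D_dvd_D_iff {a b : Fin k → ℕ} : D p a ∣ D p b ↔ a ≤ b := by
  constructor
  · intro h i
    rw [← fact_D hp hpinj a i, ← fact_D hp hpinj b i]
    exact (Nat.factorization_le_iff_dvd (D_ne_zero hp a) (D_ne_zero hp b)).mpr h (p i)
  · intro h
    exact Finset.prod_dvd_prod_of_dvd _ _ fun i _ => pow_dvd_pow _ (h i)

lemma D_inj {a b : Fin k → ℕ} (h : D p a = D p b) : a = b := by
  funext i
  rw [← fact_D hp hpinj a i, h, fact_D hp hpinj]

lemma D_eq_one_iff {a : Fin k → ℕ} : D p a = 1 ↔ a = 0 := by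
  constructor
  · intro h
    funext i
    have h2 := fact_D hp hpinj a i
    rw [h] at h2
    simpa using h2.symm
  · rintro rfl; simp [D]

lemma dvd_D_eq {b : Fin k → ℕ} {d : ℕ} (hd : d ∣ D p b) :
    d = D p (fun i => d.factorization (p i)) := by
  have hd0 : d ≠ 0 := fun h => D_ne_zero hp b (by simpa [h] using hd)
  have hsupp : d.factorization.support ⊆ Finset.image p Finset.univ := by
    intro q hq
    have hqp : q.Prime := Nat.prime_of_mem_primeFactors hq
    have hqd : q ∣ d := Nat.dvd_of_mem_primeFactors hq
    have hqD : q ∣ D p b := hqd.trans hd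
    obtain ⟨i, _, hi⟩ := hqp.prime.exists_mem_finset_dvd hqD
    have : q = p i := ((Nat.prime_dvd_prime_iff_eq hqp (hp i)).mp (hqp.dvd_of_dvd_pow hi))
    exact Finset.mem_image.mpr ⟨i, Finset.mem_univ i, this.symm⟩
  have h1 : D p (fun i => d.factorization (p i)) =
      ∏ q ∈ Finset.image p Finset.univ, q ^ d.factorization q := by
    rw [Finset.prod_image (fun i _ j _ h => hpinj h)]
    rfl
  have h2 : ∏ q ∈ Finset.image p Finset.univ, q ^ d.factorization q =
      ∏ q ∈ d.factorization.support, q ^ d.factorization q := by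
    refine (Finset.prod_subset hsupp ?_).symm
    intro q _ hq
    rw [Finsupp.notMem_support_iff.mp hq, pow_zero]
  rw [h1, h2]
  conv_lhs => rw [← Nat.factorization_prod_pow_eq_self hd0]
  rfl

lemma dvd_D_exists {b : Fin k → ℕ} {d : ℕ} (hd : d ∣ D p b) :
    ∃ a : Fin k → ℕ, a ≤ b ∧ d = D p a := by
  refine ⟨fun i => d.factorization (p i), ?_, dvd_D_eq hp hpinj hd⟩
  intro i
  rw [← fact_D hp hpinj b i]
  exact (Nat.factorization_le_iff_dvd (fun h => D_ne_zero hp b (by simpa [h] using hd))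
    (D_ne_zero hp b)).mpr hd (p i)

end


section Main
variable {k : ℕ} {p m : Fin k → ℕ} {n : ℕ} [NeZero n]
  (hp : ∀ i, (p i).Prime) (hpinj : Function.Injective p)
  (hn : n = D p m)

include hp hpinj

lemma gcd_D (a b : Fin k → ℕ) : Nat.gcd (D p a) (D p b) = D p (a ⊓ b) := by
  apply Nat.dvd_antisymm
  · obtain ⟨c, hca, hceq⟩ := dvd_D_exists hp hpinj (Nat.gcd_dvd_left (D p a) (D p b))
    have hcb : c ≤ b := (D_dvd_D_iff hp hpinj).mp (hceq ▸ Nat.gcd_dvd_right (D p a) (D p b))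
    rw [hceq]
    exact (D_dvd_D_iff hp hpinj).mpr (le_inf hca hcb)
  · exact Nat.dvd_gcd ((D_dvd_D_iff hp hpinj).mpr inf_le_left)
      ((D_dvd_D_iff hp hpinj).mpr inf_le_right)

lemma lcm_D (a b : Fin k → ℕ) : Nat.lcm (D p a) (D p b) = D p (a ⊔ b) := by
  have h1 : Nat.lcm (D p a) (D p b) ∣ D p (a ⊔ b) :=
    Nat.lcm_dvd ((D_dvd_D_iff hp hpinj).mpr le_sup_left)
      ((D_dvd_D_iff hp hpinj).mpr le_sup_right)
  obtain ⟨c, hc, hceq⟩ := dvd_D_exists hp hpinj h1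
  have ha : a ≤ c := (D_dvd_D_iff hp hpinj).mp (hceq ▸ Nat.dvd_lcm_left (D p a) (D p b))
  have hb : b ≤ c := (D_dvd_D_iff hp hpinj).mp (hceq ▸ Nat.dvd_lcm_right (D p a) (D p b))
  rw [hceq, le_antisymm hc (sup_le ha hb)]

lemma exists_lt_of_ne {b : Fin k → ℕ} (hb : b ≤ m) (hne : b ≠ m) : ∃ j, b j < m j := by
  by_contra h
  push_neg at h
  exact hne (funext fun j => le_antisymm (hb j) (h j))

include hn

lemma ess_iff (hm : ∀ i, 1 ≤ m i) {c : Fin k → ℕ} (hc : c ≤ m) (hcm : c ≠ m) :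
    IsEssentialIdeal (Ideal.span {(D p c : ZMod n)}) ↔ ∀ i, c i < m i := by
  have hndvd : D p c ∣ n := hn ▸ (D_dvd_D_iff hp hpinj).mpr hc
  constructor
  · rintro ⟨-, hess⟩ i
    by_contra hlt
    have hceq : c i = m i := le_antisymm (hc i) (not_lt.mp hlt)
    set b : Fin k → ℕ := fun j => if j = i then 0 else m j with hb
    have hbm : b ≤ m := by intro j; rw [hb]; dsimp only; split <;> omega
    have hbne : b ≠ m := by
      intro h
      have h2 := congrFun h i
      have h3 := hm i
      rw [hb] at h2
      simp only [eq_self_iff_true, if_true] at h2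
      omega
    have hbdvd : D p b ∣ n := hn ▸ (D_dvd_D_iff hp hpinj).mpr hbm
    apply hess (Ideal.span {(D p b : ZMod n)})
    · rw [Ne, span_eq_bot_iff hbdvd, hn]
      intro h
      exact hbne (D_inj hp hpinj h)
    · apply le_bot_iff.mp
      intro x hx
      rw [Submodule.mem_inf, mem_span_iff hndvd, mem_span_iff hbdvd] at hx
      have hlcm : Nat.lcm (D p c) (D p b) ∣ x.val := Nat.lcm_dvd hx.1 hx.2
      rw [lcm_D hp hpinj] at hlcm
      have hsup : c ⊔ b = m := by
        funext j
        rw [Pi.sup_apply, hb]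
        dsimp only
        by_cases hji : j = i
        · subst hji; simp [hceq]
        · rw [if_neg hji]
          exact sup_eq_right.mpr (hc j)
      rw [hsup, ← hn] at hlcm
      have : x.val = 0 := Nat.eq_zero_of_dvd_of_lt hlcm (ZMod.val_lt x)
      exact Submodule.mem_bot _ |>.mpr ((ZMod.val_eq_zero x).mp this)
  · intro hlt
    constructor
    · rw [Ne, span_eq_bot_iff hndvd, hn]
      intro h
      exact hcm (D_inj hp hpinj h)
    · intro J hJ
      obtain ⟨d, hdn, hJeq⟩ := ideal_eq_span J
      obtain ⟨b, hbm, hdb⟩ := dvd_D_exists hp hpinj (hn ▸ hdn)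
      have hbdvd : D p b ∣ n := hn ▸ (D_dvd_D_iff hp hpinj).mpr hbm
      have hbne : b ≠ m := by
        intro h
        apply hJ
        rw [hJeq, hdb, span_eq_bot_iff hbdvd, h, hn]
      obtain ⟨j, hj⟩ := exists_lt_of_ne hp hpinj hbm hbne
      have hsub : c ⊔ b ≤ m := sup_le hc hbm
      have hsubne : c ⊔ b ≠ m := by
        intro h
        have h2 := congrFun h j
        rw [Pi.sup_apply] at h2
        have := hlt j
        omega
      rw [Submodule.ne_bot_iff]
      refine ⟨(D p (c ⊔ b) : ZMod n), ?_, ?_⟩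
      · rw [Submodule.mem_inf]
        constructor
        · exact Ideal.mem_span_singleton.mpr
            (Nat.cast_dvd_cast ((D_dvd_D_iff hp hpinj).mpr le_sup_left))
        · rw [hJeq, hdb]
          exact Ideal.mem_span_singleton.mpr
            (Nat.cast_dvd_cast ((D_dvd_D_iff hp hpinj).mpr le_sup_right))
      · rw [Ne, ZMod.natCast_eq_zero_iff]
        intro h
        have : D p (c ⊔ b) = n := Nat.dvd_antisymm (hn ▸ (D_dvd_D_iff hp hpinj).mpr hsub) h
        rw [hn] at this
        exact hsubne (D_inj hp hpinj this)

end Main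
section GraphPart
variable {k : ℕ} {V : Type*} [Fintype V] {G : SimpleGraph V}
  {t : V → Finset (Fin k)} {i0 : Fin k}

lemma empty_ne_univ (hk : 2 ≤ k) : (∅ : Finset (Fin k)) ≠ Finset.univ := by
  intro h
  have := congrArg Finset.card h
  simp [Finset.card_univ] at this
  omega

lemma dist_formula
    (hA : ∀ u v, G.Adj u v ↔ u ≠ v ∧ t u ∩ t v = ∅)
    (hC : ∀ S : Finset (Fin k), S ≠ Finset.univ → ∃ v, t v = S)
    (hk : 2 ≤ k) :
    ∀ u w : V, u ≠ w → G.dist u w = if t u ∩ t w = ∅ then 1 else 2 := by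
  intro u w huw
  by_cases hd : t u ∩ t w = ∅
  · rw [if_pos hd]
    exact SimpleGraph.dist_eq_one_iff_adj.mpr ((hA u w).mpr ⟨huw, hd⟩)
  · rw [if_neg hd]
    obtain ⟨z, hz⟩ := hC ∅ (empty_ne_univ hk)
    have htu : t u ≠ ∅ := by
      intro h; apply hd; rw [h, Finset.empty_inter]
    have htw : t w ≠ ∅ := by
      intro h; apply hd; rw [h, Finset.inter_empty]
    have hzu : u ≠ z := fun h => htu (h ▸ hz)
    have hzw : w ≠ z := fun h => htw (h ▸ hz)
    have ha1 : G.Adj u z := (hA u z).mpr ⟨hzu, by rw [hz, Finset.inter_empty]⟩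
    have ha2 : G.Adj z w := (hA z w).mpr ⟨fun h => hzw h.symm, by rw [hz, Finset.empty_inter]⟩
    have hwalk : G.dist u w ≤ 2 := by
      have := SimpleGraph.dist_le (SimpleGraph.Walk.cons ha1 ha2.toWalk)
      simpa using this
    have h0 : G.dist u w ≠ 0 := by
      rw [Ne, SimpleGraph.dist_eq_zero_iff_eq_or_not_reachable]
      push_neg
      exact ⟨huw, ⟨SimpleGraph.Walk.cons ha1 ha2.toWalk⟩⟩
    have h1 : G.dist u w ≠ 1 := by
      rw [Ne, SimpleGraph.dist_eq_one_iff_adj, hA]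
      rintro ⟨-, h⟩; exact hd h
    omega

lemma metricDim_formula (hk : 2 ≤ k)
    (hA : ∀ u v, G.Adj u v ↔ u ≠ v ∧ t u ∩ t v = ∅)
    (hB : ∀ v, t v ≠ Finset.univ)
    (hC : ∀ S : Finset (Fin k), S ≠ Finset.univ → ∃ v, t v = S)
    (hD : ∀ u v, i0 ∈ t u → t u = t v → u = v)
    (hE : ∀ j, j ≠ i0 → ∃ u v : V, u ≠ v ∧ t u = {j} ∧ t v = {j}) :
    metricDim G = Fintype.card V - (2 ^ k - 2) := by
  classical
  have hdist := dist_formula hA hC hk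
  have hsingne : ({i0} : Finset (Fin k)) ≠ Finset.univ := by
    intro h
    have := congrArg Finset.card h
    rw [Finset.card_singleton, Finset.card_univ, Fintype.card_fin] at this
    omega
  have hr : ∀ S : {S : Finset (Fin k) // S ≠ Finset.univ ∧ S ≠ ({i0} : Finset (Fin k))},
      ∃ v, t v = S.1 := fun S => hC S.1 S.2.1
  choose r hrt using hr
  have hrinj : Function.Injective r := by
    intro A B h
    apply Subtype.ext
    rw [← hrt A, ← hrt B, h]
  set R : Set V := Set.range r with hR
  set W : Set V := Rᶜ with hW
  have hcardσ : Nat.card {S : Finset (Fin k) // S ≠ Finset.univ ∧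
      S ≠ ({i0} : Finset (Fin k))} = 2 ^ k - 2 := by
    rw [Nat.card_eq_fintype_card]
    have hiff : ∀ S : Finset (Fin k),
        (S ≠ Finset.univ ∧ S ≠ ({i0} : Finset (Fin k))) ↔
        ¬(S = Finset.univ ∨ S = ({i0} : Finset (Fin k))) := by tauto
    rw [Fintype.card_congr (Equiv.subtypeEquivRight hiff), Fintype.card_subtype_compl]
    have h2 : Fintype.card {S : Finset (Fin k) //
        S = Finset.univ ∨ S = ({i0} : Finset (Fin k))} =
        ({Finset.univ, ({i0} : Finset (Fin k))} : Finset (Finset (Fin k))).card := by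
      rw [Fintype.card_subtype]
      congr 1
      ext S
      simp
    rw [h2, Finset.card_insert_of_notMem (by simpa using Ne.symm hsingne),
      Finset.card_singleton, Fintype.card_finset, Fintype.card_fin]
  have hRncard : R.ncard = 2 ^ k - 2 := by
    rw [← Nat.card_coe_set_eq, hR, Nat.card_range_of_injective hrinj, hcardσ]
  have hWncard : W.ncard = Fintype.card V - (2 ^ k - 2) := by
    have h3 := Set.ncard_add_ncard_compl R
    rw [← hW, Nat.card_eq_fintype_card] at h3
    omega
  -- distances are nonzero between distinct vertices
  have hdpos : ∀ u v : V, u ≠ v → G.dist u v ≠ 0 := by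
    intro u v huv
    rw [hdist u v huv]
    split <;> omega
  -- resolving helper: u, v ∈ R, j ∈ t u, j ∉ t v
  have hhelp : ∀ u v : V, u ∈ R → v ∈ R → ∀ j, j ∈ t u → j ∉ t v →
      ∃ w ∈ W, G.dist u w ≠ G.dist v w := by
    intro u v hu hv j hju hjv
    have hwex : ∃ w, w ∈ W ∧ t w = ({j} : Finset (Fin k)) := by
      by_cases hji : j = i0
      · subst hji
        obtain ⟨w, hw⟩ := hC {j} hsingne
        refine ⟨w, ?_, hw⟩
        intro hwR
        obtain ⟨S, rfl⟩ := hwR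
        exact S.2.2 (by rw [← hrt S, hw])
      · obtain ⟨x, y, hxy, hx, hy⟩ := hE j hji
        by_cases hxR : x ∈ R
        · refine ⟨y, ?_, hy⟩
          intro hyR
          obtain ⟨Sx, hSx⟩ := hxR
          obtain ⟨Sy, hSy⟩ := hyR
          apply hxy
          rw [← hSx, ← hSy]
          congr 1
          apply Subtype.ext
          rw [← hrt Sx, ← hrt Sy, hSx, hSy, hx, hy]
        · exact ⟨x, hxR, hx⟩
    obtain ⟨w, hwW, hwt⟩ := hwex
    have hwu : u ≠ w := fun h => hwW (h ▸ hu)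
    have hwv : v ≠ w := fun h => hwW (h ▸ hv)
    refine ⟨w, hwW, ?_⟩
    rw [hdist u w hwu, hdist v w hwv, hwt]
    have h4 : t u ∩ ({j} : Finset (Fin k)) ≠ ∅ := by
      intro h
      have : j ∈ t u ∩ ({j} : Finset (Fin k)) := by simp [hju]
      rw [h] at this
      simp at this
    have h5 : t v ∩ ({j} : Finset (Fin k)) = ∅ := by
      ext x
      simp only [Finset.mem_inter, Finset.mem_singleton, Finset.notMem_empty, iff_false]
      rintro ⟨hxv, rfl⟩
      exact hjv hxv
    rw [if_neg h4, if_pos h5]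
    omega
  -- W is resolving
  have hres : IsResolvingSet G W := by
    intro u v huv
    by_cases huW : u ∈ W
    · exact ⟨u, huW, by rw [SimpleGraph.dist_self]; exact (hdpos v u (Ne.symm huv)).symm⟩
    by_cases hvW : v ∈ W
    · exact ⟨v, hvW, by rw [SimpleGraph.dist_self]; exact hdpos u v huv⟩
    have huR : u ∈ R := by rwa [hW, Set.notMem_compl_iff] at huW
    have hvR : v ∈ R := by rwa [hW, Set.notMem_compl_iff] at hvW
    have htne : t u ≠ t v := by
      intro h
      obtain ⟨Su, hSu⟩ := huR
      obtain ⟨Sv, hSv⟩ := hvR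
      apply huv
      rw [← hSu, ← hSv]
      congr 1
      apply Subtype.ext
      rw [← hrt Su, ← hrt Sv, hSu, hSv, h]
    have : ∃ j, (j ∈ t u ∧ j ∉ t v) ∨ (j ∈ t v ∧ j ∉ t u) := by
      by_contra hcon
      push_neg at hcon
      apply htne
      ext j
      have := hcon j
      tauto
    obtain ⟨j, hj | hj⟩ := this
    · exact hhelp u v huR hvR j hj.1 hj.2
    · obtain ⟨w, hwW, hne⟩ := hhelp v u hvR huR j hj.1 hj.2
      exact ⟨w, hwW, hne.symm⟩
  -- membership in the sInf set
  have hmem : Fintype.card V - (2 ^ k - 2) ∈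
      {c : ℕ | ∃ W : Set V, W.Finite ∧ IsResolvingSet G W ∧ W.ncard = c} :=
    ⟨W, Set.toFinite W, hres, hWncard⟩
  -- lower bound
  have hlow : ∀ c ∈ {c : ℕ | ∃ W : Set V, W.Finite ∧ IsResolvingSet G W ∧ W.ncard = c},
      Fintype.card V - (2 ^ k - 2) ≤ c := by
    rintro c ⟨W', -, hres', rfl⟩
    have hinj : Set.InjOn t W'ᶜ := by
      intro u hu v hv htuv
      by_contra huv
      obtain ⟨w, hwW, hne⟩ := hres' u v huv
      have hwu : u ≠ w := fun h => hu (h ▸ hwW)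
      have hwv : v ≠ w := fun h => hv (h ▸ hwW)
      rw [hdist u w hwu, hdist v w hwv, htuv] at hne
      exact hne rfl
    have hsub : t '' W'ᶜ ⊆ {S : Finset (Fin k) | S ≠ Finset.univ} := by
      rintro S ⟨v, -, rfl⟩
      exact hB v
    have hncardP : {S : Finset (Fin k) | S ≠ Finset.univ}.ncard = 2 ^ k - 1 := by
      rw [← Nat.card_coe_set_eq, Nat.card_eq_fintype_card]
      have : Fintype.card {S : Finset (Fin k) // S ∈ {S : Finset (Fin k) | S ≠ Finset.univ}}
          = Fintype.card {S : Finset (Fin k) // ¬ (S = Finset.univ)} := rfl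
      rw [this, Fintype.card_subtype_compl, Fintype.card_subtype_eq,
        Fintype.card_finset, Fintype.card_fin]
    have hle : (W'ᶜ : Set V).ncard ≤ 2 ^ k - 1 := by
      rw [← Set.ncard_image_of_injOn hinj]
      calc (t '' W'ᶜ).ncard ≤ _ := Set.ncard_le_ncard hsub (Set.toFinite _)
        _ = 2 ^ k - 1 := hncardP
    have hstrict : (W'ᶜ : Set V).ncard ≤ 2 ^ k - 2 := by
      by_contra hcon
      push_neg at hcon
      have heq : (W'ᶜ : Set V).ncard = 2 ^ k - 1 := by omega
      have himeq : t '' W'ᶜ = {S : Finset (Fin k) | S ≠ Finset.univ} := by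
        apply Set.eq_of_subset_of_ncard_le hsub _ (Set.toFinite _)
        rw [Set.ncard_image_of_injOn hinj, hncardP, heq]
      have hget : ∀ S : Finset (Fin k), S ≠ Finset.univ → ∃ v ∈ W'ᶜ, t v = S := by
        intro S hS
        have : S ∈ t '' W'ᶜ := himeq ▸ hS
        obtain ⟨v, hv, rfl⟩ := this
        exact ⟨v, hv, rfl⟩
      obtain ⟨u0, hu0W, hu0⟩ := hget ∅ (empty_ne_univ hk)
      obtain ⟨v1, hv1W, hv1⟩ := hget {i0} hsingne
      have hi0W : ∀ w ∈ W', i0 ∉ t w := by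
        intro w hw hi0w
        obtain ⟨x, hxW, hxt⟩ := hget (t w) (hB w)
        exact hxW (hD w x hi0w hxt.symm ▸ hw)
      have huv : u0 ≠ v1 := by
        intro h
        rw [h, hv1] at hu0
        simp at hu0
      obtain ⟨w, hwW, hne⟩ := hres' u0 v1 huv
      have hwu : u0 ≠ w := fun h => hu0W (h ▸ hwW)
      have hwv : v1 ≠ w := fun h => hv1W (h ▸ hwW)
      rw [hdist u0 w hwu, hdist v1 w hwv, hu0, hv1, Finset.empty_inter, if_pos rfl] at hne
      have : ({i0} : Finset (Fin k)) ∩ t w = ∅ := by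
        ext x
        simp only [Finset.mem_inter, Finset.mem_singleton, Finset.notMem_empty, iff_false]
        rintro ⟨rfl, hxw⟩
        exact hi0W w hwW hxw
      rw [if_pos this] at hne
      exact hne rfl
    have hid := Set.ncard_add_ncard_compl W'
    rw [Nat.card_eq_fintype_card] at hid
    omega
  rw [metricDim]
  exact le_antisymm (Nat.sInf_le hmem) (le_csInf ⟨_, hmem⟩ hlow)

end GraphPart
end Stmt12aux

/-- For `n = p₁^{m₁} ⋯ p_k^{m_k}` with `k ≥ 2` distinct primes and
`mᵢ > 1` for exactly one index, the metric dimension of the essential ideal graph of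
`ℤ/nℤ` equals `T - (2^k - 2)`, where `T = ∏ (mᵢ + 1) - 2`. -/
theorem stmt_12 (k : ℕ) (hk : 2 ≤ k) (p : Fin k → ℕ) (m : Fin k → ℕ)
    (hp : ∀ i, (p i).Prime) (hmono : StrictMono p)
    (hm : ∀ i, 1 ≤ m i) (hone : ∃! i : Fin k, 1 < m i)
    (n : ℕ) (hn : n = ∏ i, p i ^ m i)
    (T : ℕ) (hT : T = (∏ i, (m i + 1)) - 2) :
    metricDim (essentialIdealGraph (ZMod n)) = T - (2 ^ k - 2) := by
  classical
  obtain ⟨i0, hi0, hi0u⟩ := hone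
  have hpinj : Function.Injective p := hmono.injective
  have hnD : n = Stmt12aux.D p m := hn
  have hn0 : n ≠ 0 := by rw [hnD]; exact Stmt12aux.D_ne_zero hp m
  haveI : NeZero n := ⟨hn0⟩
  have hmne0 : m ≠ 0 := by
    intro h
    have h2 := congrFun h i0
    simp only [Pi.zero_apply] at h2
    omega
  have hn1 : 1 < n := by
    have h1 : n ≠ 1 := by
      rw [hnD, Ne, Stmt12aux.D_eq_one_iff hp hpinj]
      exact hmne0
    omega
  have hm1 : ∀ j, j ≠ i0 → m j = 1 := by
    intro j hj
    have := hm j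
    by_contra h
    exact hj (hi0u j (by omega))
  have hDdvd : ∀ a : Fin k → ℕ, a ≤ m → Stmt12aux.D p a ∣ n :=
    fun a ha => hnD ▸ (Stmt12aux.D_dvd_D_iff hp hpinj).mpr ha
  have hbot' : ∀ a : Fin k → ℕ, a ≤ m → a ≠ m →
      Ideal.span {(Stmt12aux.D p a : ZMod n)} ≠ ⊥ := by
    intro a h1 h3
    rw [Ne, Stmt12aux.span_eq_bot_iff (hDdvd a h1), hnD]
    intro h
    exact h3 (Stmt12aux.D_inj hp hpinj h)
  have htop' : ∀ a : Fin k → ℕ, a ≤ m → a ≠ 0 →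
      Ideal.span {(Stmt12aux.D p a : ZMod n)} ≠ ⊤ := by
    intro a h1 h2
    rw [Ne, Stmt12aux.span_eq_top_iff hn1 (hDdvd a h1)]
    intro h
    exact h2 ((Stmt12aux.D_eq_one_iff hp hpinj).mp h)
  have hrep : ∀ v : {I : Ideal (ZMod n) // I ≠ ⊥ ∧ I ≠ ⊤}, ∃ a : Fin k → ℕ,
      (a ≤ m ∧ a ≠ 0 ∧ a ≠ m) ∧ v.1 = Ideal.span {(Stmt12aux.D p a : ZMod n)} := by
    rintro ⟨I, hIb, hIt⟩
    obtain ⟨d, hdn, hIeq⟩ := Stmt12aux.ideal_eq_span I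
    obtain ⟨a, ham, hda⟩ := Stmt12aux.dvd_D_exists hp hpinj (hnD ▸ hdn)
    subst hda
    refine ⟨a, ⟨ham, ?_, ?_⟩, hIeq⟩
    · rintro rfl
      apply hIt
      rw [hIeq, Stmt12aux.span_eq_top_iff hn1 hdn]
      exact (Stmt12aux.D_eq_one_iff hp hpinj).mpr rfl
    · rintro rfl
      apply hIb
      rw [hIeq, Stmt12aux.span_eq_bot_iff hdn, hnD]
  choose aOf haOf hvOf using hrep
  have haOf_le : ∀ v, aOf v ≤ m := fun v => (haOf v).1
  have haOf_ne0 : ∀ v, aOf v ≠ 0 := fun v => (haOf v).2.1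
  have haOf_nem : ∀ v, aOf v ≠ m := fun v => (haOf v).2.2
  have haOf_unique : ∀ (v) (a : Fin k → ℕ), a ≤ m →
      v.1 = Ideal.span {(Stmt12aux.D p a : ZMod n)} → aOf v = a := by
    intro v a ham hva
    apply Stmt12aux.D_inj hp hpinj
    exact Stmt12aux.span_inj (hDdvd _ (haOf_le v)) (hDdvd _ ham) (by rw [← hvOf v, hva])
  set t : {I : Ideal (ZMod n) // I ≠ ⊥ ∧ I ≠ ⊤} → Finset (Fin k) :=
    fun v => Finset.univ.filter (fun i => aOf v i = m i) with ht
  have hmem_t : ∀ v i, i ∈ t v ↔ aOf v i = m i := by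
    intro v i
    rw [ht]
    simp
  haveI : Finite (Ideal (ZMod n)) :=
    Finite.of_injective (fun I : Ideal (ZMod n) => (I : Set (ZMod n))) SetLike.coe_injective
  haveI : Fintype {I : Ideal (ZMod n) // I ≠ ⊥ ∧ I ≠ ⊤} := Fintype.ofFinite _
  have hA : ∀ u v, (essentialIdealGraph (ZMod n)).Adj u v ↔ u ≠ v ∧ t u ∩ t v = ∅ := by
    intro u v
    have hAdj : (essentialIdealGraph (ZMod n)).Adj u v ↔
        u ≠ v ∧ IsEssentialIdeal (u.1 ⊔ v.1) := Iff.rfl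
    rw [hAdj]
    apply and_congr_right
    intro huv
    have hsup : u.1 ⊔ v.1 = Ideal.span
        {(Stmt12aux.D p (aOf u ⊓ aOf v) : ZMod n)} := by
      rw [hvOf u, hvOf v,
        Stmt12aux.span_sup_span (hDdvd _ (haOf_le u)) (hDdvd _ (haOf_le v)),
        Stmt12aux.gcd_D hp hpinj]
    rw [hsup]
    have hinfle : aOf u ⊓ aOf v ≤ m := le_trans inf_le_left (haOf_le u)
    have hinfne : aOf u ⊓ aOf v ≠ m := by
      obtain ⟨j, hj⟩ := Stmt12aux.exists_lt_of_ne hp hpinj (haOf_le u) (haOf_nem u)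
      intro h
      have h2 := congrFun h j
      rw [Pi.inf_apply] at h2
      have h3 : aOf u j ⊓ aOf v j ≤ aOf u j := inf_le_left
      omega
    rw [Stmt12aux.ess_iff hp hpinj hnD hm hinfle hinfne]
    constructor
    · intro h
      rw [Finset.eq_empty_iff_forall_notMem]
      intro i hi
      rw [Finset.mem_inter, hmem_t, hmem_t] at hi
      have h2 := h i
      rw [Pi.inf_apply] at h2
      have h3 : m i ≤ aOf u i ⊓ aOf v i := le_inf (le_of_eq hi.1.symm) (le_of_eq hi.2.symm)
      omega
    · intro h i
      rw [Pi.inf_apply]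
      have h1 : aOf u i ⊓ aOf v i ≤ aOf u i := inf_le_left
      have h2 : aOf u i ⊓ aOf v i ≤ aOf v i := inf_le_right
      have h3 : aOf u i ≤ m i := haOf_le u i
      have h4 : aOf v i ≤ m i := haOf_le v i
      have h5 : ¬(aOf u i = m i ∧ aOf v i = m i) := by
        intro hc
        have : i ∈ t u ∩ t v := Finset.mem_inter.mpr ⟨(hmem_t u i).mpr hc.1, (hmem_t v i).mpr hc.2⟩
        rw [h] at this
        simp at this
      omega
  have hB : ∀ v, t v ≠ Finset.univ := by
    intro v h
    apply haOf_nem v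
    funext i
    exact (hmem_t v i).mp (h ▸ Finset.mem_univ i)
  have hC : ∀ S : Finset (Fin k), S ≠ Finset.univ → ∃ v, t v = S := by
    intro S hS
    set a : Fin k → ℕ := fun i => if i ∈ S then m i else if i = i0 then 1 else 0 with ha
    have h1 : a ≤ m := by
      intro i
      rw [ha]
      dsimp only
      by_cases hiS : i ∈ S
      · rw [if_pos hiS]
      · rw [if_neg hiS]
        by_cases hii : i = i0
        · rw [if_pos hii, hii]; omega
        · rw [if_neg hii]; omega
    have h2 : a ≠ 0 := by
      intro h
      by_cases hSe : S = ∅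
      · have h3 := congrFun h i0
        rw [ha] at h3
        have hi0S : i0 ∉ S := by rw [hSe]; simp
        simp [hi0S] at h3
      · obtain ⟨i, hiS⟩ := Finset.nonempty_iff_ne_empty.mpr hSe
        have h3 := congrFun h i
        rw [ha] at h3
        simp only [if_pos hiS, Pi.zero_apply] at h3
        have := hm i
        omega
    have h3 : a ≠ m := by
      have : ∃ j, j ∉ S := by
        by_contra hc
        push_neg at hc
        exact hS (Finset.eq_univ_iff_forall.mpr hc)
      obtain ⟨j, hjS⟩ := this
      intro h
      have h4 := congrFun h j
      rw [ha] at h4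
      simp only [if_neg hjS] at h4
      by_cases hji : j = i0
      · rw [if_pos hji, hji] at h4
        omega
      · rw [if_neg hji] at h4
        have := hm j
        omega
    refine ⟨⟨Ideal.span {(Stmt12aux.D p a : ZMod n)}, hbot' a h1 h3, htop' a h1 h2⟩, ?_⟩
    have hao : aOf ⟨Ideal.span {(Stmt12aux.D p a : ZMod n)}, hbot' a h1 h3, htop' a h1 h2⟩
        = a := haOf_unique _ a h1 rfl
    ext i
    rw [hmem_t, hao]
    rw [ha]
    dsimp only
    by_cases hiS : i ∈ S
    · rw [if_pos hiS]
      simp [hiS]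
    · rw [if_neg hiS]
      simp only [hiS, iff_false]
      by_cases hii : i = i0
      · rw [if_pos hii, hii]
        omega
      · rw [if_neg hii]
        have := hm i
        omega
  have hD : ∀ u v, i0 ∈ t u → t u = t v → u = v := by
    intro u v hi0t htuv
    have haeq : aOf u = aOf v := by
      funext j
      by_cases hj : j ∈ t u
      · have h1 := (hmem_t u j).mp hj
        have h2 := (hmem_t v j).mp (htuv ▸ hj)
        rw [h1, h2]
      · have hji : j ≠ i0 := fun h => hj (h ▸ hi0t)
        have h1 : aOf u j ≠ m j := fun h => hj ((hmem_t u j).mpr h)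
        have h2 : aOf v j ≠ m j := by
          intro h
          exact hj (htuv ▸ ((hmem_t v j).mpr h))
        have h3 : m j = 1 := hm1 j hji
        have h4 : aOf u j ≤ m j := haOf_le u j
        have h5 : aOf v j ≤ m j := haOf_le v j
        omega
    apply Subtype.ext
    rw [hvOf u, hvOf v, haeq]
  have hE : ∀ j, j ≠ i0 → ∃ u v : {I : Ideal (ZMod n) // I ≠ ⊥ ∧ I ≠ ⊤},
      u ≠ v ∧ t u = {j} ∧ t v = {j} := by
    intro j hj
    set a1 : Fin k → ℕ := fun i => if i = j then m j else 0 with ha1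
    set a2 : Fin k → ℕ := fun i => if i = j then m j else if i = i0 then 1 else 0 with ha2
    have h1le : a1 ≤ m := by
      intro i
      rw [ha1]; dsimp only
      by_cases hij : i = j
      · rw [if_pos hij, hij]
      · rw [if_neg hij]; omega
    have h2le : a2 ≤ m := by
      intro i
      rw [ha2]; dsimp only
      by_cases hij : i = j
      · rw [if_pos hij, hij]
      · rw [if_neg hij]
        by_cases hii : i = i0
        · rw [if_pos hii, hii]; omega
        · rw [if_neg hii]; omega
    have hmj := hm j
    have h1ne0 : a1 ≠ 0 := by
      intro h
      have h2 := congrFun h j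
      rw [ha1] at h2
      simp at h2
      omega
    have h2ne0 : a2 ≠ 0 := by
      intro h
      have h2 := congrFun h j
      rw [ha2] at h2
      simp at h2
      omega
    have hji' : i0 ≠ j := Ne.symm hj
    have h1nem : a1 ≠ m := by
      intro h
      have h2 := congrFun h i0
      rw [ha1] at h2
      simp [hji'] at h2
      omega
    have h2nem : a2 ≠ m := by
      intro h
      have h2 := congrFun h i0
      rw [ha2] at h2
      simp [hji'] at h2
      omega
    refine ⟨⟨Ideal.span {(Stmt12aux.D p a1 : ZMod n)}, hbot' a1 h1le h1nem, htop' a1 h1le h1ne0⟩,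
      ⟨Ideal.span {(Stmt12aux.D p a2 : ZMod n)}, hbot' a2 h2le h2nem, htop' a2 h2le h2ne0⟩,
      ?_, ?_, ?_⟩
    · intro h
      have h2 : a1 = a2 := Stmt12aux.D_inj hp hpinj
        (Stmt12aux.span_inj (hDdvd a1 h1le) (hDdvd a2 h2le) (congrArg Subtype.val h))
      have h3 := congrFun h2 i0
      rw [ha1, ha2] at h3
      simp [hji'] at h3
    · have hao : aOf ⟨Ideal.span {(Stmt12aux.D p a1 : ZMod n)}, hbot' a1 h1le h1nem,
          htop' a1 h1le h1ne0⟩ = a1 := haOf_unique _ a1 h1le rfl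
      ext i
      rw [hmem_t, hao, ha1]
      dsimp only
      simp only [Finset.mem_singleton]
      by_cases hij : i = j
      · rw [if_pos hij, hij]
        simp
      · rw [if_neg hij]
        simp only [hij, iff_false]
        have := hm i
        omega
    · have hao : aOf ⟨Ideal.span {(Stmt12aux.D p a2 : ZMod n)}, hbot' a2 h2le h2nem,
          htop' a2 h2le h2ne0⟩ = a2 := haOf_unique _ a2 h2le rfl
      ext i
      rw [hmem_t, hao, ha2]
      dsimp only
      simp only [Finset.mem_singleton]
      by_cases hij : i = j
      · rw [if_pos hij, hij]
        simp
      · rw [if_neg hij]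
        simp only [hij, iff_false]
        by_cases hii : i = i0
        · rw [if_pos hii, hii]
          omega
        · rw [if_neg hii]
          have := hm i
          omega
  rw [Stmt12aux.metricDim_formula hk hA hB hC hD hE]
  have hcard : Fintype.card {I : Ideal (ZMod n) // I ≠ ⊥ ∧ I ≠ ⊤} = T := by
    have hzt : (fun i : Fin k => (⟨0, Nat.succ_pos _⟩ : Fin (m i + 1))) ≠
        (fun i : Fin k => (⟨m i, Nat.lt_succ_self _⟩ : Fin (m i + 1))) := by
      intro h
      have h2 := congrFun h i0
      rw [Fin.mk.injEq] at h2
      omega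
    let E : {f : ∀ i : Fin k, Fin (m i + 1) //
        f ≠ (fun i => ⟨0, Nat.succ_pos _⟩) ∧ f ≠ (fun i => ⟨m i, Nat.lt_succ_self _⟩)} ≃
        {I : Ideal (ZMod n) // I ≠ ⊥ ∧ I ≠ ⊤} :=
      { toFun := fun f => by
          refine ⟨Ideal.span {(Stmt12aux.D p (fun i => (f.1 i).val) : ZMod n)}, ?_, ?_⟩
          · refine hbot' _ (fun i => Nat.lt_succ_iff.mp (f.1 i).isLt) ?_
            intro h
            apply f.2.2
            funext i
            exact Fin.ext (congrFun h i)
          · refine htop' _ (fun i => Nat.lt_succ_iff.mp (f.1 i).isLt) ?_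
            intro h
            apply f.2.1
            funext i
            exact Fin.ext (congrFun h i)
        invFun := fun v => by
          refine ⟨fun i => ⟨aOf v i, Nat.lt_succ_of_le (haOf_le v i)⟩, ?_, ?_⟩
          · intro h
            apply haOf_ne0 v
            funext i
            have h2 := congrFun h i
            rw [Fin.mk.injEq] at h2
            exact h2
          · intro h
            apply haOf_nem v
            funext i
            have h2 := congrFun h i
            rw [Fin.mk.injEq] at h2
            exact h2
        left_inv := by
          intro f
          apply Subtype.ext
          funext i
          apply Fin.ext
          exact congrFun (haOf_unique _ _ (fun i => Nat.lt_succ_iff.mp (f.1 i).isLt) rfl) i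
        right_inv := by
          intro v
          apply Subtype.ext
          exact (hvOf v).symm }
    rw [← Fintype.card_congr E]
    have hiff : ∀ f : ∀ i : Fin k, Fin (m i + 1),
        (f ≠ (fun i => ⟨0, Nat.succ_pos _⟩) ∧ f ≠ (fun i => ⟨m i, Nat.lt_succ_self _⟩)) ↔
        ¬(f = (fun i => ⟨0, Nat.succ_pos _⟩) ∨ f = (fun i => ⟨m i, Nat.lt_succ_self _⟩)) := by
      intro f; tauto
    rw [Fintype.card_congr (Equiv.subtypeEquivRight hiff), Fintype.card_subtype_compl]
    have h2 : Fintype.card {f : ∀ i : Fin k, Fin (m i + 1) //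
        f = (fun i => ⟨0, Nat.succ_pos _⟩) ∨ f = (fun i => ⟨m i, Nat.lt_succ_self _⟩)} =
        ({(fun i => ⟨0, Nat.succ_pos _⟩), (fun i => ⟨m i, Nat.lt_succ_self _⟩)} :
          Finset (∀ i : Fin k, Fin (m i + 1))).card := by
      rw [Fintype.card_subtype]
      congr 1
      ext f
      rw [Finset.mem_filter]
      simp
    rw [h2, Finset.card_insert_of_notMem (by simpa using hzt), Finset.card_singleton]
    have h3 : Fintype.card (∀ i : Fin k, Fin (m i + 1)) = ∏ i, (m i + 1) := by
      rw [Fintype.card_pi]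
      congr 1
      funext i
      exact Fintype.card_fin _
    rw [h3, hT]
  rw [hcard]
end

section
/- Let n = p_1^{m_1} p_2^{m_2} where p_1 < p_2 are primes and m_1 > 1 and m_2 > 1. Then the metric dimension of the essential ideal graph E_{Z_n} of Z_n = Z/nZ equals m_1 m_2 + m_1 + m_2 − 4. -/
section Aux

lemma zmod_cast_dvd_iff {n : ℕ} [NeZero n] {d a : ℕ} (hd : d ∣ n) :
    (d : ZMod n) ∣ (a : ZMod n) ↔ d ∣ a := by
  constructor
  · rintro ⟨c, hc⟩
    have hc' : (a : ZMod n) = ((d * c.val : ℕ) : ZMod n) := by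
      push_cast
      rw [ZMod.natCast_zmod_val]
      exact hc
    have hmod : a ≡ d * c.val [MOD n] := (ZMod.natCast_eq_natCast_iff _ _ _).1 hc'
    obtain ⟨k, hk⟩ := hmod.dvd
    have ha : (a : ℤ) = (d : ℤ) * c.val - (n : ℤ) * k := by push_cast at hk ⊢; linarith
    have hdz : (d : ℤ) ∣ (a : ℤ) := by
      rw [ha]
      exact dvd_sub (dvd_mul_right _ _) ((Int.natCast_dvd_natCast.2 hd).mul_right _)
    exact_mod_cast hdz
  · exact fun h => by exact_mod_cast (Nat.cast_dvd_cast h : ((d : ℕ) : ZMod n) ∣ _)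

lemma zmod_ideal_eq_span_divisor {n : ℕ} [NeZero n] (I : Ideal (ZMod n)) :
    ∃ d : ℕ, d ∣ n ∧ I = Ideal.span {(d : ZMod n)} := by
  haveI : IsPrincipalIdealRing (ZMod n) :=
    IsPrincipalIdealRing.of_surjective (Int.castRingHom (ZMod n)) ZMod.intCast_surjective
  obtain ⟨x, hx⟩ := (IsPrincipalIdealRing.principal I)
  have hx' : I = Ideal.span {x} := hx
  refine ⟨Nat.gcd x.val n, Nat.gcd_dvd_right _ _, ?_⟩
  rw [hx']
  apply le_antisymm
  · rw [Ideal.span_singleton_le_span_singleton]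
    have h1 : (Nat.gcd x.val n : ZMod n) ∣ (x.val : ZMod n) :=
      Nat.cast_dvd_cast (Nat.gcd_dvd_left _ _)
    rwa [ZMod.natCast_zmod_val] at h1
  · rw [Ideal.span_singleton_le_span_singleton]
    have hb := Nat.gcd_eq_gcd_ab x.val n
    have key : ((Nat.gcd x.val n : ℕ) : ZMod n) = x * ((Nat.gcdA x.val n : ℤ) : ZMod n) := by
      have := congrArg (fun z : ℤ => (z : ZMod n)) hb
      push_cast at this
      rwa [ZMod.natCast_zmod_val, ZMod.natCast_self, zero_mul, add_zero] at this
    exact ⟨_, key⟩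

lemma prime_pow_dvd_lcm {p k d e : ℕ} (hp : p.Prime) (hd : d ≠ 0) (he : e ≠ 0)
    (h : p ^ k ∣ Nat.lcm d e) : p ^ k ∣ d ∨ p ^ k ∣ e := by
  have hl : Nat.lcm d e ≠ 0 := Nat.lcm_ne_zero hd he
  rw [hp.pow_dvd_iff_le_factorization hl, Nat.factorization_lcm hd he,
    Finsupp.sup_apply, le_sup_iff] at h
  rcases h with h | h
  · exact Or.inl ((hp.pow_dvd_iff_le_factorization hd).2 h)
  · exact Or.inr ((hp.pow_dvd_iff_le_factorization he).2 h)

lemma metricDim_three_classes {V : Type*} [Finite V] (G : SimpleGraph V) (c : V → Fin 3)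
    (hadj : ∀ u v, G.Adj u v ↔ u ≠ v ∧ ¬(c u = c v ∧ c u ≠ 0))
    (h0 : ∃ v, c v = 0)
    (h1 : ∃ u v : V, u ≠ v ∧ c u = 1 ∧ c v = 1)
    (h2 : ∃ u v : V, u ≠ v ∧ c u = 2 ∧ c v = 2) :
    metricDim G = Nat.card V - 3 := by
  obtain ⟨v₀, hv₀⟩ := h0
  obtain ⟨u₁, v₁, hne₁, hu₁, hv₁⟩ := h1
  obtain ⟨u₂, v₂, hne₂, hu₂, hv₂⟩ := h2
  -- adjacency from differing classes
  have hadj' : ∀ u v : V, c u ≠ c v → G.Adj u v := by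
    intro u v h
    exact (hadj u v).2 ⟨fun e => h (by rw [e]), fun ⟨e, _⟩ => h e⟩
  have hd1 : ∀ u v : V, G.Adj u v → G.dist u v = 1 :=
    fun u v h => SimpleGraph.dist_eq_one_iff_adj.2 h
  have hd2 : ∀ u v : V, u ≠ v → ¬G.Adj u v → G.dist u v = 2 := by
    intro u v huv ha
    have hc : c u = c v ∧ c u ≠ 0 := by
      by_contra hcc
      exact ha ((hadj u v).2 ⟨huv, hcc⟩)
    have a1 : G.Adj u v₀ := hadj' u v₀ (by rw [hv₀]; exact hc.2)
    have a2 : G.Adj v₀ v := hadj' v₀ v (by rw [hv₀, ← hc.1]; exact fun e => hc.2 e.symm)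
    let p : G.Walk u v := SimpleGraph.Walk.cons a1 (SimpleGraph.Walk.cons a2 SimpleGraph.Walk.nil)
    have hlen : p.length = 2 := rfl
    have hle : G.dist u v ≤ 2 := hlen ▸ SimpleGraph.dist_le p
    have hpos : 0 < G.dist u v := SimpleGraph.Reachable.pos_dist_of_ne ⟨p⟩ huv
    have hne1 : G.dist u v ≠ 1 := fun h => ha (SimpleGraph.dist_eq_one_iff_adj.1 h)
    omega
  have hdpos : ∀ u v : V, u ≠ v → 0 < G.dist u v := by
    intro u v huv
    by_cases ha : G.Adj u v
    · rw [hd1 u v ha]; omega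
    · rw [hd2 u v huv ha]; omega
  have hmem : (Nat.card V - 3) ∈ {k : ℕ | ∃ W : Set V, W.Finite ∧ IsResolvingSet G W ∧ W.ncard = k} := by
    refine ⟨Set.univ \ {v₀, u₁, u₂}, Set.toFinite _, ?_, ?_⟩
    · -- resolving
      have hwW : ∀ x : V, x ≠ v₀ → x ≠ u₁ → x ≠ u₂ → x ∈ Set.univ \ ({v₀, u₁, u₂} : Set V) := by
        intro x h1 h2 h3
        simp [h1, h2, h3]
      have hv1W : v₁ ∈ Set.univ \ ({v₀, u₁, u₂} : Set V) :=
        hwW v₁ (fun e => by rw [e, hv₀] at hv₁; exact absurd hv₁ (by decide))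
          hne₁.symm (fun e => by rw [e, hu₂] at hv₁; exact absurd hv₁ (by decide))
      have hv2W : v₂ ∈ Set.univ \ ({v₀, u₁, u₂} : Set V) :=
        hwW v₂ (fun e => by rw [e, hv₀] at hv₂; exact absurd hv₂ (by decide))
          (fun e => by rw [e, hu₁] at hv₂; exact absurd hv₂ (by decide)) hne₂.symm
      intro u v huv
      by_cases hu : u ∈ Set.univ \ ({v₀, u₁, u₂} : Set V)
      · refine ⟨u, hu, ?_⟩
        rw [SimpleGraph.dist_self]
        have := hdpos v u huv.symm
        omega
      by_cases hv : v ∈ Set.univ \ ({v₀, u₁, u₂} : Set V)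
      · refine ⟨v, hv, ?_⟩
        rw [SimpleGraph.dist_self]
        have := hdpos u v huv
        omega
      · -- both u v in {v₀, u₁, u₂}
        simp only [Set.mem_diff, Set.mem_univ, true_and, not_not, Set.mem_insert_iff,
          Set.mem_singleton_iff] at hu hv
        have key1 : ∀ x, c x ≠ 1 → G.dist x v₁ = 1 :=
          fun x hx => hd1 _ _ (hadj' x v₁ (by rw [hv₁]; exact hx))
        have key2 : ∀ x, c x ≠ 2 → G.dist x v₂ = 1 :=
          fun x hx => hd1 _ _ (hadj' x v₂ (by rw [hv₂]; exact hx))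
        have du1 : G.dist u₁ v₁ = 2 := by
          refine hd2 u₁ v₁ hne₁ (fun ha => ?_)
          exact ((hadj u₁ v₁).1 ha).2 ⟨by rw [hu₁, hv₁], by rw [hu₁]; decide⟩
        have du2 : G.dist u₂ v₂ = 2 := by
          refine hd2 u₂ v₂ hne₂ (fun ha => ?_)
          exact ((hadj u₂ v₂).1 ha).2 ⟨by rw [hu₂, hv₂], by rw [hu₂]; decide⟩
        have c01 : c v₀ ≠ 1 := by rw [hv₀]; decide
        have c02 : c v₀ ≠ 2 := by rw [hv₀]; decide
        have c21 : c u₂ ≠ 1 := by rw [hu₂]; decide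
        have c12 : c u₁ ≠ 2 := by rw [hu₁]; decide
        rcases hu with hu | hu | hu <;> rcases hv with hv | hv | hv
        · exact absurd (hu.trans hv.symm) huv
        · exact ⟨v₁, hv1W, by rw [hu, hv, key1 v₀ c01, du1]; omega⟩
        · exact ⟨v₂, hv2W, by rw [hu, hv, key2 v₀ c02, du2]; omega⟩
        · exact ⟨v₁, hv1W, by rw [hu, hv, key1 v₀ c01, du1]; omega⟩
        · exact absurd (hu.trans hv.symm) huv
        · exact ⟨v₁, hv1W, by rw [hu, hv, du1, key1 u₂ c21]; omega⟩
        · exact ⟨v₂, hv2W, by rw [hu, hv, key2 v₀ c02, du2]; omega⟩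
        · exact ⟨v₂, hv2W, by rw [hu, hv, du2, key2 u₁ c12]; omega⟩
        · exact absurd (hu.trans hv.symm) huv
    · -- cardinality
      have h3 : ({v₀, u₁, u₂} : Set V).ncard = 3 := by
        rw [Set.ncard_insert_of_notMem, Set.ncard_pair]
        · intro e; rw [e, hu₂] at hu₁; exact absurd hu₁ (by decide)
        · simp only [Set.mem_insert_iff, Set.mem_singleton_iff]
          push_neg
          exact ⟨fun e => by rw [e, hu₁] at hv₀; exact absurd hv₀ (by decide),
                 fun e => by rw [e, hu₂] at hv₀; exact absurd hv₀ (by decide)⟩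
      rw [Set.ncard_diff (Set.subset_univ _), Set.ncard_univ, h3]
  refine le_antisymm (Nat.sInf_le hmem) (le_csInf ⟨_, hmem⟩ ?_)
  rintro k ⟨W, hWfin, hWres, rfl⟩
  have hinj : Set.InjOn c Wᶜ := by
    intro u hu v hv hcuv
    by_contra huv
    obtain ⟨w, hwW, hd⟩ := hWres u v huv
    have hwu : w ≠ u := fun e => hu (e ▸ hwW)
    have hwv : w ≠ v := fun e => hv (e ▸ hwW)
    have hiff : G.Adj u w ↔ G.Adj v w := by
      rw [hadj, hadj, hcuv]
      exact and_congr_left' ⟨fun _ => hwv.symm, fun _ => hwu.symm⟩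
    by_cases ha : G.Adj u w
    · rw [hd1 u w ha, hd1 v w (hiff.1 ha)] at hd; exact hd rfl
    · rw [hd2 u w hwu.symm ha, hd2 v w hwv.symm (fun hb => ha (hiff.2 hb))] at hd
      exact hd rfl
  have hcompl : Wᶜ.ncard ≤ 3 := by
    calc Wᶜ.ncard = (c '' Wᶜ).ncard := (Set.ncard_image_of_injOn hinj).symm
      _ ≤ (Set.univ : Set (Fin 3)).ncard := Set.ncard_le_ncard (Set.subset_univ _) Set.finite_univ
      _ = 3 := by rw [Set.ncard_univ]; simp
  have := Set.ncard_add_ncard_compl W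
  omega


end Aux

/-- For `n = p₁^{m₁} p₂^{m₂}` with `p₁ < p₂` primes and `m₁, m₂ > 1`, the
metric dimension of the essential ideal graph of `ℤ/nℤ` equals `m₁m₂ + m₁ + m₂ - 4`. -/
theorem stmt_14 (p₁ p₂ : ℕ) (hp₁ : p₁.Prime) (hp₂ : p₂.Prime) (hlt : p₁ < p₂)
    (m₁ m₂ : ℕ) (hm₁ : 1 < m₁) (hm₂ : 1 < m₂)
    (n : ℕ) (hn : n = p₁ ^ m₁ * p₂ ^ m₂) :
    metricDim (essentialIdealGraph (ZMod n)) = m₁ * m₂ + m₁ + m₂ - 4 := by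
  classical
  set q₁ := p₁ ^ m₁ with hq1def
  set q₂ := p₂ ^ m₂ with hq2def
  have hm₁0 : m₁ ≠ 0 := by omega
  have hm₂0 : m₂ ≠ 0 := by omega
  have hq₁1 : 1 < q₁ := Nat.one_lt_pow hm₁0 hp₁.one_lt
  have hq₂1 : 1 < q₂ := Nat.one_lt_pow hm₂0 hp₂.one_lt
  have hn0 : n ≠ 0 := by rw [hn]; positivity
  haveI : NeZero n := ⟨hn0⟩
  have hco : q₁.Coprime q₂ := Nat.Coprime.pow m₁ m₂ ((Nat.coprime_primes hp₁ hp₂).2 hlt.ne)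
  have hq₁n : q₁ ∣ n := by rw [hn]; exact dvd_mul_right q₁ q₂
  have hq₂n : q₂ ∣ n := by rw [hn]; exact dvd_mul_left q₂ q₁
  have hq₁lt : q₁ < n := by
    rw [hn]
    exact (lt_mul_iff_one_lt_right (by omega : 0 < q₁)).2 hq₂1
  have hq₂lt : q₂ < n := by
    rw [hn]
    exact (lt_mul_iff_one_lt_left (by omega : 0 < q₂)).2 hq₁1
  set E₁ : Ideal (ZMod n) := Ideal.span {((q₁ : ℕ) : ZMod n)} with hE₁def
  set E₂ : Ideal (ZMod n) := Ideal.span {((q₂ : ℕ) : ZMod n)} with hE₂def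
  -- order facts
  have hle1 : ∀ d : ℕ, Ideal.span {(d : ZMod n)} ≤ E₁ ↔ q₁ ∣ d := by
    intro d
    rw [hE₁def, Ideal.span_singleton_le_span_singleton]
    exact zmod_cast_dvd_iff hq₁n
  have hle2 : ∀ d : ℕ, Ideal.span {(d : ZMod n)} ≤ E₂ ↔ q₂ ∣ d := by
    intro d
    rw [hE₂def, Ideal.span_singleton_le_span_singleton]
    exact zmod_cast_dvd_iff hq₂n
  have hbot : ∀ d : ℕ, d ∣ n → (Ideal.span {(d : ZMod n)} = ⊥ ↔ d = n) := by
    intro d hd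
    rw [Ideal.span_singleton_eq_bot, ZMod.natCast_eq_zero_iff]
    exact ⟨fun h => Nat.dvd_antisymm hd h, fun h => h ▸ dvd_refl n⟩
  have htop : ∀ d : ℕ, d ∣ n → (Ideal.span {(d : ZMod n)} = ⊤ ↔ d = 1) := by
    intro d hd
    rw [Ideal.span_singleton_eq_top]
    constructor
    · intro h
      have h1 : (d : ZMod n) ∣ ((1 : ℕ) : ZMod n) := by rw [Nat.cast_one]; exact h.dvd
      exact Nat.dvd_one.1 ((zmod_cast_dvd_iff hd).1 h1)
    · rintro rfl; simpa using isUnit_one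
  have hspan_inj : ∀ d e : ℕ, d ∣ n → e ∣ n →
      Ideal.span {(d : ZMod n)} = Ideal.span {(e : ZMod n)} → d = e := by
    intro d e hd he h
    refine Nat.dvd_antisymm ?_ ?_
    · exact (zmod_cast_dvd_iff hd).1 (Ideal.span_singleton_le_span_singleton.1 h.ge)
    · exact (zmod_cast_dvd_iff he).1 (Ideal.span_singleton_le_span_singleton.1 h.le)
  have hexcl : ∀ d : ℕ, d ∣ n → q₁ ∣ d → q₂ ∣ d → d = n := by
    intro d hd h1 h2
    refine Nat.dvd_antisymm hd ?_
    rw [hn]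
    exact hco.mul_dvd_of_dvd_of_dvd h1 h2
  have hE12 : E₁ ⊓ E₂ = ⊥ := by
    rw [eq_bot_iff]
    rintro x hx
    obtain ⟨h1, h2⟩ := Submodule.mem_inf.1 hx
    rw [hE₁def, Ideal.mem_span_singleton] at h1
    rw [hE₂def, Ideal.mem_span_singleton] at h2
    rw [← ZMod.natCast_zmod_val x] at h1 h2
    have hd1 : q₁ ∣ x.val := (zmod_cast_dvd_iff hq₁n).1 h1
    have hd2 : q₂ ∣ x.val := (zmod_cast_dvd_iff hq₂n).1 h2
    have : n ∣ x.val := (dvd_of_eq hn).trans (hco.mul_dvd_of_dvd_of_dvd hd1 hd2)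
    have hx0 : x = 0 := by
      rw [← ZMod.natCast_zmod_val x, ZMod.natCast_eq_zero_iff]
      exact this
    simp [hx0]
  have hE₂ne : E₂ ≠ ⊥ := fun h => by
    rw [hE₂def] at h
    exact absurd ((hbot q₂ hq₂n).1 h) (by omega)
  have hE₁ne : E₁ ≠ ⊥ := fun h => by
    rw [hE₁def] at h
    exact absurd ((hbot q₁ hq₁n).1 h) (by omega)
  -- essentiality characterization
  have hess : ∀ K : Ideal (ZMod n), IsEssentialIdeal K ↔ (¬K ≤ E₁ ∧ ¬K ≤ E₂) := by
    intro K
    obtain ⟨d, hdn, rfl⟩ := zmod_ideal_eq_span_divisor K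
    rw [hle1 d, hle2 d]
    constructor
    · rintro ⟨hKbot, hKess⟩
      constructor
      · intro h1
        refine hKess E₂ hE₂ne (le_bot_iff.1 ?_)
        calc Ideal.span {(d : ZMod n)} ⊓ E₂ ≤ E₁ ⊓ E₂ :=
              inf_le_inf_right E₂ ((hle1 d).2 h1)
          _ = ⊥ := hE12
      · intro h2
        refine hKess E₁ hE₁ne (le_bot_iff.1 ?_)
        calc Ideal.span {(d : ZMod n)} ⊓ E₁ ≤ E₂ ⊓ E₁ :=
              inf_le_inf_right E₁ ((hle2 d).2 h2)
          _ = ⊥ := by rw [inf_comm]; exact hE12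
    · rintro ⟨h1, h2⟩
      have hd0 : d ≠ 0 := fun h => hn0 (zero_dvd_iff.1 (h ▸ hdn))
      constructor
      · intro hb
        have hdn' : d = n := (hbot d hdn).1 hb
        exact h1 (hdn' ▸ hq₁n)
      · intro J hJ hinf
        obtain ⟨e, hen, rfl⟩ := zmod_ideal_eq_span_divisor J
        have he_ne : e ≠ n := fun h => hJ ((hbot e hen).2 h)
        have he0 : e ≠ 0 := fun h => hn0 (zero_dvd_iff.1 (h ▸ hen))
        have hln : Nat.lcm d e ∣ n := Nat.lcm_dvd hdn hen
        have hlne : Nat.lcm d e ≠ n := by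
          intro h
          have hq1l : q₁ ∣ Nat.lcm d e := by rw [h]; exact hq₁n
          have hq2l : q₂ ∣ Nat.lcm d e := by rw [h]; exact hq₂n
          rcases prime_pow_dvd_lcm hp₁ hd0 he0 hq1l with h' | h'
          · exact h1 h'
          rcases prime_pow_dvd_lcm hp₂ hd0 he0 hq2l with h'' | h''
          · exact h2 h''
          exact he_ne (hexcl e hen h' h'')
        have hmem : ((Nat.lcm d e : ℕ) : ZMod n) ∈
            Ideal.span {(d : ZMod n)} ⊓ Ideal.span {(e : ZMod n)} :=
          Submodule.mem_inf.2
            ⟨Ideal.mem_span_singleton.2 (Nat.cast_dvd_cast (Nat.dvd_lcm_left d e)),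
             Ideal.mem_span_singleton.2 (Nat.cast_dvd_cast (Nat.dvd_lcm_right d e))⟩
        rw [hinf] at hmem
        have h0 : ((Nat.lcm d e : ℕ) : ZMod n) = 0 := (Submodule.mem_bot _).1 hmem
        have : n ∣ Nat.lcm d e := (ZMod.natCast_eq_zero_iff _ _).1 h0
        exact hlne (Nat.dvd_antisymm hln this)
  -- the vertex type and its cardinality
  set s : Finset ℕ := (n.divisors.erase 1).erase n with hsdef
  have hmem_s : ∀ d : ℕ, d ∈ s ↔ d ∣ n ∧ d ≠ 1 ∧ d ≠ n := by
    intro d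
    rw [hsdef, Finset.mem_erase, Finset.mem_erase, Nat.mem_divisors]
    constructor
    · rintro ⟨h1, h2, h3, _⟩; exact ⟨h3, h2, h1⟩
    · rintro ⟨h1, h2, h3⟩; exact ⟨h3, h2, h1, hn0⟩
  have hmk : ∀ d : ℕ, d ∣ n → d ≠ 1 → d ≠ n →
      (Ideal.span {(d : ZMod n)} ≠ ⊥ ∧ Ideal.span {(d : ZMod n)} ≠ ⊤) :=
    fun d h1 h2 h3 => ⟨fun hb => h3 ((hbot d h1).1 hb), fun ht => h2 ((htop d h1).1 ht)⟩
  let f : {d : ℕ // d ∈ s} → {I : Ideal (ZMod n) // I ≠ ⊥ ∧ I ≠ ⊤} := fun d =>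
    ⟨Ideal.span {((d.1 : ℕ) : ZMod n)},
     hmk d.1 ((hmem_s d.1).1 d.2).1 ((hmem_s d.1).1 d.2).2.1 ((hmem_s d.1).1 d.2).2.2⟩
  have hfbij : Function.Bijective f := by
    constructor
    · intro a b h
      exact Subtype.ext (hspan_inj a.1 b.1 ((hmem_s a.1).1 a.2).1 ((hmem_s b.1).1 b.2).1
        (congrArg Subtype.val h))
    · intro I
      obtain ⟨d, hdn, hId⟩ := zmod_ideal_eq_span_divisor I.1
      have hd1 : d ≠ 1 := fun h => I.2.2 (by rw [hId, h]; exact (htop 1 (one_dvd n)).2 rfl)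
      have hdnn : d ≠ n := fun h => I.2.1 (by rw [hId]; exact (hbot d hdn).2 h)
      exact ⟨⟨d, (hmem_s d).2 ⟨hdn, hd1, hdnn⟩⟩, Subtype.ext hId.symm⟩
  haveI hfin : Finite {I : Ideal (ZMod n) // I ≠ ⊥ ∧ I ≠ ⊤} := Finite.of_surjective f hfbij.2
  have hcard : Nat.card {I : Ideal (ZMod n) // I ≠ ⊥ ∧ I ≠ ⊤} = (m₁ + 1) * (m₂ + 1) - 2 := by
    rw [← Nat.card_eq_of_bijective f hfbij, Nat.card_eq_finsetCard]
    have h1mem : (1 : ℕ) ∈ n.divisors := Nat.one_mem_divisors.2 hn0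
    have hn1 : n ≠ 1 := by omega
    have hnmem : n ∈ n.divisors.erase 1 := Finset.mem_erase.2 ⟨hn1, Nat.mem_divisors_self n hn0⟩
    rw [hsdef, Finset.card_erase_of_mem hnmem, Finset.card_erase_of_mem h1mem]
    have hdcard : n.divisors.card = (m₁ + 1) * (m₂ + 1) := by
      rw [hn, hco.card_divisors_mul, hq1def, hq2def, Nat.divisors_prime_pow hp₁,
        Nat.divisors_prime_pow hp₂, Finset.card_map, Finset.card_map,
        Finset.card_range, Finset.card_range]
    rw [hdcard]
    omega
  -- the 3-class coloring
  set c : {I : Ideal (ZMod n) // I ≠ ⊥ ∧ I ≠ ⊤} → Fin 3 :=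
    fun I => if I.1 ≤ E₁ then 1 else if I.1 ≤ E₂ then 2 else 0 with hcdef
  have hnotboth : ∀ I : {I : Ideal (ZMod n) // I ≠ ⊥ ∧ I ≠ ⊤}, ¬(I.1 ≤ E₁ ∧ I.1 ≤ E₂) := by
    rintro I ⟨h1, h2⟩
    exact I.2.1 (le_bot_iff.1 (le_trans (le_inf h1 h2) hE12.le))
  have hc1 : ∀ I, c I = 1 ↔ I.1 ≤ E₁ := by
    intro I
    simp only [hcdef]
    split_ifs with h h2
    · exact iff_of_true rfl h
    · exact iff_of_false (by decide) h
    · exact iff_of_false (by decide) h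
  have hc2 : ∀ I, c I = 2 ↔ I.1 ≤ E₂ := by
    intro I
    simp only [hcdef]
    split_ifs with h h2
    · exact iff_of_false (by decide) (fun h2 => hnotboth I ⟨h, h2⟩)
    · exact iff_of_true rfl h2
    · exact iff_of_false (by decide) h2
  have hadj : ∀ u v : {I : Ideal (ZMod n) // I ≠ ⊥ ∧ I ≠ ⊤},
      (essentialIdealGraph (ZMod n)).Adj u v ↔ u ≠ v ∧ ¬(c u = c v ∧ c u ≠ 0) := by
    intro u v
    have key : (¬(u.1 ⊔ v.1) ≤ E₁ ∧ ¬(u.1 ⊔ v.1) ≤ E₂) ↔ ¬(c u = c v ∧ c u ≠ 0) := by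
      have f3 : ∀ a b : Fin 3, (a = b ∧ a ≠ 0) ↔ ((a = 1 ∧ b = 1) ∨ (a = 2 ∧ b = 2)) := by decide
      rw [sup_le_iff, sup_le_iff, f3, hc1 u, hc1 v, hc2 u, hc2 v]
      tauto
    show (u ≠ v ∧ IsEssentialIdeal (u.1 ⊔ v.1)) ↔ _
    rw [hess (u.1 ⊔ v.1)]
    exact and_congr_right fun _ => key
  -- representatives of the three classes
  have hp₁2 := hp₁.two_le
  have hp₂2 := hp₂.two_le
  have hp₁lt_q₁ : p₁ < q₁ := by
    rw [hq1def]
    calc p₁ = p₁ ^ 1 := (pow_one p₁).symm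
    _ < p₁ ^ m₁ := Nat.pow_lt_pow_right hp₁.one_lt hm₁
  have hp₂le_q₂ : p₂ ≤ q₂ := by rw [hq2def]; exact Nat.le_self_pow hm₂0 p₂
  have hfin3 : ∀ a : Fin 3, a ≠ 1 → a ≠ 2 → a = 0 := by decide
  -- class 0 representative
  let v₀ : {I : Ideal (ZMod n) // I ≠ ⊥ ∧ I ≠ ⊤} :=
    ⟨Ideal.span {((p₁ : ℕ) : ZMod n)},
     hmk p₁ (dvd_trans (dvd_pow_self p₁ hm₁0) hq₁n) (by omega) (by omega)⟩
  have hcv₀ : c v₀ = 0 := by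
    refine hfin3 _ (fun h => ?_) (fun h => ?_)
    · have := Nat.le_of_dvd (by omega) ((hle1 p₁).1 ((hc1 v₀).1 h))
      omega
    · have := Nat.le_of_dvd (by omega) ((hle2 p₁).1 ((hc2 v₀).1 h))
      omega
  -- class 1 representatives
  have hq₁p₂dvd : q₁ * p₂ ∣ n := by
    rw [hn]; exact mul_dvd_mul_left q₁ (dvd_pow_self p₂ hm₂0)
  have hq₁p₂ne1 : q₁ * p₂ ≠ 1 := fun h => by have := Nat.eq_one_of_mul_eq_one_right h; omega
  have hq₁p₂ne_n : q₁ * p₂ ≠ n := by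
    intro h
    rw [hn, hq2def] at h
    have h' := Nat.eq_of_mul_eq_mul_left (by omega : 0 < q₁) h
    have h2 : p₂ ^ 1 = p₂ ^ m₂ := by rw [pow_one]; exact h'
    have := Nat.pow_right_injective hp₂.two_le h2
    omega
  let a₁ : {I : Ideal (ZMod n) // I ≠ ⊥ ∧ I ≠ ⊤} :=
    ⟨Ideal.span {((q₁ : ℕ) : ZMod n)}, hmk q₁ hq₁n (by omega) (by omega)⟩
  let b₁ : {I : Ideal (ZMod n) // I ≠ ⊥ ∧ I ≠ ⊤} :=
    ⟨Ideal.span {((q₁ * p₂ : ℕ) : ZMod n)}, hmk (q₁ * p₂) hq₁p₂dvd hq₁p₂ne1 hq₁p₂ne_n⟩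
  have ha₁b₁ : a₁ ≠ b₁ := by
    intro h
    have h' := hspan_inj q₁ (q₁ * p₂) hq₁n hq₁p₂dvd (congrArg Subtype.val h)
    have h'' : q₁ * 1 = q₁ * p₂ := by rw [mul_one]; exact h'
    have := Nat.eq_of_mul_eq_mul_left (by omega : 0 < q₁) h''
    omega
  have hca₁ : c a₁ = 1 := (hc1 a₁).2 ((hle1 q₁).2 dvd_rfl)
  have hcb₁ : c b₁ = 1 := (hc1 b₁).2 ((hle1 (q₁ * p₂)).2 (dvd_mul_right q₁ p₂))
  -- class 2 representatives
  have hq₂p₁dvd : q₂ * p₁ ∣ n := by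
    rw [hn, mul_comm q₁ q₂]
    exact mul_dvd_mul_left q₂ (dvd_pow_self p₁ hm₁0)
  have hq₂p₁ne1 : q₂ * p₁ ≠ 1 := fun h => by have := Nat.eq_one_of_mul_eq_one_right h; omega
  have hq₂p₁ne_n : q₂ * p₁ ≠ n := by
    intro h
    rw [hn, mul_comm q₁ q₂] at h
    have h' := Nat.eq_of_mul_eq_mul_left (by omega : 0 < q₂) h
    omega
  let a₂ : {I : Ideal (ZMod n) // I ≠ ⊥ ∧ I ≠ ⊤} :=
    ⟨Ideal.span {((q₂ : ℕ) : ZMod n)}, hmk q₂ hq₂n (by omega) (by omega)⟩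
  let b₂ : {I : Ideal (ZMod n) // I ≠ ⊥ ∧ I ≠ ⊤} :=
    ⟨Ideal.span {((q₂ * p₁ : ℕ) : ZMod n)}, hmk (q₂ * p₁) hq₂p₁dvd hq₂p₁ne1 hq₂p₁ne_n⟩
  have ha₂b₂ : a₂ ≠ b₂ := by
    intro h
    have h' := hspan_inj q₂ (q₂ * p₁) hq₂n hq₂p₁dvd (congrArg Subtype.val h)
    have h'' : q₂ * 1 = q₂ * p₁ := by rw [mul_one]; exact h'
    have := Nat.eq_of_mul_eq_mul_left (by omega : 0 < q₂) h''
    omega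
  have hca₂ : c a₂ = 2 := (hc2 a₂).2 ((hle2 q₂).2 dvd_rfl)
  have hcb₂ : c b₂ = 2 := (hc2 b₂).2 ((hle2 (q₂ * p₁)).2 (dvd_mul_right q₂ p₁))
  rw [metricDim_three_classes (essentialIdealGraph (ZMod n)) c hadj ⟨v₀, hcv₀⟩
    ⟨a₁, b₁, ha₁b₁, hca₁, hcb₁⟩ ⟨a₂, b₂, ha₂b₂, hca₂, hcb₂⟩, hcard]
  have hexp : (m₁ + 1) * (m₂ + 1) = m₁ * m₂ + m₁ + m₂ + 1 := by ring
  omega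
end
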